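/- arXiv:1802.03507 — 7 statements merged into one kernel-verified Lean document; each statement's English description precedes it below -/
import Mathlib

section
/- Let q and n be coprime positive integers. Then the number of necklaces of length n with q colors equals the number of functions f : Z/nZ → {0,1,...,q−1} such that ∑_{z ∈ Z/nZ} z·f(z) ≡ 0 (mod n); that is, |N(n,q)| = |F(n,q)|. -/
open Finset

/-- The cyclic-rotation equivalence on strings `ZMod n → Fin q`:
two strings are equivalent iff one is a cyclic rotation of the other.
Necklaces of length `n` with `q` colors are the equivalence classes. -/
def rotateSetoid (n q : ℕ) : Setoid (ZMod n → Fin q) where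
  r w w' := ∃ k : ZMod n, ∀ z, w' z = w (z + k)
  iseqv := by
    constructor
    · intro w
      exact ⟨0, fun z => by rw [add_zero]⟩
    · rintro w w' ⟨k, hk⟩
      exact ⟨-k, fun z => by rw [hk (z + -k)]; congr 1; ring⟩
    · rintro w w' w'' ⟨k, hk⟩ ⟨k', hk'⟩
      exact ⟨k + k', fun z => by rw [hk' z, hk (z + k')]; congr 1; ring⟩


section Aux

variable (n q : ℕ) [NeZero n]

instance necklaceVAdd : VAdd (ZMod n) (ZMod n → Fin q) :=
  ⟨fun k f z => f (z + k)⟩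

lemma necklace_vadd_apply (k : ZMod n) (f : ZMod n → Fin q) (z : ZMod n) :
    (k +ᵥ f) z = f (z + k) := rfl

instance necklaceAddAction : AddAction (ZMod n) (ZMod n → Fin q) where
  zero_vadd f := by funext z; show f (z + 0) = f z; rw [add_zero]
  add_vadd a b f := by funext z; show f (z + (a + b)) = f (z + a + b); rw [add_assoc]

lemma rotateSetoid_iff (w w' : ZMod n → Fin q) :
    (rotateSetoid n q).r w w' ↔ (AddAction.orbitRel (ZMod n) (ZMod n → Fin q)).r w w' := by
  constructor
  · rintro ⟨k, hk⟩
    refine ⟨-k, funext fun z => ?_⟩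
    show w' (z + -k) = w z
    rw [hk]; congr 1; abel
  · rintro ⟨k, hk⟩
    refine ⟨-k, fun z => ?_⟩
    rw [← hk]
    show w' z = w' (z + -k + k)
    congr 1; abel

lemma fixedBy_shift {k : ZMod n} {f : ZMod n → Fin q}
    (hf : ∀ z, f (z + k) = f z) (j : ℤ) : ∀ z : ZMod n, f (z + j • k) = f z := by
  induction j using Int.induction_on with
  | zero => simp
  | succ i ih =>
      intro z
      have h1 : z + (i + 1 : ℤ) • k = (z + k) + (i : ℤ) • k := by
        rw [add_smul, one_smul]; abel
      rw [h1, ih, hf]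
  | pred i ih =>
      intro z
      have h1 : z + (-i - 1 : ℤ) • k = (z - k) + (-i : ℤ) • k := by
        rw [sub_smul, one_smul]; abel
      have h2 : f (z - k) = f z := by rw [← hf (z - k)]; congr 1; abel
      rw [h1, ih, h2]

noncomputable def fixedEquiv (k : ZMod n) :
    (AddAction.fixedBy (ZMod n → Fin q) k) ≃ ((ZMod n ⧸ AddSubgroup.zmultiples k) → Fin q) where
  toFun f := fun x => Quotient.liftOn' x f.1 (by
    intro a b hab
    rw [QuotientAddGroup.leftRel_apply, AddSubgroup.mem_zmultiples_iff] at hab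
    obtain ⟨j, hj⟩ := hab
    have hf : ∀ z, f.1 (z + k) = f.1 z := fun z => congrFun f.2 z
    have hb : b = a + j • k := by rw [hj]; abel
    rw [hb, fixedBy_shift n q hf j a])
  invFun g := ⟨g ∘ QuotientAddGroup.mk, by
    funext z
    show g (QuotientAddGroup.mk (z + k)) = g (QuotientAddGroup.mk z)
    congr 1
    rw [QuotientAddGroup.eq]
    have h1 : -(z + k) + z = -k := by abel
    rw [h1]
    exact neg_mem (AddSubgroup.mem_zmultiples k)⟩
  left_inv f := Subtype.ext (funext fun z => rfl)
  right_inv g := funext fun x => Quotient.inductionOn' x fun z => rfl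

lemma card_annihilator (k : ZMod n) :
    Nat.card (ZMod n ⧸ AddSubgroup.zmultiples k) = Nat.card {z : ZMod n // k * z = 0} := by
  classical
  set ψ : ZMod n →+ ZMod n := AddMonoidHom.mulLeft k with hψ
  have hrange : ψ.range = AddSubgroup.zmultiples k := by
    ext x
    simp only [AddMonoidHom.mem_range, AddSubgroup.mem_zmultiples_iff]
    constructor
    · rintro ⟨z, rfl⟩
      refine ⟨(z.val : ℤ), ?_⟩
      rw [natCast_zsmul, nsmul_eq_mul, ZMod.natCast_val, ZMod.cast_id, mul_comm]
      rfl
    · rintro ⟨j, rfl⟩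
      exact ⟨(j : ZMod n), by rw [zsmul_eq_mul, mul_comm]; rfl⟩
  have hker : Nat.card ψ.ker = Nat.card {z : ZMod n // k * z = 0} :=
    Nat.card_congr (Equiv.subtypeEquivRight fun z => by
      simp [AddMonoidHom.mem_ker, hψ, AddMonoidHom.mulLeft])
  have h1 := AddSubgroup.card_eq_card_quotient_mul_card_addSubgroup (AddSubgroup.zmultiples k)
  have h2 := AddSubgroup.card_eq_card_quotient_mul_card_addSubgroup ψ.ker
  have h3 : Nat.card (ZMod n ⧸ ψ.ker) = Nat.card (AddSubgroup.zmultiples k) := by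
    rw [← hrange]
    exact Nat.card_congr (QuotientAddGroup.quotientKerEquivRange ψ).toEquiv
  have hpos : 0 < Nat.card (AddSubgroup.zmultiples k) := Nat.card_pos
  rw [h1, h3] at h2
  exact Nat.eq_of_mul_eq_mul_right hpos (by rw [h2, mul_comm, hker])

lemma card_fixedBy (k : ZMod n) :
    Nat.card (AddAction.fixedBy (ZMod n → Fin q) k) =
      q ^ Nat.card {z : ZMod n // k * z = 0} := by
  rw [Nat.card_congr (fixedEquiv n q k), Nat.card_fun, card_annihilator]
  simp

lemma orbit_side :
    Nat.card (Quotient (rotateSetoid n q)) * n =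
      ∑ k : ZMod n, q ^ Nat.card {z : ZMod n // k * z = 0} := by
  classical
  letI : ∀ a : ZMod n, Fintype (AddAction.fixedBy (ZMod n → Fin q) a) :=
    fun a => Fintype.ofFinite _
  letI : Fintype (AddAction.orbitRel.Quotient (ZMod n) (ZMod n → Fin q)) := Fintype.ofFinite _
  have hb := AddAction.sum_card_fixedBy_eq_card_orbits_mul_card_addGroup (ZMod n) (ZMod n → Fin q)
  have hquot : Nat.card (Quotient (rotateSetoid n q)) =
      Fintype.card (AddAction.orbitRel.Quotient (ZMod n) (ZMod n → Fin q)) := by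
    rw [← Nat.card_eq_fintype_card]
    exact Nat.card_congr (Quotient.congrRight (rotateSetoid_iff n q))
  rw [ZMod.card] at hb
  rw [hquot, ← hb]
  refine Finset.sum_congr rfl fun k _ => ?_
  rw [← Nat.card_eq_fintype_card, card_fixedBy n q k]

lemma prod_geomsum (hq : 0 < q) (hqn : Nat.Coprime q n) {ζ : ℂ} (hone : ζ ^ n = 1)
    (hprim : (AddChar.zmodChar n hone).IsPrimitive) (t : ZMod n) :
    ∏ z : ZMod n, (∑ c : Fin q, AddChar.zmodChar n hone (t * z) ^ (c : ℕ)) =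
      (q : ℂ) ^ Nat.card {z : ZMod n // t * z = 0} := by
  classical
  set χ := AddChar.zmodChar n hone with hχ
  have hchar_ne : ∀ m : ZMod n, m ≠ 0 → χ m ≠ 1 := fun m hm h =>
    hm ((AddChar.IsPrimitive.zmod_char_eq_one_iff n hprim m).mp h)
  rw [← Finset.prod_filter_mul_prod_filter_not Finset.univ (fun z => t * z = 0)]
  have h0 : ∀ z ∈ Finset.univ.filter (fun z : ZMod n => t * z = 0),
      (∑ c : Fin q, χ (t * z) ^ (c : ℕ)) = (q : ℂ) := by
    intro z hz
    rw [Finset.mem_filter] at hz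
    simp [hz.2, AddChar.map_zero_eq_one]
  rw [Finset.prod_congr rfl h0, Finset.prod_const]
  have hcard : (Finset.univ.filter (fun z : ZMod n => t * z = 0)).card =
      Nat.card {z : ZMod n // t * z = 0} := by
    rw [Nat.card_eq_fintype_card, Fintype.card_subtype]
  rw [hcard]
  -- remaining: the product over nonzero part is 1
  set B := Finset.univ.filter (fun z : ZMod n => ¬ t * z = 0) with hB
  have hBzero : ∀ z ∈ B, t * z ≠ 0 := fun z hz => (Finset.mem_filter.mp hz).2
  set D := ∏ z ∈ B, (χ (t * z) - 1) with hD
  have hDne : D ≠ 0 := by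
    rw [hD]
    refine Finset.prod_ne_zero_iff.mpr fun z hz => sub_ne_zero.mpr ?_
    exact hchar_ne _ (hBzero z hz)
  have hgeom : (∏ z ∈ B, (∑ c : Fin q, χ (t * z) ^ (c : ℕ))) * D =
      ∏ z ∈ B, (χ (t * z) ^ q - 1) := by
    rw [hD, ← Finset.prod_mul_distrib]
    refine Finset.prod_congr rfl fun z hz => ?_
    rw [Fin.sum_univ_eq_sum_range (fun i => χ (t * z) ^ i) q, geom_sum_mul]
  set u : (ZMod n)ˣ := ZMod.unitOfCoprime q hqn with hu
  have hucoe : (u : ZMod n) = (q : ZMod n) := ZMod.coe_unitOfCoprime q hqn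
  have hpow : ∀ z : ZMod n, χ (t * z) ^ q = χ (t * ((u : ZMod n) * z)) := by
    intro z
    rw [← AddChar.map_nsmul_eq_pow, nsmul_eq_mul, hucoe]
    congr 1; ring
  have hreindex : ∏ z ∈ B, (χ (t * z) ^ q - 1) = D := by
    rw [hD]
    have hmemB : ∀ x : ZMod n, x ∈ B ↔ ¬ t * x = 0 := fun x => by simp [hB]
    refine Finset.prod_bij' (fun z _ => (u : ZMod n) * z)
      (fun z _ => ((u⁻¹ : (ZMod n)ˣ) : ZMod n) * z) ?_ ?_ ?_ ?_ ?_
    · intro a ha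
      refine (hmemB _).mpr fun h => (hmemB a).mp ha ?_
      have h2 : t * ((u : ZMod n) * a) = (t * a) * (u : ZMod n) := by ring
      rw [h2, Units.mul_left_eq_zero] at h
      exact h
    · intro a ha
      refine (hmemB _).mpr fun h => (hmemB a).mp ha ?_
      have h2 : t * (((u⁻¹ : (ZMod n)ˣ) : ZMod n) * a) = (t * a) * ((u⁻¹ : (ZMod n)ˣ) : ZMod n) := by
        ring
      rw [h2, Units.mul_left_eq_zero] at h
      exact h
    · intro a _
      show ((u⁻¹ : (ZMod n)ˣ) : ZMod n) * ((u : ZMod n) * a) = a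
      rw [← mul_assoc, ← Units.val_mul, inv_mul_cancel, Units.val_one, one_mul]
    · intro a _
      show (u : ZMod n) * (((u⁻¹ : (ZMod n)ˣ) : ZMod n) * a) = a
      rw [← mul_assoc, ← Units.val_mul, mul_inv_cancel, Units.val_one, one_mul]
    · intro a _
      show χ (t * a) ^ q - 1 = χ (t * ((u : ZMod n) * a)) - 1
      rw [hpow]
  have hone' : (∏ z ∈ B, (∑ c : Fin q, χ (t * z) ^ (c : ℕ))) = 1 := by
    have := hgeom.trans hreindex
    calc (∏ z ∈ B, (∑ c : Fin q, χ (t * z) ^ (c : ℕ)))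
        = (∏ z ∈ B, (∑ c : Fin q, χ (t * z) ^ (c : ℕ))) * D * D⁻¹ := by
          field_simp
      _ = D * D⁻¹ := by rw [this]
      _ = 1 := mul_inv_cancel₀ hDne
  rw [hone', mul_one]

lemma addchar_map_finsetSum {M : Type*} [CommMonoid M] (ψ : AddChar (ZMod n) M)
    {ι : Type*} (s : Finset ι) (g : ι → ZMod n) :
    ψ (∑ i ∈ s, g i) = ∏ i ∈ s, ψ (g i) := by
  classical
  induction s using Finset.induction_on with
  | empty => simp
  | insert _ _ hi ih =>
      rw [Finset.sum_insert hi, Finset.prod_insert hi, AddChar.map_add_eq_mul, ih]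

lemma subset_side (hq : 0 < q) (hqn : Nat.Coprime q n) :
    Nat.card {f : ZMod n → Fin q // ∑ z : ZMod n, z * ((f z : ℕ) : ZMod n) = 0} * n =
      ∑ t : ZMod n, q ^ Nat.card {z : ZMod n // t * z = 0} := by
  classical
  have hζ : IsPrimitiveRoot (Complex.exp (2 * Real.pi * Complex.I / n)) n :=
    Complex.isPrimitiveRoot_exp n (NeZero.ne n)
  have hone : Complex.exp (2 * Real.pi * Complex.I / n) ^ n = 1 :=
    ((IsPrimitiveRoot.iff_def _ n).mp hζ).left
  set χ := AddChar.zmodChar n hone with hχ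
  have hprim : χ.IsPrimitive := AddChar.zmodChar_primitive_of_primitive_root n hζ
  set s : (ZMod n → Fin q) → ZMod n := fun f => ∑ z : ZMod n, z * ((f z : ℕ) : ZMod n)
    with hs
  have key : ∀ f : ZMod n → Fin q,
      (∑ t : ZMod n, χ (t * s f)) = if s f = 0 then (n : ℂ) else 0 := by
    intro f
    rw [AddChar.sum_mulShift _ hprim, ZMod.card]
    split_ifs <;> simp
  have lhs : ((Nat.card {f : ZMod n → Fin q // s f = 0} * n : ℕ) : ℂ) =
      ∑ f : ZMod n → Fin q, if s f = 0 then (n : ℂ) else 0 := by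
    rw [Finset.sum_ite, Finset.sum_const, Finset.sum_const_zero, add_zero, nsmul_eq_mul,
      Nat.card_eq_fintype_card, Fintype.card_subtype]
    push_cast
    ring
  have swap : (∑ f : ZMod n → Fin q, if s f = 0 then (n : ℂ) else 0) =
      ∑ t : ZMod n, ∑ f : ZMod n → Fin q, χ (t * s f) := by
    rw [← Finset.sum_comm]
    exact Finset.sum_congr rfl fun f _ => (key f).symm
  have hfactor : ∀ (t z : ZMod n) (c : Fin q),
      χ (t * (z * ((c : ℕ) : ZMod n))) = χ (t * z) ^ (c : ℕ) := by
    intro t z c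
    rw [← AddChar.map_nsmul_eq_pow, nsmul_eq_mul]
    congr 1; ring
  have inner : ∀ t : ZMod n, (∑ f : ZMod n → Fin q, χ (t * s f)) =
      ∏ z : ZMod n, (∑ c : Fin q, χ (t * z) ^ (c : ℕ)) := by
    intro t
    have h1 : ∀ f : ZMod n → Fin q, χ (t * s f) = ∏ z : ZMod n, χ (t * z) ^ ((f z : ℕ)) := by
      intro f
      rw [hs]
      simp only
      rw [Finset.mul_sum, addchar_map_finsetSum]
      exact Finset.prod_congr rfl fun z _ => hfactor t z (f z)
    rw [Finset.prod_univ_sum]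
    rw [Fintype.piFinset_univ]
    exact Finset.sum_congr rfl fun f _ => h1 f
  have final : ((Nat.card {f : ZMod n → Fin q // s f = 0} * n : ℕ) : ℂ) =
      ((∑ t : ZMod n, q ^ Nat.card {z : ZMod n // t * z = 0} : ℕ) : ℂ) := by
    rw [lhs, swap]
    push_cast
    exact Finset.sum_congr rfl fun t _ => (inner t).trans (prod_geomsum n q hq hqn hone hprim t)
  exact_mod_cast final

end Aux

/-- The number of necklaces of length `n` with `q` colors equals the number of
functions `f : ZMod n → {0,…,q-1}` with `∑ z, z·f(z) ≡ 0 (mod n)`,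
when `q` and `n` are coprime positive integers. -/
theorem necklace_card_eq_subsetSum_card
    (q n : ℕ) (hq : 0 < q) (hn : 0 < n) [NeZero n] (hqn : Nat.Coprime q n) :
    Nat.card (Quotient (rotateSetoid n q)) =
      Nat.card {f : ZMod n → Fin q // ∑ z : ZMod n, z * ((f z : ℕ) : ZMod n) = 0} := by
  have h1 := orbit_side n q
  have h2 := subset_side n q hq hqn
  exact Nat.eq_of_mul_eq_mul_right hn (h1.trans h2.symm)
end

section
/- Let q and n be coprime positive integers. Then |F(n,q)| = ∑_{I ⊆ {1,...,m}} (gcd(n, gcd(s_i : i ∈ I))/n) · ∏_{i ∈ I} (q^{ℓ_i} − 1), where for I = ∅ the inner gcd is 0 (so the term is 1) and the empty product is 1. -/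
open Finset

lemma kerIff (n a : ℕ) [NeZero n] (t : ZMod n) :
    t * (a : ZMod n) = 0 ↔ (n / Nat.gcd n a) ∣ t.val := by
  have hn : n ≠ 0 := NeZero.ne n
  set g := Nat.gcd n a with hg
  have hg0 : 0 < g := Nat.gcd_pos_of_pos_left a (Nat.pos_of_ne_zero hn)
  set d := n / g with hd
  have hga : g ∣ a := Nat.gcd_dvd_right n a
  have hgn : g ∣ n := Nat.gcd_dvd_left n a
  have hn' : n = g * d := (Nat.mul_div_cancel' hgn).symm
  have hda : d * a = n * (a / g) := by
    obtain ⟨a', ha'⟩ := hga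
    have ha'' : a / g = a' := by rw [ha']; exact Nat.mul_div_cancel_left _ hg0
    rw [ha'', ha', hn']; ring
  constructor
  · intro h
    have h1 : ((t.val * a : ℕ) : ZMod n) = 0 := by
      push_cast
      rw [ZMod.natCast_val, ZMod.cast_id]
      exact h
    rw [ZMod.natCast_eq_zero_iff] at h1
    obtain ⟨a', ha'⟩ := hga
    have hco : Nat.Coprime d a' := by
      have := Nat.coprime_div_gcd_div_gcd (m := n) (n := a) hg0
      have ha'' : a / g = a' := by rw [ha']; exact Nat.mul_div_cancel_left _ hg0
      rwa [← hg, ← hd, ha''] at this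
    have h2 : g * d ∣ g * (t.val * a') := by
      rw [show g * (t.val * a') = t.val * (g * a') by ring, ← ha', ← hn']
      exact h1
    exact hco.dvd_of_dvd_mul_right ((Nat.mul_dvd_mul_iff_left hg0).mp h2)
  · intro ⟨k, hk⟩
    have ht : t = ((d * k : ℕ) : ZMod n) := by
      rw [← hk, ZMod.natCast_val, ZMod.cast_id]
    rw [ht, ← Nat.cast_mul, ZMod.natCast_eq_zero_iff]
    exact ⟨(a / g) * k, by rw [show d * k * a = (d * a) * k by ring, hda]; ring⟩

lemma multCard (n d : ℕ) [NeZero n] (hd0 : 0 < d) (hdn : d ∣ n) :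
    (Finset.univ.filter fun t : ZMod n => d ∣ t.val).card = n / d := by
  classical
  have hn : n ≠ 0 := NeZero.ne n
  obtain ⟨e, he⟩ := hdn
  have he' : n / d = e := by rw [he]; exact Nat.mul_div_cancel_left _ hd0
  rw [he', ← Finset.card_range e]
  apply Finset.card_bij' (fun t _ => t.val / d) (fun k _ => ((k * d : ℕ) : ZMod n))
  · intro t ht
    rw [Finset.mem_filter] at ht
    rw [Finset.mem_range]
    obtain ⟨k, hk⟩ := ht.2
    have hlt : t.val < n := ZMod.val_lt t
    rw [hk, Nat.mul_div_cancel_left _ hd0]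
    rw [hk, he] at hlt
    by_contra hc
    push_neg at hc
    have h3 : d * e ≤ d * k := Nat.mul_le_mul_left d hc
    omega
  · intro k hk
    rw [Finset.mem_range] at hk
    have hlt : k * d < n := by
      rw [he, mul_comm d e]; exact Nat.mul_lt_mul_of_pos_right hk hd0
    rw [Finset.mem_filter]
    refine ⟨Finset.mem_univ _, ?_⟩
    rw [ZMod.val_natCast_of_lt hlt]
    exact ⟨k, mul_comm _ _⟩
  · intro t ht
    rw [Finset.mem_filter] at ht
    rw [Nat.div_mul_cancel ht.2, ZMod.natCast_val, ZMod.cast_id]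
  · intro k hk
    rw [Finset.mem_range] at hk
    have hlt : k * d < n := by
      rw [he, mul_comm d e]; exact Nat.mul_lt_mul_of_pos_right hk hd0
    rw [ZMod.val_natCast_of_lt hlt, Nat.mul_div_cancel _ hd0]

lemma kerCard (n a : ℕ) [NeZero n] :
    (Finset.univ.filter fun t : ZMod n => t * (a : ZMod n) = 0).card = Nat.gcd n a := by
  classical
  have hn : n ≠ 0 := NeZero.ne n
  have hg0 : 0 < Nat.gcd n a := Nat.gcd_pos_of_pos_left a (Nat.pos_of_ne_zero hn)
  have hgn : Nat.gcd n a ∣ n := Nat.gcd_dvd_left n a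
  have hd0 : 0 < n / Nat.gcd n a := Nat.div_pos (Nat.le_of_dvd (Nat.pos_of_ne_zero hn) hgn) hg0
  rw [Finset.filter_congr (fun t _ => kerIff n a t),
    multCard n (n / Nat.gcd n a) hd0 (Nat.div_dvd_of_dvd hgn),
    Nat.div_div_self hgn hn]
set_option linter.unusedSectionVars false

open Finset

section Char
variable (n : ℕ) [NeZero n]

noncomputable def zet : ℂ := Complex.exp (2 * Real.pi * Complex.I / n)

lemma zet_prim : IsPrimitiveRoot (zet n) n := Complex.isPrimitiveRoot_exp n (NeZero.ne n)

noncomputable def psi (x : ZMod n) : ℂ := (zet n) ^ x.val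

lemma zet_pow_mod (k : ℕ) : (zet n) ^ (k % n) = (zet n) ^ k := by
  conv_rhs => rw [← Nat.div_add_mod k n]
  rw [pow_add, pow_mul, (zet_prim n).pow_eq_one, one_pow, one_mul]

lemma psi_nat (k : ℕ) : psi n (k : ZMod n) = (zet n) ^ k := by
  rw [psi, ZMod.val_natCast, zet_pow_mod]

lemma psi_zero : psi n 0 = 1 := by simp [psi]

lemma psi_add (x y : ZMod n) : psi n (x + y) = psi n x * psi n y := by
  have hx : x = ((x.val : ℕ) : ZMod n) := by rw [ZMod.natCast_val, ZMod.cast_id]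
  have hy : y = ((y.val : ℕ) : ZMod n) := by rw [ZMod.natCast_val, ZMod.cast_id]
  rw [hx, hy, ← Nat.cast_add, psi_nat, psi_nat, psi_nat, pow_add]

lemma psi_pow (x : ZMod n) (k : ℕ) : psi n x ^ k = psi n ((k : ZMod n) * x) := by
  induction k with
  | zero => simp [psi_zero]
  | succ k ih =>
      rw [pow_succ, ih, ← psi_add]
      push_cast
      ring_nf

lemma psi_eq_one_iff (x : ZMod n) : psi n x = 1 ↔ x = 0 := by
  rw [psi]
  constructor
  · intro h
    have hdvd := ((zet_prim n).pow_eq_one_iff_dvd x.val).mp h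
    have hlt : x.val < n := ZMod.val_lt x
    have hv : x.val = 0 := Nat.eq_zero_of_dvd_of_lt hdvd hlt
    exact (ZMod.val_eq_zero x).mp hv
  · intro h; simp [h, ZMod.val_zero]

lemma psi_sum {α : Type*} (s : Finset α) (g : α → ZMod n) :
    psi n (∑ i ∈ s, g i) = ∏ i ∈ s, psi n (g i) := by
  classical
  induction s using Finset.cons_induction with
  | empty => simp [psi_zero]
  | cons a s ha ih => rw [Finset.sum_cons, Finset.prod_cons, psi_add, ih]

lemma psi_orth (x : ZMod n) :
    ∑ t : ZMod n, psi n (t * x) = if x = 0 then (n : ℂ) else 0 := by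
  by_cases hx : x = 0
  · simp [hx, psi_zero, Finset.card_univ]
  · rw [if_neg hx]
    have key : psi n x * (∑ t : ZMod n, psi n (t * x)) = ∑ t : ZMod n, psi n (t * x) := by
      rw [Finset.mul_sum]
      have : ∀ t : ZMod n, psi n x * psi n (t * x) = psi n ((t + 1) * x) := by
        intro t; rw [← psi_add]; ring_nf
      simp_rw [this]
      exact Fintype.sum_equiv (Equiv.addRight 1) _ _ (fun t => rfl)
    have hne : psi n x - 1 ≠ 0 := fun h => hx ((psi_eq_one_iff n x).mp (by linear_combination h))
    have h2 : (psi n x - 1) * (∑ t : ZMod n, psi n (t * x)) = 0 := by linear_combination key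
    rcases mul_eq_zero.mp h2 with h | h
    · exact absurd h hne
    · exact h

end Char

lemma key_prod (q n : ℕ) (hq : 0 < q) [NeZero n] (hqn : Nat.Coprime q n) (t : ZMod n) :
    ∏ z : ZMod n, (∑ a : Fin q, psi n (t * z) ^ (a : ℕ)) =
      (q : ℂ) ^ (Finset.univ.filter fun z : ZMod n => t * z = 0).card := by
  classical
  rw [← Finset.prod_filter_mul_prod_filter_not Finset.univ (fun z => t * z = 0)]
  have h1 : ∏ z ∈ Finset.univ.filter (fun z : ZMod n => t * z = 0),
      (∑ a : Fin q, psi n (t * z) ^ (a : ℕ)) =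
      (q : ℂ) ^ (Finset.univ.filter fun z : ZMod n => t * z = 0).card := by
    rw [Finset.prod_congr rfl (fun z hz => ?_), Finset.prod_const]
    rw [(Finset.mem_filter.mp hz).2, psi_zero]
    simp
  rw [h1]
  have h2 : ∏ z ∈ Finset.univ.filter (fun z : ZMod n => ¬ t * z = 0),
      (∑ a : Fin q, psi n (t * z) ^ (a : ℕ)) = 1 := by
    set B := Finset.univ.filter (fun z : ZMod n => ¬ t * z = 0) with hB
    have hne1 : ∀ z ∈ B, psi n (t * z) ≠ 1 := by
      intro z hz h
      exact (Finset.mem_filter.mp hz).2 ((psi_eq_one_iff n _).mp h)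
    have hgeom : ∀ z ∈ B, (∑ a : Fin q, psi n (t * z) ^ (a : ℕ)) =
        (psi n (t * ((q : ZMod n) * z)) - 1) / (psi n (t * z) - 1) := by
      intro z hz
      rw [Fin.sum_univ_eq_sum_range (fun k => psi n (t * z) ^ k) q,
        geom_sum_eq (hne1 z hz) q, psi_pow]
      ring_nf
    rw [Finset.prod_congr rfl hgeom, Finset.prod_div_distrib]
    set u : (ZMod n)ˣ := ZMod.unitOfCoprime q hqn with hu'
    have hu : (u : ZMod n) = (q : ZMod n) := ZMod.coe_unitOfCoprime q hqn
    have hbij : ∏ z ∈ B, (psi n (t * ((q : ZMod n) * z)) - 1) = ∏ z ∈ B, (psi n (t * z) - 1) := by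
      apply Finset.prod_nbij' (fun z => (q : ZMod n) * z)
        (fun w => ((u⁻¹ : (ZMod n)ˣ) : ZMod n) * w)
      · intro z hz
        rw [hB, Finset.mem_filter] at hz ⊢
        refine ⟨Finset.mem_univ _, fun h => hz.2 ?_⟩
        rw [show t * ((q : ZMod n) * z) = (u : ZMod n) * (t * z) by rw [hu]; ring] at h
        exact (Units.mul_right_eq_zero u).mp h
      · intro w hw
        rw [hB, Finset.mem_filter] at hw ⊢
        refine ⟨Finset.mem_univ _, fun h => hw.2 ?_⟩
        rw [show t * (((u⁻¹ : (ZMod n)ˣ) : ZMod n) * w) = ((u⁻¹ : (ZMod n)ˣ) : ZMod n) * (t * w)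
          by ring] at h
        exact (Units.mul_right_eq_zero u⁻¹).mp h
      · intro z _
        rw [← hu, Units.inv_mul_cancel_left]
      · intro w _
        rw [← hu, Units.mul_inv_cancel_left]
      · intro z _
        rfl
    rw [hbij, div_self]
    rw [Ne, Finset.prod_eq_zero_iff]
    rintro ⟨z, hz, h⟩
    exact hne1 z hz (by linear_combination h)
  rw [h2, mul_one]

lemma countChar (q n : ℕ) (hq : 0 < q) [NeZero n] (hqn : Nat.Coprime q n) :
    (n * (Finset.univ.filter fun f : ZMod n → Fin q =>
        ∑ z : ZMod n, z * ((f z : ℕ) : ZMod n) = 0).card : ℕ)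
    = ∑ t : ZMod n, q ^ (Finset.univ.filter fun z : ZMod n => t * z = 0).card := by
  classical
  have main : (↑(n * (Finset.univ.filter fun f : ZMod n → Fin q =>
        ∑ z : ZMod n, z * ((f z : ℕ) : ZMod n) = 0).card) : ℂ)
      = (↑(∑ t : ZMod n, q ^ (Finset.univ.filter fun z : ZMod n => t * z = 0).card) : ℂ) := by
    push_cast
    rw [show (∑ t : ZMod n, (q:ℂ) ^ (Finset.univ.filter fun z : ZMod n => t * z = 0).card)
        = ∑ t : ZMod n, ∏ z : ZMod n, ∑ a : Fin q, psi n (t * z) ^ (a : ℕ) from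
      Finset.sum_congr rfl fun t _ => (key_prod q n hq hqn t).symm]
    have step1 : ∀ t : ZMod n, (∏ z : ZMod n, ∑ a : Fin q, psi n (t * z) ^ (a : ℕ))
        = ∑ f : ZMod n → Fin q, psi n (t * ∑ z : ZMod n, z * ((f z : ℕ) : ZMod n)) := by
      intro t
      rw [Fintype.prod_sum (fun z (a : Fin q) => psi n (t * z) ^ (a : ℕ))]
      refine Finset.sum_congr rfl fun f _ => ?_
      have : ∀ z : ZMod n, psi n (t * z) ^ ((f z : ℕ)) = psi n (((f z : ℕ) : ZMod n) * (t * z)) :=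
        fun z => psi_pow n _ _
      simp_rw [this]
      rw [← psi_sum]
      congr 1
      rw [Finset.mul_sum]
      exact Finset.sum_congr rfl fun z _ => by ring
    simp_rw [step1]
    rw [Finset.sum_comm]
    have step2 : ∀ f : ZMod n → Fin q,
        (∑ t : ZMod n, psi n (t * ∑ z : ZMod n, z * ((f z : ℕ) : ZMod n)))
        = if (∑ z : ZMod n, z * ((f z : ℕ) : ZMod n)) = 0 then (n : ℂ) else 0 :=
      fun f => psi_orth n _
    simp_rw [step2]
    rw [← Finset.sum_filter, Finset.sum_const, nsmul_eq_mul]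
    ring
  exact_mod_cast main
set_option linter.unusedVariables false

open Finset

lemma orbitCount (q n : ℕ) [NeZero n] (hqn : Nat.Coprime q n) (m : ℕ) (s : Fin m → ℕ)
    (ℓ : Fin m → ℕ)
    (hS : ∀ z : ZMod n, ∃! i : Fin m, ∃ j : ℕ, z = (q : ZMod n) ^ j * (s i : ZMod n))
    (hl : ∀ i, IsLeast {l : ℕ | 0 < l ∧ (q : ZMod n) ^ l * (s i : ZMod n) = (s i : ZMod n)} (ℓ i))
    (t : ZMod n) :
    (Finset.univ.filter fun z : ZMod n => t * z = 0).card
      = ∑ i ∈ Finset.univ.filter (fun i : Fin m => t * (s i : ZMod n) = 0), ℓ i := by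
  classical
  have hqu : IsUnit ((q : ZMod n)) := by
    rw [← ZMod.coe_unitOfCoprime q hqn]; exact (ZMod.unitOfCoprime q hqn).isUnit
  have hqup : ∀ j : ℕ, IsUnit ((q : ZMod n) ^ j) := fun j => hqu.pow j
  set O : Fin m → Finset (ZMod n) :=
    fun i => (Finset.range (ℓ i)).image (fun j => (q : ZMod n) ^ j * (s i : ZMod n)) with hO
  -- periodicity
  have hper : ∀ i (k : ℕ), (q : ZMod n) ^ (ℓ i * k) * (s i : ZMod n) = (s i : ZMod n) := by
    intro i k
    induction k with
    | zero => simp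
    | succ k ih =>
        rw [Nat.mul_succ, pow_add, mul_assoc, (hl i).1.2, ih]
  -- membership of all powers
  have hmem : ∀ i (j : ℕ), (q : ZMod n) ^ j * (s i : ZMod n) ∈ O i := by
    intro i j
    have hl0 : 0 < ℓ i := (hl i).1.1
    have : (q : ZMod n) ^ j * (s i : ZMod n)
        = (q : ZMod n) ^ (j % ℓ i) * (s i : ZMod n) := by
      conv_lhs => rw [← Nat.mod_add_div j (ℓ i), pow_add, mul_assoc, hper]
    rw [this, hO]
    exact Finset.mem_image.mpr ⟨j % ℓ i, Finset.mem_range.mpr (Nat.mod_lt _ hl0), rfl⟩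
  -- injectivity, card
  have hcard : ∀ i, (O i).card = ℓ i := by
    intro i
    rw [hO, Finset.card_image_of_injOn, Finset.card_range]
    intro j1 h1 j2 h2 heq
    rw [Finset.coe_range, Set.mem_Iio] at h1 h2
    -- wlog j1 ≤ j2
    rcases le_total j1 j2 with hle | hle
    · by_contra hne
      have hlt : 0 < j2 - j1 := by omega
      have : (q : ZMod n) ^ j1 * ((q : ZMod n) ^ (j2 - j1) * (s i : ZMod n))
          = (q : ZMod n) ^ j1 * (s i : ZMod n) := by
        rw [← mul_assoc, ← pow_add]
        rw [show j1 + (j2 - j1) = j2 by omega]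
        exact heq.symm
      have heq2 : (q : ZMod n) ^ (j2 - j1) * (s i : ZMod n) = (s i : ZMod n) :=
        (hqup j1).mul_left_cancel this
      have := (hl i).2 ⟨hlt, heq2⟩
      omega
    · by_contra hne
      have hlt : 0 < j1 - j2 := by omega
      have : (q : ZMod n) ^ j2 * ((q : ZMod n) ^ (j1 - j2) * (s i : ZMod n))
          = (q : ZMod n) ^ j2 * (s i : ZMod n) := by
        rw [← mul_assoc, ← pow_add]
        rw [show j2 + (j1 - j2) = j1 by omega]
        exact heq
      have heq2 : (q : ZMod n) ^ (j1 - j2) * (s i : ZMod n) = (s i : ZMod n) :=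
        (hqup j2).mul_left_cancel this
      have := (hl i).2 ⟨hlt, heq2⟩
      omega
  -- the filter is the disjoint union
  have hunion : (Finset.univ.filter fun z : ZMod n => t * z = 0)
      = (Finset.univ.filter (fun i : Fin m => t * (s i : ZMod n) = 0)).biUnion O := by
    ext z
    simp only [Finset.mem_filter, Finset.mem_biUnion, Finset.mem_univ, true_and]
    constructor
    · intro hz
      obtain ⟨i, ⟨j, hj⟩, _⟩ := hS z
      refine ⟨i, ?_, hj ▸ hmem i j⟩
      have h0 : (q : ZMod n) ^ j * (t * (s i : ZMod n)) = 0 := by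
        rw [show (q : ZMod n) ^ j * (t * (s i : ZMod n)) = t * ((q : ZMod n) ^ j * (s i : ZMod n))
          by ring, ← hj, hz]
      exact ((hqup j).mul_right_eq_zero).mp h0
    · rintro ⟨i, hi, hzi⟩
      rw [hO] at hzi
      obtain ⟨j, _, hj⟩ := Finset.mem_image.mp hzi
      rw [← hj, show t * ((q : ZMod n) ^ j * (s i : ZMod n))
        = (q : ZMod n) ^ j * (t * (s i : ZMod n)) by ring, hi, mul_zero]
  rw [hunion, Finset.card_biUnion, Finset.sum_congr rfl (fun i _ => hcard i)]
  -- disjointness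
  intro i hi i' hi' hne
  rw [Function.onFun, Finset.disjoint_left]
  intro z hz hz'
  rw [hO] at hz hz'
  obtain ⟨j, _, hj⟩ := Finset.mem_image.mp hz
  obtain ⟨j', _, hj'⟩ := Finset.mem_image.mp hz'
  obtain ⟨w, hw, huniq⟩ := hS z
  exact hne ((huniq i ⟨j, hj.symm⟩).trans (huniq i' ⟨j', hj'.symm⟩).symm)

/-- Cardinality formula for the set `F(n,q)` of functions `f : ZMod n → {0,…,q-1}`
with `∑ z, z·f(z) ≡ 0 (mod n)`, in terms of the cyclotomic cosets of `ZMod n`: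
`S_i = {q^j·s_i : j ∈ ℕ}` (orbits of `z ↦ q·z`), with representatives `s i` and
`ℓ i` the least positive integer with `q^(ℓ i)·s_i ≡ s_i (mod n)`. -/
theorem F_card_formula
    (q n : ℕ) (hq : 0 < q) (hn : 0 < n) [NeZero n] (hqn : Nat.Coprime q n)
    (m : ℕ) (s : Fin m → ℕ) (ℓ : Fin m → ℕ)
    -- the orbits of `z ↦ q·z` on `ZMod n` are exactly the sets `{q^j·s_i}`, and they
    -- partition `ZMod n`: every `z` lies in exactly one of them
    (hS : ∀ z : ZMod n, ∃! i : Fin m, ∃ j : ℕ, z = (q : ZMod n) ^ j * (s i : ZMod n))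
    -- `ℓ i` is the least positive integer with `q^(ℓ i) · s i ≡ s i (mod n)`
    (hl : ∀ i, IsLeast {l : ℕ | 0 < l ∧ (q : ZMod n) ^ l * (s i : ZMod n) = (s i : ZMod n)} (ℓ i)) :
    (Nat.card {f : ZMod n → Fin q // ∑ z : ZMod n, z * ((f z : ℕ) : ZMod n) = 0} : ℚ) =
      ∑ I : Finset (Fin m),
        (Nat.gcd n (I.gcd s) : ℚ) / (n : ℚ) * ∏ i ∈ I, ((q : ℚ) ^ (ℓ i) - 1) := by
  classical
  have hnQ : (n : ℚ) ≠ 0 := Nat.cast_ne_zero.mpr (NeZero.ne n)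
  -- abbreviations
  have hLHS : Nat.card {f : ZMod n → Fin q // ∑ z : ZMod n, z * ((f z : ℕ) : ZMod n) = 0}
      = (Finset.univ.filter fun f : ZMod n → Fin q =>
          ∑ z : ZMod n, z * ((f z : ℕ) : ZMod n) = 0).card := by
    rw [Nat.card_eq_fintype_card, Fintype.card_subtype]
  -- kernel description
  have hker0 : ∀ (t : ZMod n) (a : ℕ), t * (a : ZMod n) = 0 ↔ n ∣ t.val * a := by
    intro t a
    rw [← ZMod.natCast_eq_zero_iff]
    constructor
    · intro h
      push_cast
      rw [ZMod.natCast_val, ZMod.cast_id]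
      exact h
    · intro h
      push_cast at h
      rwa [ZMod.natCast_val, ZMod.cast_id] at h
  -- gcd-card identification
  have hgcdcard : ∀ I : Finset (Fin m), Nat.gcd n (I.gcd s)
      = (Finset.univ.filter fun t : ZMod n => ∀ i ∈ I, t * ((s i : ℕ) : ZMod n) = 0).card := by
    intro I
    rw [← kerCard n (I.gcd s)]
    apply congrArg Finset.card
    apply Finset.filter_congr
    intro t _
    constructor
    · intro h i hi
      obtain ⟨k, hk⟩ := (Finset.gcd_dvd hi : I.gcd s ∣ s i)
      rw [hker0] at h ⊢
      obtain ⟨e, he⟩ := h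
      exact ⟨e * k, by rw [hk, ← mul_assoc, he]; ring⟩
    · intro h
      rw [hker0]
      have hdvd : ∀ i ∈ I, n ∣ t.val * s i := fun i hi => (hker0 t (s i)).mp (h i hi)
      have h1 : n ∣ I.gcd (fun i => t.val * s i) := Finset.dvd_gcd hdvd
      rwa [Finset.gcd_mul_left, normalize_eq] at h1
  -- per-subset rewrite
  have hR : ∀ I : Finset (Fin m),
      (Nat.gcd n (I.gcd s) : ℚ) / (n : ℚ) * ∏ i ∈ I, ((q : ℚ) ^ (ℓ i) - 1)
      = (1 / (n : ℚ)) * ∑ t : ZMod n,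
          (if ∀ i ∈ I, t * ((s i : ℕ) : ZMod n) = 0 then ∏ i ∈ I, ((q : ℚ) ^ (ℓ i) - 1) else 0) := by
    intro I
    rw [hgcdcard I, ← Finset.sum_filter, Finset.sum_const, nsmul_eq_mul]
    ring
  rw [hLHS, Finset.sum_congr rfl (fun I _ => hR I), ← Finset.mul_sum, Finset.sum_comm]
  -- inner sum over subsets for fixed t
  have hInner : ∀ t : ZMod n,
      (∑ I : Finset (Fin m),
        (if ∀ i ∈ I, t * ((s i : ℕ) : ZMod n) = 0 then ∏ i ∈ I, ((q : ℚ) ^ (ℓ i) - 1) else 0))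
      = (q : ℚ) ^ (Finset.univ.filter fun z : ZMod n => t * z = 0).card := by
    intro t
    set K : Finset (Fin m) := Finset.univ.filter (fun i : Fin m => t * ((s i : ℕ) : ZMod n) = 0)
      with hK
    have hfil : (Finset.univ.filter
        (fun I : Finset (Fin m) => ∀ i ∈ I, t * ((s i : ℕ) : ZMod n) = 0)) = K.powerset := by
      ext J
      simp only [Finset.mem_filter, Finset.mem_univ, true_and, Finset.mem_powerset, hK]
      constructor
      · intro h i hi
        exact Finset.mem_filter.mpr ⟨Finset.mem_univ _, h i hi⟩
      · intro h i hi
        exact (Finset.mem_filter.mp (h hi)).2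
    rw [← Finset.sum_filter, hfil]
    have hprodadd := Finset.prod_add (fun i : Fin m => (q : ℚ) ^ (ℓ i) - 1)
      (fun _ : Fin m => (1 : ℚ)) K
    simp only [Finset.prod_const_one, mul_one, sub_add_cancel] at hprodadd
    rw [← hprodadd, Finset.prod_pow_eq_pow_sum, ← orbitCount q n hqn m s ℓ hS hl t]
  rw [Finset.sum_congr rfl (fun t _ => hInner t)]
  -- conclude with the character count
  have hchar := countChar q n hq hqn
  have hcast : (∑ t : ZMod n, (q : ℚ) ^ (Finset.univ.filter fun z : ZMod n => t * z = 0).card)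
      = ((∑ t : ZMod n, q ^ (Finset.univ.filter fun z : ZMod n => t * z = 0).card : ℕ) : ℚ) := by
    push_cast
    rfl
  rw [hcast, ← hchar]
  push_cast
  field_simp
end

section
/- Let q and n be coprime positive integers. Then |N(n,q)| = ∑_{I ⊆ {1,...,m}} (gcd(n, gcd(s_i : i ∈ I))/n) · ∏_{i ∈ I} (q^{ℓ_i} − 1), where for I = ∅ the inner gcd is 0 (so the term is 1) and the empty product is 1. -/
/-- The number of `z : ZMod n` annihilated by multiplication by `d` is `gcd n d`. -/
lemma ann_card (n : ℕ) [NeZero n] (d : ℕ) :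
    (Finset.univ.filter fun z : ZMod n => (d : ZMod n) * z = 0).card = Nat.gcd n d := by
  have hn : 0 < n := Nat.pos_of_ne_zero (NeZero.ne n)
  set g := Nat.gcd n d with hgdef
  have hg : g ∣ n := Nat.gcd_dvd_left n d
  have hgd : g ∣ d := Nat.gcd_dvd_right n d
  have hgpos : 0 < g := Nat.gcd_pos_of_pos_left d hn
  have hngpos : 0 < n / g := Nat.div_pos (Nat.le_of_dvd hn hg) hgpos
  have hmul : n / g * g = n := Nat.div_mul_cancel hg
  have key : ∀ z : ZMod n, ((d : ZMod n) * z = 0) ↔ (n / g) ∣ z.val := by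
    intro z
    have hz : ((z.val : ℕ) : ZMod n) = z := ZMod.natCast_zmod_val z
    constructor
    · intro h
      rw [← hz, ← Nat.cast_mul, ZMod.natCast_eq_zero_iff] at h
      have h2 : n / g * g ∣ (d / g * g) * z.val := by
        rwa [hmul, Nat.div_mul_cancel hgd]
      have h3 : n / g ∣ (d / g) * z.val := by
        rcases h2 with ⟨c, hc⟩
        refine ⟨c, ?_⟩
        apply Nat.eq_of_mul_eq_mul_right hgpos
        calc d / g * z.val * g = d / g * g * z.val := by ring
          _ = n / g * g * c := hc
          _ = n / g * c * g := by ring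
      have hcop : (n / g).Coprime (d / g) := Nat.coprime_div_gcd_div_gcd hgpos
      exact hcop.dvd_of_dvd_mul_left h3
    · intro h
      rw [← hz, ← Nat.cast_mul, ZMod.natCast_eq_zero_iff]
      have : n / g * g ∣ z.val * g := mul_dvd_mul h dvd_rfl
      rw [hmul] at this
      calc n ∣ z.val * g := this
        _ ∣ z.val * d := mul_dvd_mul_left _ hgd
        _ = d * z.val := mul_comm _ _
  apply Finset.card_eq_of_bijective (fun i _ => ((i * (n / g) : ℕ) : ZMod n))
  · intro z hz
    rw [Finset.mem_filter] at hz
    obtain ⟨j, hj⟩ := (key z).mp hz.2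
    refine ⟨j, ?_, ?_⟩
    · by_contra hle
      push_neg at hle
      have : n ≤ z.val := by
        calc n = g * (n / g) := (Nat.mul_div_cancel' hg).symm
          _ ≤ j * (n / g) := Nat.mul_le_mul_right _ hle
          _ = z.val := by rw [hj, mul_comm]
      exact absurd (ZMod.val_lt z) (not_lt.mpr this)
    · rw [mul_comm, ← hj, ZMod.natCast_zmod_val]
  · intro i hi
    rw [Finset.mem_filter]
    refine ⟨Finset.mem_univ _, ?_⟩
    rw [key]
    have hlt : i * (n / g) < n := by
      calc i * (n / g) < g * (n / g) := (Nat.mul_lt_mul_right hngpos).mpr hi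
        _ = n := by rw [mul_comm]; exact hmul
    rw [ZMod.val_natCast_of_lt hlt]
    exact ⟨i, mul_comm _ _⟩
  · intro i j hi hj hij
    have hlt : ∀ a, a < g → a * (n / g) < n := fun a ha => by
      calc a * (n / g) < g * (n / g) := (Nat.mul_lt_mul_right hngpos).mpr ha
        _ = n := by rw [mul_comm]; exact hmul
    have : (i * (n / g)) = (j * (n / g)) := by
      have h1 := ZMod.val_natCast_of_lt (hlt i hi)
      have h2 := ZMod.val_natCast_of_lt (hlt j hj)
      rw [← h1, ← h2, hij]
    exact Nat.eq_of_mul_eq_mul_right hngpos this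

section CycCosets
variable (q n : ℕ) [NeZero n] (hqn : Nat.Coprime q n)
    (m : ℕ) (s : Fin m → ℕ) (ℓ : Fin m → ℕ)
    (hS : ∀ z : ZMod n, ∃! i : Fin m, ∃ j : ℕ, z = (q : ZMod n) ^ j * (s i : ZMod n))
    (hl : ∀ i, IsLeast {l : ℕ | 0 < l ∧ (q : ZMod n) ^ l * (s i : ZMod n) = (s i : ZMod n)} (ℓ i))

include hqn hS hl in
/-- `gcd n k.val` is the sum of the lengths of the cyclotomic cosets annihilating `k`. -/
lemma gcd_eq_sum_ell (k : ZMod n) :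
    Nat.gcd n k.val =
      ∑ i ∈ Finset.univ.filter (fun i : Fin m => (s i : ZMod n) * k = 0), ℓ i := by
  classical
  have hu : IsUnit (q : ZMod n) := (ZMod.isUnit_iff_coprime q n).mpr hqn
  have hlpos : ∀ i, 0 < ℓ i := fun i => (hl i).1.1
  have hper : ∀ i, (q : ZMod n) ^ (ℓ i) * (s i : ZMod n) = (s i : ZMod n) := fun i => (hl i).1.2
  have hmulper : ∀ i t, (q : ZMod n) ^ (ℓ i * t) * (s i : ZMod n) = (s i : ZMod n) := by
    intro i t
    induction t with
    | zero => simp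
    | succ t ih =>
        rw [Nat.mul_succ, pow_add, mul_assoc, hper i, ih]
  have hreduce : ∀ i (j : ℕ), (q : ZMod n) ^ j * (s i : ZMod n)
      = (q : ZMod n) ^ (j % ℓ i) * (s i : ZMod n) := by
    intro i j
    conv_lhs => rw [← Nat.mod_add_div j (ℓ i)]
    rw [pow_add, mul_assoc, hmulper]
  set C : Fin m → Finset (ZMod n) :=
    fun i => (Finset.range (ℓ i)).image (fun j => (q : ZMod n) ^ j * (s i : ZMod n)) with hC
  have memC : ∀ i (z : ZMod n), z ∈ C i ↔ ∃ j : ℕ, z = (q : ZMod n) ^ j * (s i : ZMod n) := by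
    intro i z
    simp only [hC, Finset.mem_image, Finset.mem_range]
    constructor
    · rintro ⟨j, _, hj⟩; exact ⟨j, hj.symm⟩
    · rintro ⟨j, hj⟩
      exact ⟨j % ℓ i, Nat.mod_lt _ (hlpos i), by rw [← hreduce, hj]⟩
  have cardC : ∀ i, (C i).card = ℓ i := by
    intro i
    rw [hC, Finset.card_image_of_injOn, Finset.card_range]
    intro a ha b hb hab
    have hab' : (q : ZMod n) ^ a * (s i : ZMod n) = (q : ZMod n) ^ b * (s i : ZMod n) := hab
    simp only [Finset.coe_range, Set.mem_Iio] at ha hb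
    rcases le_total a b with h | h
    · by_contra hne
      have hlt : 0 < b - a := Nat.sub_pos_of_lt (lt_of_le_of_ne h hne)
      have : (q : ZMod n) ^ (b - a) * (s i : ZMod n) = (s i : ZMod n) := by
        have : (q : ZMod n) ^ a * ((q : ZMod n) ^ (b - a) * (s i : ZMod n))
            = (q : ZMod n) ^ a * (s i : ZMod n) := by
          rw [← mul_assoc, ← pow_add, Nat.add_sub_cancel' h, hab']
        exact (hu.pow a).mul_left_cancel this
      have := (hl i).2 ⟨hlt, this⟩
      omega
    · by_contra hne
      have hlt : 0 < a - b := Nat.sub_pos_of_lt (lt_of_le_of_ne h (Ne.symm hne))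
      have : (q : ZMod n) ^ (a - b) * (s i : ZMod n) = (s i : ZMod n) := by
        have : (q : ZMod n) ^ b * ((q : ZMod n) ^ (a - b) * (s i : ZMod n))
            = (q : ZMod n) ^ b * (s i : ZMod n) := by
          rw [← mul_assoc, ← pow_add, Nat.add_sub_cancel' h, ← hab']
        exact (hu.pow b).mul_left_cancel this
      have := (hl i).2 ⟨hlt, this⟩
      omega
  set f : ZMod n → Fin m := fun z => (hS z).choose with hfdef
  have hf : ∀ (z : ZMod n) (i : Fin m), f z = i ↔ z ∈ C i := by
    intro z i
    rw [memC]
    constructor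
    · rintro rfl; exact (hS z).choose_spec.1
    · intro hj
      exact ((hS z).choose_spec.2 i hj).symm
  have hA : (Finset.univ.filter fun z : ZMod n => z * k = 0).card = Nat.gcd n k.val := by
    rw [← ann_card n k.val]
    congr 1
    apply Finset.filter_congr
    intro z _
    rw [ZMod.natCast_zmod_val, mul_comm]
  rw [← hA]
  rw [Finset.card_eq_sum_card_fiberwise (f := f)
    (t := Finset.univ) (fun x _ => Finset.mem_univ _)]
  rw [Finset.sum_filter]
  apply Finset.sum_congr rfl
  intro i _
  by_cases hcond : (s i : ZMod n) * k = 0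
  · rw [if_pos hcond, ← cardC i]
    congr 1
    ext z
    simp only [Finset.mem_filter, Finset.mem_univ, true_and]
    rw [hf z i, memC]
    constructor
    · rintro ⟨_, h⟩; exact h
    · rintro ⟨j, rfl⟩
      exact ⟨by rw [mul_assoc, hcond, mul_zero], ⟨j, rfl⟩⟩
  · rw [if_neg hcond]
    rw [Finset.card_eq_zero]
    ext z
    simp only [Finset.mem_filter, Finset.mem_univ, true_and, Finset.notMem_empty, iff_false]
    rintro ⟨hzk, hfz⟩
    rw [hf z i, memC] at hfz
    obtain ⟨j, rfl⟩ := hfz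
    apply hcond
    apply (hu.pow j).mul_left_cancel
    rw [mul_zero, ← mul_assoc, hzk]

end CycCosets

section Burn
variable (q n : ℕ) [NeZero n]

/-- Rotation action of `ZMod n` on strings. -/
instance rotAct : AddAction (ZMod n) (ZMod n → Fin q) where
  vadd a w := fun z => w (z + a)
  zero_vadd w := by funext z; show w (z + 0) = w z; rw [add_zero]
  add_vadd a b w := by
    funext z
    show w (z + (a + b)) = w (z + a + b)
    rw [add_assoc]

omit [NeZero n] in
lemma rot_vadd (a : ZMod n) (w : ZMod n → Fin q) (z : ZMod n) : (a +ᵥ w) z = w (z + a) := rfl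

lemma fixed_card (a : ZMod n) :
    Nat.card (AddAction.fixedBy (ZMod n → Fin q) a) = q ^ Nat.gcd n a.val := by
  classical
  have hn : 0 < n := Nat.pos_of_ne_zero (NeZero.ne n)
  set H := AddSubgroup.zmultiples a with hH
  have inv : ∀ w : ZMod n → Fin q, a +ᵥ w = w → ∀ (j : ℤ) (z : ZMod n), w (z + j • a) = w z := by
    intro w hw j
    have hz : ∀ z, w (z + a) = w z := fun z => congrFun hw z
    induction j using Int.induction_on with
    | zero => intro z; rw [zero_zsmul, add_zero]
    | succ j ih =>
        intro z
        have : z + ((j : ℤ) + 1) • a = (z + a) + (j : ℤ) • a := by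
          rw [add_zsmul, one_zsmul]; abel
        rw [this, ih (z + a), hz z]
    | pred j ih =>
        intro z
        have : z + (-(j : ℤ) - 1) • a = (z - a) + (-(j : ℤ)) • a := by
          rw [sub_zsmul, one_zsmul]; abel
        rw [this, ih (z - a), ← hz (z - a)]
        congr 1; ring
  have inv2 : ∀ w : ZMod n → Fin q, a +ᵥ w = w →
      ∀ z z' : ZMod n, (z : ZMod n ⧸ H) = (z' : ZMod n ⧸ H) → w z = w z' := by
    intro w hw z z' hzz
    rw [QuotientAddGroup.eq] at hzz
    obtain ⟨j, hj⟩ := AddSubgroup.mem_zmultiples_iff.mp hzz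
    have : z' = z + j • a := by rw [hj]; ring
    rw [this, inv w hw j z]
  let Φ : ((ZMod n ⧸ H) → Fin q) → (AddAction.fixedBy (ZMod n → Fin q) a) := fun v =>
    ⟨fun z => v (z : ZMod n ⧸ H), by
      rw [AddAction.mem_fixedBy]
      funext z
      rw [rot_vadd]
      have : ((z + a : ZMod n) : ZMod n ⧸ H) = (z : ZMod n ⧸ H) := by
        rw [QuotientAddGroup.eq]
        have : -(z + a) + z = -a := by ring
        rw [this]
        exact neg_mem (AddSubgroup.mem_zmultiples a)
      simp only [this]⟩
  have hbij : Function.Bijective Φ := by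
    constructor
    · intro v v' hvv
      funext c
      induction c using QuotientAddGroup.induction_on with
      | H z => exact congrFun (congrArg Subtype.val hvv) z
    · rintro ⟨w, hw⟩
      rw [AddAction.mem_fixedBy] at hw
      refine ⟨fun c => w c.out, ?_⟩
      apply Subtype.ext
      funext z
      show w ((z : ZMod n ⧸ H)).out = w z
      apply inv2 w hw
      exact Quotient.out_eq' _
  have hcardQ : Nat.card (ZMod n ⧸ H) = Nat.gcd n a.val := by
    have h1 := AddSubgroup.card_eq_card_quotient_mul_card_addSubgroup H
    have h2 : Nat.card H = n / Nat.gcd n a.val := by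
      rw [hH, Nat.card_zmultiples]
      conv_lhs => rw [← ZMod.natCast_zmod_val a]
      exact ZMod.addOrderOf_coe a.val (NeZero.ne n)
    rw [Nat.card_zmod, h2] at h1
    have hg : Nat.gcd n a.val ∣ n := Nat.gcd_dvd_left n a.val
    have hgpos : 0 < Nat.gcd n a.val := Nat.gcd_pos_of_pos_left a.val hn
    have hd : 0 < n / Nat.gcd n a.val := Nat.div_pos (Nat.le_of_dvd hn hg) hgpos
    apply Nat.eq_of_mul_eq_mul_right hd
    rw [← h1, Nat.mul_div_cancel' hg]
  rw [← Nat.card_eq_of_bijective Φ hbij, Nat.card_fun, hcardQ, Nat.card_eq_fintype_card,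
    Fintype.card_fin]

/-- Burnside's lemma specialized to necklaces. -/
lemma burnside_rot :
    (∑ a : ZMod n, q ^ Nat.gcd n a.val) = Nat.card (Quotient (rotateSetoid n q)) * n := by
  classical
  haveI : ∀ a : ZMod n, Fintype (AddAction.fixedBy (ZMod n → Fin q) a) :=
    fun a => Fintype.ofFinite _
  haveI : Fintype (Quotient (AddAction.orbitRel (ZMod n) (ZMod n → Fin q))) :=
    Fintype.ofFinite _
  have hb := AddAction.sum_card_fixedBy_eq_card_orbits_mul_card_addGroup
    (ZMod n) (ZMod n → Fin q)
  have hsetoid : AddAction.orbitRel (ZMod n) (ZMod n → Fin q) = rotateSetoid n q := by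
    apply Setoid.ext
    intro w w'
    rw [AddAction.orbitRel_apply, AddAction.mem_orbit_iff]
    constructor
    · rintro ⟨k, rfl⟩
      exact (rotateSetoid n q).symm ⟨k, fun z => rfl⟩
    · intro h
      obtain ⟨k, hk⟩ := (rotateSetoid n q).symm h
      exact ⟨k, by funext z; exact (hk z).symm⟩
  calc (∑ a : ZMod n, q ^ Nat.gcd n a.val)
      = ∑ a : ZMod n, Fintype.card (AddAction.fixedBy (ZMod n → Fin q) a) := by
        apply Finset.sum_congr rfl
        intro a _
        rw [← Nat.card_eq_fintype_card, fixed_card]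
    _ = Fintype.card (Quotient (AddAction.orbitRel (ZMod n) (ZMod n → Fin q)))
          * Fintype.card (ZMod n) := hb
    _ = Nat.card (Quotient (rotateSetoid n q)) * n := by
        rw [← Nat.card_eq_fintype_card, hsetoid, ZMod.card]

end Burn

/-- Cardinality formula for the set `N(n,q)` of necklaces of length `n` with `q` colors,
in terms of the cyclotomic cosets of `ZMod n`: `S_i = {q^j·s_i : j ∈ ℕ}` (orbits of
`z ↦ q·z`), with representatives `s i` and `ℓ i` the least positive integer with
`q^(ℓ i)·s_i ≡ s_i (mod n)`. -/
theorem N_card_formula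
    (q n : ℕ) (hq : 0 < q) (hn : 0 < n) [NeZero n] (hqn : Nat.Coprime q n)
    (m : ℕ) (s : Fin m → ℕ) (ℓ : Fin m → ℕ)
    (hS : ∀ z : ZMod n, ∃! i : Fin m, ∃ j : ℕ, z = (q : ZMod n) ^ j * (s i : ZMod n))
    (hl : ∀ i, IsLeast {l : ℕ | 0 < l ∧ (q : ZMod n) ^ l * (s i : ZMod n) = (s i : ZMod n)} (ℓ i)) :
    (Nat.card (Quotient (rotateSetoid n q)) : ℚ) =
      ∑ I : Finset (Fin m),
        (Nat.gcd n (I.gcd s) : ℚ) / (n : ℚ) * ∏ i ∈ I, ((q : ℚ) ^ (ℓ i) - 1) := by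
  classical
  set f : Fin m → ℚ := fun i => (q : ℚ) ^ (ℓ i) - 1 with hfdef
  set T : ZMod n → Finset (Fin m) :=
    fun k => Finset.univ.filter (fun i => (s i : ZMod n) * k = 0) with hT
  -- gcd of a subset as a count of annihilated elements
  have hgcdI : ∀ I : Finset (Fin m), Nat.gcd n (I.gcd s) =
      (Finset.univ.filter fun k : ZMod n => ∀ i ∈ I, (s i : ZMod n) * k = 0).card := by
    intro I
    rw [← ann_card n (I.gcd s)]
    congr 1
    apply Finset.filter_congr
    intro k _
    have hk : ((k.val : ℕ) : ZMod n) = k := ZMod.natCast_zmod_val k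
    constructor
    · intro h i hi
      rw [← hk, ← Nat.cast_mul, ZMod.natCast_eq_zero_iff]
      rw [← hk, ← Nat.cast_mul, ZMod.natCast_eq_zero_iff] at h
      exact dvd_trans h (Nat.mul_dvd_mul_right (Finset.gcd_dvd hi) k.val)
    · intro h
      rw [← hk, ← Nat.cast_mul, ZMod.natCast_eq_zero_iff]
      have hg : I.gcd (fun i => s i * k.val) = I.gcd s * k.val := by
        rw [Finset.gcd_mul_right, normalize_eq]
      rw [← hg]
      rw [Finset.dvd_gcd_iff]
      intro i hi
      have := h i hi
      rwa [← hk, ← Nat.cast_mul, ZMod.natCast_eq_zero_iff] at this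
  -- the key identity
  have key : (∑ I : Finset (Fin m), (Nat.gcd n (I.gcd s) : ℚ) * ∏ i ∈ I, f i)
      = ((Nat.card (Quotient (rotateSetoid n q)) * n : ℕ) : ℚ) := by
    calc (∑ I : Finset (Fin m), (Nat.gcd n (I.gcd s) : ℚ) * ∏ i ∈ I, f i)
        = ∑ I : Finset (Fin m), ∑ k : ZMod n,
            (if ∀ i ∈ I, (s i : ZMod n) * k = 0 then ∏ i ∈ I, f i else 0) := by
          refine Finset.sum_congr rfl fun I _ => ?_
          rw [← Finset.sum_filter, Finset.sum_const, nsmul_eq_mul, hgcdI I]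
      _ = ∑ k : ZMod n, ∑ I : Finset (Fin m),
            (if ∀ i ∈ I, (s i : ZMod n) * k = 0 then ∏ i ∈ I, f i else 0) :=
          Finset.sum_comm
      _ = ∑ k : ZMod n, ∑ I ∈ (T k).powerset, ∏ i ∈ I, f i := by
          refine Finset.sum_congr rfl fun k _ => ?_
          rw [← Finset.sum_filter]
          congr 1
          ext I
          simp only [Finset.mem_filter, Finset.mem_univ, true_and, Finset.mem_powerset, hT,
            Finset.subset_iff]
      _ = ∑ k : ZMod n, ∏ i ∈ T k, (f i + 1) := by
          refine Finset.sum_congr rfl fun k _ => ?_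
          rw [Finset.prod_add]
          refine (Finset.sum_congr rfl fun I _ => ?_).symm
          rw [Finset.prod_const_one, mul_one]
      _ = ∑ k : ZMod n, ((q : ℚ)) ^ (Nat.gcd n k.val) := by
          refine Finset.sum_congr rfl fun k _ => ?_
          have h1 : ∀ i ∈ T k, f i + 1 = (q : ℚ) ^ (ℓ i) := by
            intro i _; simp [hfdef]
          rw [Finset.prod_congr rfl h1, Finset.prod_pow_eq_pow_sum,
            gcd_eq_sum_ell q n hqn m s ℓ hS hl k]
      _ = ((∑ k : ZMod n, q ^ Nat.gcd n k.val : ℕ) : ℚ) := by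
          push_cast
          ring
      _ = ((Nat.card (Quotient (rotateSetoid n q)) * n : ℕ) : ℚ) := by
          rw [burnside_rot]
  have hn0 : (n : ℚ) ≠ 0 := Nat.cast_ne_zero.mpr hn.ne'
  calc (Nat.card (Quotient (rotateSetoid n q)) : ℚ)
      = ((Nat.card (Quotient (rotateSetoid n q)) * n : ℕ) : ℚ) / (n : ℚ) := by
        push_cast
        rw [mul_div_assoc, div_self hn0, mul_one]
    _ = (∑ I : Finset (Fin m), (Nat.gcd n (I.gcd s) : ℚ) * ∏ i ∈ I, f i) / (n : ℚ) := by
        rw [key]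
    _ = ∑ I : Finset (Fin m), (Nat.gcd n (I.gcd s) : ℚ) / (n : ℚ) * ∏ i ∈ I, f i := by
        rw [Finset.sum_div]
        refine Finset.sum_congr rfl fun I _ => ?_
        rw [div_mul_eq_mul_div]
end

section
/- Let n and d_1,...,d_k be positive integers. Then there exists an automorphism φ of the additive group ∏_{i=1}^k Z/(n/gcd(n,d_i))Z such that, writing h_i for the i-th coordinate of φ(1,...,1), one has d_1·h_1 + ... + d_k·h_k ≡ gcd(n, d_1, ..., d_k) (mod n). (Here each term d_i·h_i is a well-defined element of Z/nZ, since d_i · (n/gcd(n,d_i)) ≡ 0 (mod n).) -/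
/-- An additive hom `ZMod m →+ ZMod M` sending `z mod m` to `z • t`. -/
noncomputable def scaleHom (m M : ℕ) (t : ZMod M) (ht : (m : ℤ) • t = 0) : ZMod m →+ ZMod M :=
  ZMod.lift m ⟨zmultiplesHom (ZMod M) t, by simpa using ht⟩

lemma scaleHom_intCast (m M : ℕ) (t : ZMod M) (ht : (m : ℤ) • t = 0) (z : ℤ) :
    scaleHom m M t ht ((z : ZMod m)) = z • t := by
  simp [scaleHom, ZMod.lift_coe]

lemma semilin {k L : ℕ} [NeZero L] {m : Fin k → ℕ} (hm : ∀ i, m i ∣ L)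
    (F : ((i : Fin k) → ZMod (m i)) →+ ZMod L) (c : ZMod L) (s : (i : Fin k) → ZMod (m i)) :
    F (fun i => ZMod.castHom (hm i) (ZMod (m i)) c * s i) = c * F s := by
  have hc : ((c.val : ℕ) : ZMod L) = c := by rw [ZMod.natCast_val, ZMod.cast_id]
  have h1 : (fun i => ZMod.castHom (hm i) (ZMod (m i)) c * s i) = c.val • s := by
    funext i
    rw [Pi.smul_apply, nsmul_eq_mul, ZMod.natCast_val, ZMod.castHom_apply]
  rw [h1, map_nsmul, nsmul_eq_mul, hc]

lemma exists_rankOne {k L : ℕ} [NeZero L] {m : Fin k → ℕ} (hm : ∀ i, m i ∣ L)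
    (f : ((i : Fin k) → ZMod (m i)) →+ ZMod L) (s : (i : Fin k) → ZMod (m i))
    (hu : IsUnit (1 + f s)) :
    ∃ φ : ((i : Fin k) → ZMod (m i)) ≃+ ((i : Fin k) → ZMod (m i)),
      ∀ x, φ x = fun i => x i + ZMod.castHom (hm i) (ZMod (m i)) (f x) * s i := by
  obtain ⟨u, hu'⟩ := hu
  set v : ZMod L := ↑u⁻¹ with hv
  have hvu : v * (1 + f s) = 1 := by rw [← hu']; exact u.inv_mul
  set φ : ((i : Fin k) → ZMod (m i)) → ((i : Fin k) → ZMod (m i)) :=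
    fun x => fun i => x i + ZMod.castHom (hm i) (ZMod (m i)) (f x) * s i with hφdef
  set ψ : ((i : Fin k) → ZMod (m i)) → ((i : Fin k) → ZMod (m i)) :=
    fun x => fun i => x i + ZMod.castHom (hm i) (ZMod (m i)) (-(v * f x)) * s i with hψdef
  have hfφ : ∀ x, f (φ x) = f x * (1 + f s) := by
    intro x
    have h0 : φ x = x + fun i => ZMod.castHom (hm i) (ZMod (m i)) (f x) * s i := rfl
    rw [h0, map_add, semilin hm f (f x) s]; ring
  have hfψ : ∀ x, f (ψ x) = v * f x := by
    intro x
    have h0 : ψ x = x + fun i => ZMod.castHom (hm i) (ZMod (m i)) (-(v * f x)) * s i := rfl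
    rw [h0, map_add, semilin hm f _ s]
    linear_combination (- (f x)) * hvu
  have hl : ∀ x, ψ (φ x) = x := by
    intro x; funext i
    show φ x i + ZMod.castHom (hm i) (ZMod (m i)) (-(v * f (φ x))) * s i = x i
    rw [hfφ]
    have h2 : -(v * (f x * (1 + f s))) = -(f x) := by
      linear_combination (-(f x)) * hvu
    rw [h2]
    show x i + ZMod.castHom (hm i) (ZMod (m i)) (f x) * s i + _ = x i
    rw [map_neg]; ring
  have hr : ∀ x, φ (ψ x) = x := by
    intro x; funext i
    show ψ x i + ZMod.castHom (hm i) (ZMod (m i)) (f (ψ x)) * s i = x i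
    rw [hfψ]
    show x i + ZMod.castHom (hm i) (ZMod (m i)) (-(v * f x)) * s i + _ = x i
    rw [map_neg]; ring
  refine ⟨AddEquiv.mk' ⟨φ, ψ, hl, hr⟩ ?_, fun x => rfl⟩
  intro x y; funext i
  show (x + y) i + ZMod.castHom (hm i) (ZMod (m i)) (f (x + y)) * s i
      = (x i + ZMod.castHom (hm i) (ZMod (m i)) (f x) * s i)
        + (y i + ZMod.castHom (hm i) (ZMod (m i)) (f y) * s i)
  rw [map_add, map_add, Pi.add_apply]; ring

lemma exists_coprime_add (L : ℕ) (hL : L ≠ 0) (x y : ℤ)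
    (h : ∀ p : ℕ, p.Prime → (p : ℤ) ∣ x → (p : ℤ) ∣ y → False) :
    ∃ β : ℤ, Int.gcd (x + β * y) L = 1 := by
  classical
  set Q : Finset ℕ := L.primeFactors.filter (fun q => ¬ (q : ℤ) ∣ x) with hQ
  refine ⟨((∏ q ∈ Q, q : ℕ) : ℤ), ?_⟩
  set β : ℤ := ((∏ q ∈ Q, q : ℕ) : ℤ) with hβ
  by_contra hne
  obtain ⟨p, pp, hpd⟩ := Nat.exists_prime_and_dvd hne
  have hg : Int.gcd (x + β * y) (L : ℤ) = Nat.gcd (x + β * y).natAbs L := by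
    rw [Int.gcd, Int.natAbs_natCast]
  rw [hg] at hpd
  have hpL : p ∣ L := hpd.trans (Nat.gcd_dvd_right _ _)
  have hpxy : (p : ℤ) ∣ x + β * y := by
    refine Int.dvd_natAbs.mp ?_
    exact_mod_cast hpd.trans (Nat.gcd_dvd_left _ _)
  by_cases hx : (p : ℤ) ∣ x
  · have hpy : ¬ (p : ℤ) ∣ y := fun hy => h p pp hx hy
    have hpby : (p : ℤ) ∣ β * y := (dvd_add_right hx).mp hpxy
    have hpp : Prime (p : ℤ) := Int.prime_iff_natAbs_prime.mpr (by simpa using pp)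
    rcases hpp.dvd_mul.mp hpby with hpb | hpy'
    · rw [hβ] at hpb
      have hpb' : p ∣ ∏ q ∈ Q, q := by exact_mod_cast hpb
      obtain ⟨q, hq, hpq⟩ := (Prime.dvd_finset_prod_iff pp.prime _).mp hpb'
      obtain ⟨hqL, hqx⟩ := Finset.mem_filter.mp hq
      have hqprime : Nat.Prime q := Nat.prime_of_mem_primeFactors hqL
      have hpq' : p = q := (Nat.prime_dvd_prime_iff_eq pp hqprime).mp hpq
      exact hqx (hpq' ▸ hx)
    · exact hpy hpy'
  · have hpmem : p ∈ Q := by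
      exact Finset.mem_filter.mpr ⟨Nat.mem_primeFactors.mpr ⟨pp, hpL, hL⟩, hx⟩
    have hpb : (p : ℤ) ∣ β := by
      rw [hβ]
      exact_mod_cast Int.natCast_dvd_natCast.mpr (Finset.dvd_prod_of_mem _ hpmem)
    exact hx ((dvd_add_left (hpb.mul_right y)).mp hpxy)

lemma finset_gcd_bezout {ι : Type*} [DecidableEq ι] (s : Finset ι) (d : ι → ℕ) :
    ∃ b : ι → ℤ, ((s.gcd d : ℕ) : ℤ) = ∑ i ∈ s, b i * d i := by
  classical
  induction s using Finset.induction with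
  | empty => exact ⟨0, by simp⟩
  | insert a s ha ih =>
    obtain ⟨b, hb⟩ := ih
    have h1 : (insert a s).gcd d = Nat.gcd (d a) (s.gcd d) := Finset.gcd_insert
    have h2 := Int.gcd_eq_gcd_ab ((d a : ℤ)) ((s.gcd d : ℕ) : ℤ)
    have h3 : Int.gcd ((d a : ℤ)) ((s.gcd d : ℕ) : ℤ) = Nat.gcd (d a) (s.gcd d) := by
      rw [Int.gcd_natCast_natCast]
    refine ⟨fun i => if i = a then Int.gcdA (d a) ((s.gcd d : ℕ) : ℤ)
      else Int.gcdB ((d a : ℤ)) ((s.gcd d : ℕ) : ℤ) * b i, ?_⟩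
    rw [Finset.sum_insert ha]
    simp only [if_pos rfl]
    have h4 : ∑ i ∈ s, (if i = a then Int.gcdA (d a) ((s.gcd d : ℕ) : ℤ)
        else Int.gcdB ((d a : ℤ)) ((s.gcd d : ℕ) : ℤ) * b i) * d i
        = Int.gcdB ((d a : ℤ)) ((s.gcd d : ℕ) : ℤ) * ∑ i ∈ s, b i * d i := by
      rw [Finset.mul_sum]
      refine Finset.sum_congr rfl fun i hi => ?_
      rw [if_neg (by rintro rfl; exact ha hi)]
      ring
    rw [h4, ← hb, h1]
    push_cast [← h3]
    rw [h2]
    ring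

/-- For positive integers `n` and `d 1, …, d k`, there is an automorphism `φ` of the
additive group `∏ i, ZMod (n / gcd(n, d i))` such that, with `h i` the `i`-th coordinate
of `φ (1,…,1)`, one has `∑ i, d i · h i ≡ gcd(n, d 1, …, d k) (mod n)`.
Here each `d i · h i` is interpreted in `ZMod n` via the canonical representative
`(h i).val`, which is well defined since `d i · (n / gcd(n, d i)) ≡ 0 (mod n)`. -/
theorem exists_automorphism_bezout
    (n : ℕ) (hn : 0 < n) (k : ℕ) (d : Fin k → ℕ) (hd : ∀ i, 0 < d i) :
    ∃ φ : (∀ i : Fin k, ZMod (n / Nat.gcd n (d i))) ≃+ (∀ i : Fin k, ZMod (n / Nat.gcd n (d i))),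
      ∑ i : Fin k, (d i : ZMod n) * (((φ (fun _ => 1)) i).val : ZMod n) =
        (Nat.gcd n (Finset.univ.gcd d) : ZMod n) := by
  classical
  set G : ℕ := Nat.gcd n (Finset.univ.gcd d) with hG
  have hGn : G ∣ n := Nat.gcd_dvd_left _ _
  have hGpos : 0 < G := Nat.gcd_pos_of_pos_left _ hn
  set L : ℕ := n / G with hL
  have hnGL : n = G * L := (Nat.mul_div_cancel' hGn).symm
  have hLpos : 0 < L := Nat.div_pos (Nat.le_of_dvd hn hGn) hGpos
  haveI : NeZero L := ⟨hLpos.ne'⟩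
  set m : Fin k → ℕ := fun i => n / Nat.gcd n (d i) with hm
  have hgi_n : ∀ i, Nat.gcd n (d i) ∣ n := fun i => Nat.gcd_dvd_left _ _
  have hgi_d : ∀ i, Nat.gcd n (d i) ∣ d i := fun i => Nat.gcd_dvd_right _ _
  have hgipos : ∀ i, 0 < Nat.gcd n (d i) := fun i => Nat.gcd_pos_of_pos_left _ hn
  have hGd : ∀ i, G ∣ d i :=
    fun i => (Nat.gcd_dvd_right n _).trans (Finset.gcd_dvd (Finset.mem_univ i))
  have hGgi : ∀ i, G ∣ Nat.gcd n (d i) := fun i => Nat.dvd_gcd hGn (hGd i)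
  set q : Fin k → ℕ := fun i => d i / G with hq
  have hqd : ∀ i, G * q i = d i := fun i => Nat.mul_div_cancel' (hGd i)
  have hmpos : ∀ i, 0 < m i := fun i => Nat.div_pos (Nat.le_of_dvd hn (hgi_n i)) (hgipos i)
  haveI : ∀ i, NeZero (m i) := fun i => ⟨(hmpos i).ne'⟩
  have hgm : ∀ i, Nat.gcd n (d i) * m i = n := fun i => Nat.mul_div_cancel' (hgi_n i)
  have hmiL : ∀ i, m i ∣ L := by
    intro i
    obtain ⟨e, he⟩ := hGgi i
    refine ⟨e, ?_⟩
    have h2 : G * L = G * (m i * e) := by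
      rw [← hnGL]
      calc n = Nat.gcd n (d i) * m i := (hgm i).symm
        _ = G * e * m i := by rw [← he]
        _ = G * (m i * e) := by ring
    exact Nat.eq_of_mul_eq_mul_left hGpos h2
  have hn_dvd_dm : ∀ i, n ∣ d i * m i := by
    intro i
    obtain ⟨e, he⟩ := hgi_d i
    refine ⟨e, ?_⟩
    calc d i * m i = Nat.gcd n (d i) * e * m i := by rw [← he]
      _ = (Nat.gcd n (d i) * m i) * e := by ring
      _ = n * e := by rw [hgm i]
  have hL_dvd_mq : ∀ i, L ∣ m i * q i := by
    intro i
    obtain ⟨e', he'⟩ := hgi_d i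
    refine ⟨e', ?_⟩
    have h2 : G * (m i * q i) = G * (L * e') := by
      calc G * (m i * q i) = m i * (G * q i) := by ring
        _ = m i * d i := by rw [hqd]
        _ = m i * (Nat.gcd n (d i) * e') := by rw [← he']
        _ = (Nat.gcd n (d i) * m i) * e' := by ring
        _ = n * e' := by rw [hgm i]
        _ = G * (L * e') := by rw [hnGL]; ring
    exact Nat.eq_of_mul_eq_mul_left hGpos h2
  -- Bezout coefficients
  obtain ⟨b0, hb0⟩ := finset_gcd_bezout (Finset.univ : Finset (Fin k)) d
  have hpair := Int.gcd_eq_gcd_ab (n : ℤ) ((Finset.univ.gcd d : ℕ) : ℤ)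
  set c : ℤ := Int.gcdA (n : ℤ) ((Finset.univ.gcd d : ℕ) : ℤ) with hc
  set B0 : ℤ := Int.gcdB (n : ℤ) ((Finset.univ.gcd d : ℕ) : ℤ) with hB0
  set b : Fin k → ℤ := fun i => B0 * b0 i with hb_def
  have hb : (G : ℤ) = c * n + ∑ i, b i * d i := by
    have h5 : ∑ i, b i * (d i : ℤ) = B0 * ∑ i, b0 i * (d i : ℤ) := by
      rw [Finset.mul_sum]
      exact Finset.sum_congr rfl fun i _ => by rw [hb_def]; ring
    rw [h5, ← hb0]
    have h6 : Int.gcd (n : ℤ) ((Finset.univ.gcd d : ℕ) : ℤ) = G := by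
      rw [Int.gcd_natCast_natCast, hG]
    rw [← h6, hpair]
    ring
  set S' : ℤ := ∑ i, (q i : ℤ) with hS'
  set B' : ℤ := ∑ i, (b i) ^ 2 * (q i : ℤ) with hB'
  have hT : ∑ i, b i * (q i : ℤ) = 1 - c * L := by
    have h1 : (G : ℤ) * (∑ i, b i * (q i : ℤ)) = (G : ℤ) * (1 - c * L) := by
      calc (G : ℤ) * ∑ i, b i * (q i : ℤ) = ∑ i, b i * ((G : ℤ) * (q i : ℤ)) := by
            rw [Finset.mul_sum]; exact Finset.sum_congr rfl fun i _ => by ring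
        _ = ∑ i, b i * (d i : ℤ) := by
            refine Finset.sum_congr rfl fun i _ => ?_
            congr 1
            exact_mod_cast congrArg (fun t : ℕ => (t : ℤ)) (hqd i)
        _ = (G : ℤ) - c * n := by rw [← sub_eq_iff_eq_add'.mpr hb]
        _ = (G : ℤ) * (1 - c * L) := by rw [hnGL]; push_cast; ring
    exact mul_left_cancel₀ (by exact_mod_cast hGpos.ne') h1
  -- choose β
  obtain ⟨β, hβ⟩ := exists_coprime_add L hLpos.ne' (1 + (1 - S') * B') (1 - S' * B') (by
    intro p pp h1 h2
    have h3 : (p : ℤ) ∣ B' := by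
      have h := dvd_sub h1 h2
      have he : (1 + (1 - S') * B') - (1 - S' * B') = B' := by ring
      rwa [he] at h
    have h4 : (p : ℤ) ∣ 1 := by
      have h5 : (p : ℤ) ∣ S' * B' := h3.mul_left S'
      have h6 := dvd_add h2 h5
      have he : (1 - S' * B') + S' * B' = 1 := by ring
      rwa [he] at h6
    have h7 : p ∣ 1 := by exact_mod_cast h4
    exact pp.ne_one (Nat.dvd_one.mp h7))
  set α : ℤ := 1 - S' - β * S' with hα
  set z : Fin k → ℤ := fun i => 1 + α * b i + β with hz
  set s : (i : Fin k) → ZMod (m i) := fun i => ((α * b i + β : ℤ) : ZMod (m i)) with hs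
  have hti : ∀ i, ((m i : ℤ)) • (((b i * (q i : ℤ) : ℤ) : ZMod L)) = 0 := by
    intro i
    obtain ⟨w, hw⟩ := hL_dvd_mq i
    rw [zsmul_eq_mul]
    calc ((m i : ℤ) : ZMod L) * ((b i * (q i : ℤ) : ℤ) : ZMod L)
        = (((m i * q i : ℕ) : ℤ) * b i : ZMod L) := by push_cast; ring
      _ = 0 := by rw [hw]; push_cast [ZMod.natCast_self]; ring
  set f : ((i : Fin k) → ZMod (m i)) →+ ZMod L :=
    ∑ i, (scaleHom (m i) L ((b i * (q i : ℤ) : ℤ) : ZMod L) (hti i)).comp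
      (Pi.evalAddMonoidHom (fun i => ZMod (m i)) i) with hf
  have hfapp : ∀ x : (i : Fin k) → ZMod (m i),
      f x = ∑ i, scaleHom (m i) L ((b i * (q i : ℤ) : ℤ) : ZMod L) (hti i) (x i) := by
    intro x
    rw [hf, AddMonoidHom.finset_sum_apply]
    rfl
  have hfs : f s = ((α * B' + β * (1 - c * L) : ℤ) : ZMod L) := by
    rw [hfapp]
    have h1 : ∀ i, scaleHom (m i) L ((b i * (q i : ℤ) : ℤ) : ZMod L) (hti i) (s i)
        = (((α * b i + β) * (b i * (q i : ℤ)) : ℤ) : ZMod L) := by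
      intro i
      rw [hs]
      show scaleHom (m i) L _ (hti i) (((α * b i + β : ℤ) : ZMod (m i))) = _
      rw [scaleHom_intCast, zsmul_eq_mul]
      push_cast
      ring
    rw [Finset.sum_congr rfl fun i _ => h1 i, ← Int.cast_sum]
    congr 1
    calc ∑ i, (α * b i + β) * (b i * (q i : ℤ))
        = α * (∑ i, b i ^ 2 * (q i : ℤ)) + β * ∑ i, b i * (q i : ℤ) := by
          rw [Finset.mul_sum, Finset.mul_sum, ← Finset.sum_add_distrib]
          exact Finset.sum_congr rfl fun i _ => by ring
      _ = α * B' + β * (1 - c * L) := by rw [hT, hB']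
  have hu : IsUnit (1 + f s) := by
    rw [hfs]
    have h1 : (1 + ((α * B' + β * (1 - c * L) : ℤ) : ZMod L) : ZMod L)
        = ((((1 + (1 - S') * B') + β * (1 - S' * B')) - β * c * L : ℤ) : ZMod L) := by
      rw [hα]
      push_cast
      ring
    rw [h1]
    have h2 : ((((1 + (1 - S') * B') + β * (1 - S' * B')) - β * c * L : ℤ) : ZMod L)
        = ((((1 + (1 - S') * B') + β * (1 - S' * B')) : ℤ) : ZMod L) := by
      push_cast [ZMod.natCast_self]
      ring
    rw [h2]
    obtain ⟨uu, vv, huv⟩ := Int.isCoprime_iff_gcd_eq_one.mpr hβ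
    have h3 : ((uu : ZMod L)) * (((1 + (1 - S') * B') + β * (1 - S' * B') : ℤ) : ZMod L) = 1 := by
      have := congrArg (fun t : ℤ => ((t : ZMod L))) huv
      push_cast [ZMod.natCast_self] at this
      rw [← this]
      push_cast
      ring
    exact IsUnit.of_mul_eq_one _ (mul_comm _ ((uu : ZMod L)) ▸ h3)
  obtain ⟨φ, hφ⟩ := exists_rankOne hmiL f s hu
  refine ⟨φ, ?_⟩
  have hfe : f (fun _ => 1) = 1 := by
    rw [hfapp]
    have h1 : ∀ i : Fin k, scaleHom (m i) L ((b i * (q i : ℤ) : ℤ) : ZMod L) (hti i)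
        ((1 : ZMod (m i))) = ((b i * (q i : ℤ) : ℤ) : ZMod L) := by
      intro i
      have : (1 : ZMod (m i)) = (((1 : ℤ)) : ZMod (m i)) := by push_cast; rfl
      rw [this, scaleHom_intCast, one_zsmul]
    rw [Finset.sum_congr rfl fun i _ => h1 i, ← Int.cast_sum, hT]
    push_cast [ZMod.natCast_self]
    ring
  have hφe : ∀ i, φ (fun _ => 1) i = ((z i : ℤ) : ZMod (m i)) := by
    intro i
    rw [hφ]
    show (1 : ZMod (m i)) + ZMod.castHom (hmiL i) (ZMod (m i)) (f fun _ => 1) * s i = _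
    rw [hfe, map_one, one_mul, hs]
    show (1 : ZMod (m i)) + ((α * b i + β : ℤ) : ZMod (m i)) = ((z i : ℤ) : ZMod (m i))
    rw [hz]
    push_cast
    ring
  have hterm : ∀ i, (d i : ZMod n) * (((φ (fun _ => 1)) i).val : ZMod n)
      = ((d i * z i : ℤ) : ZMod n) := by
    intro i
    set w : ℕ := ((φ (fun _ => 1)) i).val with hwdef
    have hw : ((w : ℤ) : ZMod (m i)) = ((z i : ℤ) : ZMod (m i)) := by
      rw [← hφe i, hwdef]
      push_cast
      rw [ZMod.natCast_val, ZMod.cast_id]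
    have hdvd : (m i : ℤ) ∣ (z i - w) := by
      have h0 : ((z i - (w : ℤ) : ℤ) : ZMod (m i)) = 0 := by
        rw [Int.cast_sub, hw, sub_self]
      exact (ZMod.intCast_zmod_eq_zero_iff_dvd _ _).mp h0
    obtain ⟨t, ht⟩ := hdvd
    have hnd : (n : ℤ) ∣ ((d i : ℤ) * z i - (d i : ℤ) * w) := by
      obtain ⟨e, he⟩ := hn_dvd_dm i
      refine ⟨e * t, ?_⟩
      have h7 : ((d i * m i : ℕ) : ℤ) = (n : ℤ) * e := by rw [he]; push_cast; ring
      calc (d i : ℤ) * z i - (d i : ℤ) * w = (d i : ℤ) * (z i - w) := by ring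
        _ = (d i : ℤ) * ((m i : ℤ) * t) := by rw [ht]
        _ = ((d i * m i : ℕ) : ℤ) * t := by push_cast; ring
        _ = (n : ℤ) * (e * t) := by rw [h7]; ring
    have h8 : ((d i * (w : ℤ) : ℤ) : ZMod n) = ((d i * z i : ℤ) : ZMod n) := by
      rw [← sub_eq_zero, ← Int.cast_sub, ZMod.intCast_zmod_eq_zero_iff_dvd]
      have : ((d i : ℤ) * w - (d i : ℤ) * z i) = -((d i : ℤ) * z i - (d i : ℤ) * w) := by ring
      rw [this]
      exact hnd.neg_right
    calc (d i : ZMod n) * ((w : ℕ) : ZMod n) = ((d i * (w : ℤ) : ℤ) : ZMod n) := by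
          push_cast; ring
      _ = ((d i * z i : ℤ) : ZMod n) := h8
  rw [Finset.sum_congr rfl fun i _ => hterm i, ← Int.cast_sum]
  have hfinal : ∑ i, (d i : ℤ) * z i = (G : ℤ) - α * c * n := by
    have h1 : ∑ i, (d i : ℤ) * z i = (1 + β) * (∑ i, (d i : ℤ)) + α * (∑ i, b i * (d i : ℤ)) := by
      rw [Finset.mul_sum, Finset.mul_sum, ← Finset.sum_add_distrib]
      refine Finset.sum_congr rfl fun i _ => ?_
      rw [hz]
      ring
    have h2 : ∑ i, (d i : ℤ) = (G : ℤ) * S' := by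
      rw [hS', Finset.mul_sum]
      refine Finset.sum_congr rfl fun i _ => ?_
      exact_mod_cast (congrArg (fun t : ℕ => (t : ℤ)) (hqd i)).symm
    have h3 : ∑ i, b i * (d i : ℤ) = (G : ℤ) - c * n := by
      rw [← sub_eq_iff_eq_add'.mpr hb]
    rw [h1, h2, h3, hα]
    ring
  rw [hfinal]
  push_cast [ZMod.natCast_self]
  ring
end

section
/- Let q be a prime power and n a positive integer coprime to q, and let I ⊆ {1,...,m}. Then |N_I| = (gcd(n, gcd(s_i : i ∈ I))/n) · ∏_{i ∈ I} (q^{ℓ_i} − 1), where for I = ∅ the inner gcd is 0 and the empty product is 1. -/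
open Polynomial IntermediateField

section Helpers

lemma aeval_qpow {F : Type} [Field F] [Fintype F] (A : F[X]) (y : AlgebraicClosure F) :
    aeval (y ^ Fintype.card F) A = (aeval y A) ^ Fintype.card F := by
  set p := ringChar F with hp
  have hchar : CharP F p := ringChar.charP F
  have hprime : p.Prime := CharP.char_is_prime F p
  obtain ⟨e, -, hcard⟩ := FiniteField.card F p
  have : CharP (AlgebraicClosure F) p := charP_of_injective_algebraMap (algebraMap F _).injective p
  have : ExpChar (AlgebraicClosure F) p := ExpChar.prime hprime
  set σ : AlgebraicClosure F →+* AlgebraicClosure F := iterateFrobenius (AlgebraicClosure F) p e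
  have hσ : ∀ z : AlgebraicClosure F, σ z = z ^ Fintype.card F := fun z => by
    rw [hcard]; exact iterateFrobenius_def p e z
  have hcomp : σ.comp (algebraMap F (AlgebraicClosure F)) = algebraMap F (AlgebraicClosure F) := by
    ext a
    simp only [RingHom.comp_apply, hσ, ← map_pow, FiniteField.pow_card]
  calc aeval (y ^ Fintype.card F) A = eval₂ (algebraMap F _) (σ y) A := by rw [aeval_def, hσ]
    _ = eval₂ (σ.comp (algebraMap F _)) (σ y) A := by rw [hcomp]
    _ = σ (eval₂ (algebraMap F _) y A) := (hom_eval₂ _ _ _ _).symm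
    _ = (aeval y A) ^ Fintype.card F := by rw [hσ, aeval_def]

lemma aeval_qpow_pow {F : Type} [Field F] [Fintype F] (A : F[X]) (y : AlgebraicClosure F) (j : ℕ) :
    aeval (y ^ Fintype.card F ^ j) A = (aeval y A) ^ Fintype.card F ^ j := by
  induction j with
  | zero => simp
  | succ j ih => rw [pow_succ, pow_mul, pow_mul, aeval_qpow, ih]

lemma nat_dvd_mul_iff {n : ℕ} (hn : 0 < n) (G k : ℕ) :
    n ∣ G * k ↔ n / Nat.gcd n G ∣ k := by
  set d := Nat.gcd n G with hd
  have hd0 : 0 < d := Nat.gcd_pos_of_pos_left G hn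
  obtain ⟨n', hn'⟩ : d ∣ n := Nat.gcd_dvd_left n G
  obtain ⟨G', hG'⟩ : d ∣ G := Nat.gcd_dvd_right n G
  have hcop : Nat.Coprime n' G' := by
    have h2 := Nat.coprime_div_gcd_div_gcd (m := n) (n := G) hd0
    rwa [← hd, hn', hG', Nat.mul_div_cancel_left _ hd0, Nat.mul_div_cancel_left _ hd0] at h2
  have hdiv : n / d = n' := by rw [hn', Nat.mul_div_cancel_left _ hd0]
  rw [hdiv]
  constructor
  · intro h
    rw [hn', hG'] at h
    have h' : n' ∣ G' * k := by
      rcases h with ⟨c, hc⟩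
      refine ⟨c, ?_⟩
      have : d * (G' * k) = d * (n' * c) := by
        rw [← mul_assoc, ← mul_assoc, ← hc]
      exact Nat.eq_of_mul_eq_mul_left hd0 this
    exact hcop.dvd_of_dvd_mul_left h'
  · rintro ⟨c, rfl⟩
    rw [hn', hG']
    exact ⟨G' * c, by ring⟩

lemma card_fibers {A B : Type*} [Finite A] (f : A → B) (hf : Function.Surjective f) (k : ℕ)
    (h : ∀ b, Nat.card {a // f a = b} = k) : Nat.card A = Nat.card B * k := by
  classical
  have : Finite B := Finite.of_surjective f hf
  cases nonempty_fintype A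
  cases nonempty_fintype B
  rw [Nat.card_eq_fintype_card, Nat.card_eq_fintype_card,
    ← Fintype.card_congr (Equiv.sigmaFiberEquiv f), Fintype.card_sigma]
  rw [Finset.sum_congr rfl (fun b _ => by rw [← Nat.card_eq_fintype_card, h b])]
  simp [mul_comm]

end Helpers

lemma mk_eq_zero_of_aeval {q n : ℕ} (hn : 0 < n) [NeZero n] {F : Type} [Field F] [Fintype F]
    (hF : Fintype.card F = q)
    {ω : AlgebraicClosure F} (hω : IsPrimitiveRoot ω n)
    {m : ℕ} {s : Fin m → ℕ}
    (hS : ∀ z : ZMod n, ∃ i : Fin m, ∃ j : ℕ, z = (q : ZMod n) ^ j * (s i : ZMod n))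
    (A : F[X]) (hA : ∀ i, aeval (ω ^ (s i)) A = 0) :
    AdjoinRoot.mk ((X : F[X]) ^ n - 1) A = 0 := by
  have hωZ : ∀ a b : ℕ, ((a : ZMod n) = (b : ZMod n)) → ω ^ a = ω ^ b := by
    intro a b h
    rw [ZMod.natCast_eq_natCast_iff, Nat.ModEq] at h
    conv_lhs => rw [← Nat.div_add_mod a n]
    conv_rhs => rw [← Nat.div_add_mod b n]
    rw [pow_add, pow_add, pow_mul, pow_mul, hω.pow_eq_one, one_pow, one_pow, h]
  classical
  rw [AdjoinRoot.mk_eq_zero]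
  rcases eq_or_ne A 0 with rfl | hA0
  · exact dvd_zero _
  -- all ω^k are roots
  have hroot : ∀ ζ : AlgebraicClosure F, ζ ^ n = 1 → aeval ζ A = 0 := by
    intro ζ hζ
    obtain ⟨k, -, rfl⟩ := hω.eq_pow_of_pow_eq_one hζ
    obtain ⟨i, j, hij⟩ := hS (k : ZMod n)
    have : ω ^ k = (ω ^ (s i)) ^ (q ^ j) := by
      rw [← pow_mul]
      apply hωZ
      rw [hij]; push_cast; ring
    rw [this, ← hF, aeval_qpow_pow, hF, hA i, zero_pow (pow_ne_zero _ (by rintro rfl; exact Fintype.card_ne_zero hF))]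
  -- descend divisibility
  rw [← map_dvd_map' (algebraMap F (AlgebraicClosure F))]
  have hmap : ((X : F[X]) ^ n - 1).map (algebraMap F (AlgebraicClosure F))
      = (X : (AlgebraicClosure F)[X]) ^ n - 1 := by
    simp
  rw [hmap, X_pow_sub_one_eq_prod hn hω]
  have hAm0 : A.map (algebraMap F (AlgebraicClosure F)) ≠ 0 := by
    simpa using (Polynomial.map_ne_zero_iff (algebraMap F (AlgebraicClosure F)).injective).2 hA0
  rw [Finset.prod_eq_multiset_prod]
  rw [show (Multiset.map (fun ζ => X - C ζ) (nthRootsFinset n (1 : AlgebraicClosure F)).val).prod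
      = ((nthRootsFinset n (1 : AlgebraicClosure F)).val.map (fun ζ => X - C ζ)).prod from rfl]
  rw [Multiset.prod_X_sub_C_dvd_iff_le_roots hAm0]
  apply Multiset.le_iff_count.2
  intro ζ
  by_cases hζ : ζ ∈ nthRootsFinset n (1 : AlgebraicClosure F)
  · have h1 : (nthRootsFinset n (1 : AlgebraicClosure F)).val.count ζ = 1 :=
      Multiset.count_eq_one_of_mem (nthRootsFinset n (1 : AlgebraicClosure F)).nodup hζ
    rw [h1]
    rw [Multiset.one_le_count_iff_mem, mem_roots hAm0]
    rw [mem_nthRootsFinset hn] at hζ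
    have := hroot ζ hζ
    rwa [IsRoot, eval_map, ← aeval_def]
  · rw [Multiset.count_eq_zero_of_notMem (by simpa using hζ)]
    exact Nat.zero_le _

lemma minpoly_natDegree_eq {q n : ℕ} (hn : 0 < n) [NeZero n] {F : Type} [Field F] [Fintype F]
    (hF : Fintype.card F = q) {ω : AlgebraicClosure F} (hω : IsPrimitiveRoot ω n)
    (s ℓ : ℕ)
    (hl : IsLeast {l : ℕ | 0 < l ∧ (q : ZMod n) ^ l * (s : ZMod n) = (s : ZMod n)} ℓ) :
    (minpoly F (ω ^ s)).natDegree = ℓ := by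
  classical
  have hq1 : 1 < q := hF ▸ Fintype.one_lt_card
  set x := ω ^ s with hx
  have hint : IsIntegral F x := (Algebra.IsAlgebraic.isAlgebraic x).isIntegral
  set d := (minpoly F x).natDegree with hd
  have hωiff : ∀ a b : ℕ, ω ^ a = ω ^ b ↔ ((a : ZMod n) = (b : ZMod n)) := by
    intro a b
    constructor
    · intro h
      rw [ZMod.natCast_eq_natCast_iff, Nat.ModEq]
      refine hω.pow_inj (Nat.mod_lt _ hn) (Nat.mod_lt _ hn) ?_
      have e : ∀ c : ℕ, ω ^ c = ω ^ (c % n) := by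
        intro c
        conv_lhs => rw [← Nat.div_add_mod c n]
        rw [pow_add, pow_mul, hω.pow_eq_one, one_pow, one_mul]
      rw [← e, ← e, h]
    · intro h
      rw [ZMod.natCast_eq_natCast_iff, Nat.ModEq] at h
      conv_lhs => rw [← Nat.div_add_mod a n]
      conv_rhs => rw [← Nat.div_add_mod b n]
      rw [pow_add, pow_add, pow_mul, pow_mul, hω.pow_eq_one, one_pow, one_pow, h]
  have hkey : ∀ l : ℕ, x ^ q ^ l = x ↔ (q : ZMod n) ^ l * (s : ZMod n) = (s : ZMod n) := by
    intro l
    have hcast : ((s * q ^ l : ℕ) : ZMod n) = (q : ZMod n) ^ l * (s : ZMod n) := by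
      push_cast; ring
    rw [hx, ← pow_mul, hωiff, hcast]
  -- the adjoin field
  have hfd : FiniteDimensional F F⟮x⟯ := IntermediateField.adjoin.finiteDimensional hint
  have hfinite : Finite F⟮x⟯ := Module.finite_of_finite F
  have hfin : Fintype F⟮x⟯ := Fintype.ofFinite _
  have hrank : Module.finrank F F⟮x⟯ = d := IntermediateField.adjoin.finrank hint
  have hcard : Fintype.card F⟮x⟯ = q ^ d := by rw [Module.card_eq_pow_finrank (K := F), hF, hrank]
  -- ℓ ≤ d
  have hxd : x ^ q ^ d = x := by
    have hg := FiniteField.pow_card (IntermediateField.AdjoinSimple.gen F x)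
    rw [hcard] at hg
    have := congrArg (algebraMap F⟮x⟯ (AlgebraicClosure F)) hg
    rwa [map_pow, IntermediateField.AdjoinSimple.algebraMap_gen] at this
  have hld : ℓ ≤ d := hl.2 ⟨minpoly.natDegree_pos hint, (hkey d).1 hxd⟩
  -- d ≤ ℓ
  have hxl : x ^ q ^ ℓ = x := (hkey ℓ).2 hl.1.2
  have hy : ∀ y : F⟮x⟯, (y : AlgebraicClosure F) ^ q ^ ℓ = (y : AlgebraicClosure F) := by
    intro y
    have hmem : (y : AlgebraicClosure F) ∈ Algebra.adjoin F {x} := by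
      rw [← IntermediateField.adjoin_simple_toSubalgebra_of_isAlgebraic hint.isAlgebraic]
      exact y.2
    rw [Algebra.adjoin_singleton_eq_range_aeval, AlgHom.mem_range] at hmem
    obtain ⟨B, hB⟩ := hmem
    rw [← hB, ← hF, ← aeval_qpow_pow, hF, hxl]
  set P : (AlgebraicClosure F)[X] := X ^ q ^ ℓ - X with hP
  have hP0 : P ≠ 0 := FiniteField.X_pow_card_pow_sub_X_ne_zero _ hl.1.1.ne' hq1
  have hPdeg : P.natDegree = q ^ ℓ := FiniteField.X_pow_card_pow_sub_X_natDegree_eq _ hl.1.1.ne' hq1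
  have hinj : Function.Injective (fun y : F⟮x⟯ => (⟨(y : AlgebraicClosure F), by
      rw [Multiset.mem_toFinset, mem_roots hP0]
      simp [hP, IsRoot, hy y]⟩ : {z // z ∈ P.roots.toFinset})) := by
    intro y₁ y₂ h
    exact Subtype.ext (by simpa using congrArg Subtype.val h)
  have hle : Fintype.card F⟮x⟯ ≤ P.roots.toFinset.card := by
    simpa using Fintype.card_le_of_injective _ hinj
  have : q ^ d ≤ q ^ ℓ := by
    rw [← hcard, ← hPdeg]
    exact hle.trans ((Multiset.toFinset_card_le _).trans (P.card_roots'))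
  exact le_antisymm ((Nat.pow_le_pow_iff_right hq1).1 this) hld

lemma sum_ell {q n : ℕ} (hn : 0 < n) [NeZero n] (hqn : Nat.Coprime q n)
    {m : ℕ} {s : Fin m → ℕ} {ℓ : Fin m → ℕ}
    (hS : ∀ z : ZMod n, ∃! i : Fin m, ∃ j : ℕ, z = (q : ZMod n) ^ j * (s i : ZMod n))
    (hl : ∀ i, IsLeast {l : ℕ | 0 < l ∧ (q : ZMod n) ^ l * (s i : ZMod n) = (s i : ZMod n)} (ℓ i)) :
    ∑ i, ℓ i = n := by
  classical
  have hqu : IsUnit (q : ZMod n) := (ZMod.isUnit_iff_coprime q n).2 hqn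
  set orb : Fin m → Finset (ZMod n) :=
    fun i => Finset.image (fun j : Fin (ℓ i) => (q : ZMod n) ^ (j : ℕ) * (s i : ZMod n))
      Finset.univ with horb
  have hper : ∀ i (j : ℕ), (q : ZMod n) ^ j * (s i : ZMod n) =
      (q : ZMod n) ^ (j % ℓ i) * (s i : ZMod n) := by
    intro i j
    have hstep : ∀ u r : ℕ, (q : ZMod n) ^ (r + ℓ i * u) * (s i : ZMod n)
        = (q : ZMod n) ^ r * (s i : ZMod n) := by
      intro u
      induction u with
      | zero => simp
      | succ u ih =>
        intro r
        have : r + ℓ i * (u + 1) = (r + ℓ i) + ℓ i * u := by ring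
        rw [this, ih (r + ℓ i), pow_add, mul_assoc, (hl i).1.2]
    conv_lhs => rw [← Nat.mod_add_div j (ℓ i)]
    exact hstep _ _
  have hmem : ∀ i (z : ZMod n), z ∈ orb i ↔ ∃ j : ℕ, z = (q : ZMod n) ^ j * (s i : ZMod n) := by
    intro i z
    simp only [horb, Finset.mem_image, Finset.mem_univ, true_and]
    constructor
    · rintro ⟨j, hj⟩; exact ⟨j, hj.symm⟩
    · rintro ⟨j, rfl⟩
      exact ⟨⟨j % ℓ i, Nat.mod_lt _ (hl i).1.1⟩, (hper i j).symm⟩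
  have hcard : ∀ i, (orb i).card = ℓ i := by
    intro i
    have key : ∀ a b : ℕ, a < b → b < ℓ i →
        (q : ZMod n) ^ a * (s i : ZMod n) = (q : ZMod n) ^ b * (s i : ZMod n) → False := by
      intro a b hab hb h
      have hb2 : (q : ZMod n) ^ b = (q : ZMod n) ^ a * (q : ZMod n) ^ (b - a) := by
        rw [← pow_add]; congr 1; omega
      rw [hb2, mul_assoc] at h
      have hcan := (hqu.pow a).mul_left_cancel h
      have : ℓ i ≤ b - a := (hl i).2 ⟨by omega, hcan.symm⟩
      omega
    rw [horb, Finset.card_image_of_injective _ ?_, Finset.card_univ, Fintype.card_fin]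
    intro a b hab
    simp only at hab
    rcases lt_trichotomy (a : ℕ) (b : ℕ) with h | h | h
    · exact absurd hab (fun hh => key a b h b.2 hh)
    · exact Fin.ext h
    · exact absurd hab.symm (fun hh => key b a h a.2 hh)
  have hdisj : ∀ i j : Fin m, i ≠ j → Disjoint (orb i) (orb j) := by
    intro i j hij
    rw [Finset.disjoint_left]
    intro z hzi hzj
    rw [hmem] at hzi hzj
    obtain ⟨iu, hiu, hu⟩ := hS z
    exact hij ((hu i hzi).trans (hu j hzj).symm)
  have hunion : Finset.univ.biUnion orb = Finset.univ := by
    apply Finset.eq_univ_of_forall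
    intro z
    rw [Finset.mem_biUnion]
    obtain ⟨i, hi, -⟩ := hS z
    exact ⟨i, Finset.mem_univ _, (hmem i z).2 hi⟩
  have htot : ∑ i, (orb i).card = n := by
    rw [← Finset.card_biUnion (fun i _ j _ hij => hdisj i j hij), hunion, Finset.card_univ,
      ZMod.card]
  rw [← htot]
  exact Finset.sum_congr rfl fun i _ => (hcard i).symm

/-- Two elements of a commutative monoid are rotation-equivalent w.r.t. `x` iff they lie
in the same orbit under multiplication by `x` (stated symmetrically so that it is an
equivalence relation). For `Q = F[X]/(X^n-1)` and `x` the image of `X` (a unit),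
the classes are exactly the orbits `{α, Xα, …, X^{n-1}α}`, i.e. necklaces. -/
def rotSetoid {R : Type*} [CommMonoid R] (x : R) : Setoid R where
  r a b := ∃ j k : ℕ, x ^ j * a = x ^ k * b
  iseqv := by
    refine ⟨fun a => ⟨0, 0, rfl⟩, ?_, ?_⟩
    · rintro a b ⟨j, k, h⟩
      exact ⟨k, j, h.symm⟩
    · rintro a b c ⟨j, k, h1⟩ ⟨j', k', h2⟩
      refine ⟨j' + j, k + k', ?_⟩
      rw [pow_add, mul_assoc, h1, ← mul_assoc, ← pow_add, add_comm j' k, pow_add,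
        mul_assoc, h2, ← mul_assoc, ← pow_add]

/-- `Q = F[X]/(X^n - 1)`. -/
abbrev Qring (F : Type) [Field F] (n : ℕ) := AdjoinRoot ((X : F[X]) ^ n - 1)

/-- The image of `X` in `Q`. -/
noncomputable def Xbar (F : Type) [Field F] (n : ℕ) : Qring F n := AdjoinRoot.root _

/-- The image in `Q` of the minimal polynomial over `F` of an element `x` of the
algebraic closure of `F`; for `x = ω^{s_i}` this is the element `P_i` of `Q`. -/
noncomputable def Pbar (F : Type) [Field F] (n : ℕ) (x : AlgebraicClosure F) : Qring F n :=
  AdjoinRoot.mk _ (minpoly F x)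


noncomputable def evQ (F : Type) [Field F] (n : ℕ) (x : AlgebraicClosure F) (hx : x ^ n = 1) :
    Qring F n →+* AlgebraicClosure F :=
  AdjoinRoot.lift (algebraMap F _) x (by simp [hx])

lemma evQ_mk (F : Type) [Field F] (n : ℕ) (x : AlgebraicClosure F) (hx : x ^ n = 1) (A : F[X]) :
    evQ F n x hx (AdjoinRoot.mk _ A) = aeval x A := by
  rw [evQ, AdjoinRoot.lift_mk, aeval_def]

lemma evQ_Xbar (F : Type) [Field F] (n : ℕ) (x : AlgebraicClosure F) (hx : x ^ n = 1) :
    evQ F n x hx (Xbar F n) = x :=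
  AdjoinRoot.lift_root _

lemma Pbar_dvd_iff (F : Type) [Field F] (n : ℕ) (x : AlgebraicClosure F) (hx : x ^ n = 1)
    (α : Qring F n) : Pbar F n x ∣ α ↔ evQ F n x hx α = 0 := by
  obtain ⟨A, rfl⟩ := AdjoinRoot.mk_surjective α
  constructor
  · rintro ⟨β, hβ⟩
    obtain ⟨B, rfl⟩ := AdjoinRoot.mk_surjective β
    rw [hβ, Pbar, ← map_mul, evQ_mk, map_mul]
    rw [show (aeval x) (minpoly F x) = 0 from minpoly.aeval F x, zero_mul]
  · intro h
    rw [evQ_mk] at h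
    obtain ⟨C, hC⟩ := minpoly.dvd F x h
    exact ⟨AdjoinRoot.mk _ C, by rw [hC, Pbar, map_mul]⟩

/-- For `q` a prime power coprime to `n` and `I ⊆ {1,…,m}`, the number of necklaces
(orbits of `Q = F_q[X]/(X^n-1)` under multiplication by `X`) whose elements are divisible
by `P_i` exactly for `i ∉ I` equals `(gcd(n, gcd(s_i : i ∈ I)) / n) · ∏_{i ∈ I} (q^{ℓ_i} - 1)`.
Here `s i` are representatives of the cyclotomic cosets (orbits of `z ↦ q·z` on `ZMod n`)
and `ℓ i` is the least positive integer with `q^{ℓ i}·s_i ≡ s_i (mod n)`. -/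
theorem N_I_card
    (q n : ℕ) (hq : IsPrimePow q) (hn : 0 < n) [NeZero n] (hqn : Nat.Coprime q n)
    (F : Type) [Field F] [Fintype F] (hF : Fintype.card F = q)
    (ω : AlgebraicClosure F) (hω : IsPrimitiveRoot ω n)
    (m : ℕ) (s : Fin m → ℕ) (ℓ : Fin m → ℕ)
    (hS : ∀ z : ZMod n, ∃! i : Fin m, ∃ j : ℕ, z = (q : ZMod n) ^ j * (s i : ZMod n))
    (hl : ∀ i, IsLeast {l : ℕ | 0 < l ∧ (q : ZMod n) ^ l * (s i : ZMod n) = (s i : ZMod n)} (ℓ i))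
    (I : Finset (Fin m)) :
    (Nat.card {c : Quotient (rotSetoid (Xbar F n)) |
        ∃ α : Qring F n, Quotient.mk (rotSetoid (Xbar F n)) α = c ∧
          ∀ i, (Pbar F n (ω ^ (s i)) ∣ α ↔ i ∉ I)} : ℚ) =
      (Nat.gcd n (I.gcd s) : ℚ) / (n : ℚ) * ∏ i ∈ I, ((q : ℚ) ^ (ℓ i) - 1) := by
  classical
  have hq1 : 1 < q := hF ▸ Fintype.one_lt_card
  -- evaluation maps
  have hxn : ∀ i : Fin m, (ω ^ (s i)) ^ n = 1 := fun i => by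
    rw [← pow_mul, mul_comm, pow_mul, hω.pow_eq_one, one_pow]
  have hx0 : ∀ i : Fin m, (ω ^ (s i)) ≠ 0 := by
    intro i h
    have := hxn i
    rw [h, zero_pow hn.ne'] at this
    exact zero_ne_one this
  set ev : Fin m → (Qring F n →+* AlgebraicClosure F) :=
    fun i => evQ F n (ω ^ (s i)) (hxn i) with hev
  have hevmk : ∀ (i : Fin m) (A : F[X]), ev i (AdjoinRoot.mk _ A) = aeval (ω ^ (s i)) A :=
    fun i A => evQ_mk F n _ (hxn i) A
  have hevX : ∀ i : Fin m, ev i (Xbar F n) = ω ^ (s i) := fun i => evQ_Xbar F n _ (hxn i)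
  have hdvd : ∀ (i : Fin m) (α : Qring F n), (Pbar F n (ω ^ (s i)) ∣ α ↔ ev i α = 0) :=
    fun i α => Pbar_dvd_iff F n _ (hxn i) α
  -- finiteness of Q
  have hdeg : ((X : F[X]) ^ n - 1).natDegree = n := by
    simpa using natDegree_X_pow_sub_C (n := n) (r := (1 : F))
  have hf0 : ((X : F[X]) ^ n - 1) ≠ 0 := fun h => by simp [h] at hdeg; omega
  haveI hmodfin : Module.Finite F (Qring F n) := PowerBasis.finite (AdjoinRoot.powerBasis hf0)
  haveI hQfin : Finite (Qring F n) := Module.finite_iff_finite.mp hmodfin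
  have hQcard : Nat.card (Qring F n) = q ^ n := by
    haveI : Fintype (Qring F n) := Fintype.ofFinite _
    rw [Nat.card_eq_fintype_card, Module.card_eq_pow_finrank (K := F), hF,
      (AdjoinRoot.powerBasis hf0).finrank]
    rw [show (AdjoinRoot.powerBasis hf0).dim = n from hdeg]
  -- injectivity of the combined evaluation
  have hinj0 : ∀ α : Qring F n, (∀ i, ev i α = 0) → α = 0 := by
    intro α hα
    obtain ⟨A, rfl⟩ := AdjoinRoot.mk_surjective α
    refine mk_eq_zero_of_aeval (s := s) hn hF hω (fun z => ?_) A (fun i => ?_)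
    · obtain ⟨i, hi, -⟩ := hS z; exact ⟨i, hi⟩
    · have h := hα i; rwa [hevmk] at h
  have hinjsub : ∀ α β : Qring F n, (∀ i, ev i α = ev i β) → α = β := by
    intro α β h
    have h2 : ∀ i, ev i (α - β) = 0 := fun i => by rw [map_sub, h i, sub_self]
    exact sub_eq_zero.mp (hinj0 _ h2)
  -- the subfields
  have hint : ∀ i : Fin m, IsIntegral F (ω ^ (s i)) :=
    fun i => (Algebra.IsAlgebraic.isAlgebraic _).isIntegral
  haveI hKfd : ∀ i : Fin m, FiniteDimensional F F⟮ω ^ (s i)⟯ :=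
    fun i => IntermediateField.adjoin.finiteDimensional (hint i)
  haveI hKfin : ∀ i : Fin m, Finite F⟮ω ^ (s i)⟯ := fun i => Module.finite_of_finite F
  have hKcard : ∀ i : Fin m, Nat.card F⟮ω ^ (s i)⟯ = q ^ (ℓ i) := by
    intro i
    haveI : Fintype F⟮ω ^ (s i)⟯ := Fintype.ofFinite _
    rw [Nat.card_eq_fintype_card, Module.card_eq_pow_finrank (K := F), hF,
      IntermediateField.adjoin.finrank (hint i),
      minpoly_natDegree_eq hn hF hω (s i) (ℓ i) (hl i)]
  have hmemK : ∀ (i : Fin m) (α : Qring F n), ev i α ∈ F⟮ω ^ (s i)⟯ := by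
    intro i α
    obtain ⟨A, rfl⟩ := AdjoinRoot.mk_surjective α
    rw [hevmk]
    have hmem : aeval (ω ^ (s i)) A ∈ Algebra.adjoin F {ω ^ (s i)} := by
      rw [Algebra.adjoin_singleton_eq_range_aeval]
      exact ⟨A, rfl⟩
    rw [← IntermediateField.adjoin_simple_toSubalgebra_of_isAlgebraic (hint i).isAlgebraic] at hmem
    exact hmem
  -- the bijection
  set Φ : Qring F n → (∀ i : Fin m, F⟮ω ^ (s i)⟯) := fun α i => ⟨ev i α, hmemK i α⟩ with hΦ
  have hΦinj : Function.Injective Φ := by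
    intro α β h
    exact hinjsub α β fun i => congrArg Subtype.val (congrFun h i)
  have hΦbij : Function.Bijective Φ := by
    haveI : Fintype (Qring F n) := Fintype.ofFinite _
    haveI : ∀ i : Fin m, Fintype F⟮ω ^ (s i)⟯ := fun i => Fintype.ofFinite _
    rw [Fintype.bijective_iff_injective_and_card]
    refine ⟨hΦinj, ?_⟩
    have h1 : Nat.card (∀ i : Fin m, F⟮ω ^ (s i)⟯) = q ^ n := by
      rw [Nat.card_pi, Finset.prod_congr rfl (fun i _ => hKcard i),
        Finset.prod_pow_eq_pow_sum, sum_ell hn hqn hS hl]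
    rw [← Nat.card_eq_fintype_card, ← Nat.card_eq_fintype_card, hQcard, h1]
  -- the set N of admissible elements
  set N : Set (Qring F n) := {α | ∀ i, (ev i α = 0 ↔ i ∉ I)} with hN
  have hNcard : Nat.card N = ∏ i ∈ I, (q ^ (ℓ i) - 1) := by
    have e1 : N ≃ {v : ∀ i : Fin m, F⟮ω ^ (s i)⟯ // ∀ i, (v i = 0 ↔ i ∉ I)} := by
      refine (Equiv.ofBijective Φ hΦbij).subtypeEquiv (fun α => ?_)
      refine forall_congr' fun i => ?_
      have : (Equiv.ofBijective Φ hΦbij) α i = 0 ↔ ev i α = 0 := by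
        rw [Subtype.ext_iff]
        rfl
      rw [this]
    have e2 := e1.trans (Equiv.subtypePiEquivPi
      (p := fun (i : Fin m) (y : F⟮ω ^ (s i)⟯) => (y = 0 ↔ i ∉ I)))
    rw [Nat.card_congr e2, Nat.card_pi]
    have hci : ∀ i : Fin m, Nat.card {y : F⟮ω ^ (s i)⟯ // y = 0 ↔ i ∉ I}
        = if i ∈ I then q ^ (ℓ i) - 1 else 1 := by
      intro i
      haveI : Fintype F⟮ω ^ (s i)⟯ := Fintype.ofFinite _
      by_cases hi : i ∈ I
      · rw [if_pos hi]
        have e3 : {y : F⟮ω ^ (s i)⟯ // y = 0 ↔ i ∉ I} ≃ {y : F⟮ω ^ (s i)⟯ // ¬ (y = 0)} :=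
          Equiv.subtypeEquivRight (fun y => by simp [hi])
        rw [Nat.card_congr e3, Nat.card_eq_fintype_card, Fintype.card_subtype_compl,
          Fintype.card_subtype_eq, ← hKcard i, Nat.card_eq_fintype_card]
      · rw [if_neg hi]
        have e3 : {y : F⟮ω ^ (s i)⟯ // y = 0 ↔ i ∉ I} ≃ {y : F⟮ω ^ (s i)⟯ // y = 0} :=
          Equiv.subtypeEquivRight (fun y => by simp [hi])
        rw [Nat.card_congr e3, Nat.card_eq_fintype_card, Fintype.card_subtype_eq]
    rw [Finset.prod_congr rfl (fun i _ => hci i), Finset.prod_ite_mem, Finset.univ_inter]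
  -- Xbar is a unit of order dividing n
  have hXn : (Xbar F n) ^ n = 1 := by
    have h0 : AdjoinRoot.mk ((X : F[X]) ^ n - 1) ((X : F[X]) ^ n - 1) = 0 := AdjoinRoot.mk_self
    rw [map_sub, map_pow, map_one, sub_eq_zero, AdjoinRoot.mk_X] at h0
    exact h0
  have hXunit : IsUnit (Xbar F n) := by
    refine IsUnit.of_mul_eq_one ((Xbar F n) ^ (n - 1)) ?_
    calc Xbar F n * (Xbar F n) ^ (n - 1) = (Xbar F n) ^ (1 + (n - 1)) := by rw [pow_add, pow_one]
    _ = 1 := by rw [show 1 + (n - 1) = n by omega, hXn]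
  -- the rotation criterion
  set g := Nat.gcd n (I.gcd s) with hg
  set r := n / g with hr
  have hg0 : 0 < g := Nat.gcd_pos_of_pos_left _ hn
  have hgdvd : g ∣ n := Nat.gcd_dvd_left _ _
  have hr0 : 0 < r := Nat.div_pos (Nat.le_of_dvd hn hgdvd) hg0
  have hgr : g * r = n := Nat.mul_div_cancel' hgdvd
  have hnsr : ∀ i ∈ I, n ∣ s i * r := by
    intro i hiI
    have h2 : n ∣ (I.gcd s) * r := (nat_dvd_mul_iff hn _ r).2 (dvd_refl r)
    exact h2.trans (Nat.mul_dvd_mul_right (Finset.gcd_dvd hiI) r)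
  have hcrit : ∀ α ∈ N, ∀ k : ℕ, ((Xbar F n) ^ k * α = α ↔ r ∣ k) := by
    intro α hα k
    constructor
    · intro hkα
      have hi : ∀ i ∈ I, n ∣ s i * k := by
        intro i hiI
        have h1 : ev i ((Xbar F n) ^ k * α) = ev i α := by rw [hkα]
        rw [map_mul, map_pow, hevX] at h1
        have hα0 : ev i α ≠ 0 := fun h0 => ((hα i).1 h0) hiI
        have h2 : (ω ^ (s i)) ^ k = 1 :=
          mul_right_cancel₀ hα0 (h1.trans (one_mul _).symm)
        rw [← pow_mul] at h2
        exact (hω.pow_eq_one_iff_dvd _).1 h2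
      have h3 : n ∣ (I.gcd s) * k := by
        have h4 : (I.gcd fun i => s i * k) = (I.gcd s) * k := by
          simpa using Finset.gcd_mul_right (s := I) (f := s) (a := k)
        rw [← h4]
        exact Finset.dvd_gcd (fun i hiI => hi i hiI)
      exact (nat_dvd_mul_iff hn _ k).1 h3
    · rintro ⟨c, rfl⟩
      refine hinjsub _ _ fun i => ?_
      rw [map_mul, map_pow, hevX]
      by_cases hiI : i ∈ I
      · have h1 : n ∣ s i * (r * c) := by
          rw [show s i * (r * c) = (s i * r) * c by ring]
          exact (hnsr i hiI).mul_right c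
        have h2 : (ω ^ (s i)) ^ (r * c) = 1 := by
          rw [← pow_mul]
          exact (hω.pow_eq_one_iff_dvd _).2 h1
        rw [h2, one_mul]
      · rw [show ev i α = 0 from (hα i).2 hiI, mul_zero]
  -- membership of rotations in N
  have hrotN : ∀ α ∈ N, ∀ t : ℕ, (Xbar F n) ^ t * α ∈ N := by
    intro α hα t i
    rw [map_mul, map_pow, hevX, mul_eq_zero]
    have : ¬ ((ω ^ (s i)) ^ t = 0) := pow_ne_zero _ (hx0 i)
    rw [or_iff_right this]
    exact hα i
  -- the fibration over the necklace classes
  set Cs : Set (Quotient (rotSetoid (Xbar F n))) :=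
    {c : Quotient (rotSetoid (Xbar F n)) |
        ∃ α : Qring F n, Quotient.mk (rotSetoid (Xbar F n)) α = c ∧
          ∀ i, (Pbar F n (ω ^ (s i)) ∣ α ↔ i ∉ I)} with hCs
  have hNiff : ∀ α : Qring F n, α ∈ N ↔ ∀ i, (Pbar F n (ω ^ (s i)) ∣ α ↔ i ∉ I) := by
    intro α
    exact forall_congr' fun i => by rw [hdvd i α]
  set f : N → Cs := fun α => ⟨Quotient.mk (rotSetoid (Xbar F n)) α.1,
    ⟨α.1, rfl, (hNiff α.1).1 α.2⟩⟩ with hf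
  have hfsurj : Function.Surjective f := by
    rintro ⟨c, α₀, rfl, hcond⟩
    exact ⟨⟨α₀, (hNiff α₀).2 hcond⟩, rfl⟩
  have hfib : ∀ c : Cs, Nat.card {a : N // f a = c} = r := by
    intro c
    obtain ⟨α₀, hq0, hcond⟩ := c.2
    have hα₀N : α₀ ∈ N := (hNiff α₀).2 hcond
    set e : Fin r → {a : N // f a = c} := fun t =>
      ⟨⟨(Xbar F n) ^ (t : ℕ) * α₀, hrotN α₀ hα₀N t⟩, by
        refine Subtype.ext ?_
        show Quotient.mk (rotSetoid (Xbar F n)) ((Xbar F n) ^ (t : ℕ) * α₀) = c.1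
        rw [← hq0]
        exact Quotient.sound ⟨0, (t : ℕ), by rw [pow_zero, one_mul]⟩⟩ with he
    have hebij : Function.Bijective e := by
      constructor
      · intro t₁ t₂ ht
        have h1 : (Xbar F n) ^ (t₁ : ℕ) * α₀ = (Xbar F n) ^ (t₂ : ℕ) * α₀ := by
          exact congrArg (fun z : {a : N // f a = c} => (z.1.1 : Qring F n)) ht
        have key : ∀ a b : ℕ, a < b → b < r →
            (Xbar F n) ^ a * α₀ = (Xbar F n) ^ b * α₀ → False := by
          intro a b hab hbr hh
          have hb2 : (Xbar F n) ^ b = (Xbar F n) ^ a * (Xbar F n) ^ (b - a) := by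
            rw [← pow_add]; congr 1; omega
          rw [hb2, mul_assoc] at hh
          have hcan := (hXunit.pow a).mul_left_cancel hh.symm
          have := (hcrit α₀ hα₀N (b - a)).1 hcan
          have := Nat.le_of_dvd (by omega) this
          omega
        rcases lt_trichotomy (t₁ : ℕ) (t₂ : ℕ) with h | h | h
        · exact absurd h1 (fun hh => key _ _ h t₂.2 hh)
        · exact Fin.ext h
        · exact absurd h1.symm (fun hh => key _ _ h t₁.2 hh)
      · rintro ⟨⟨β, hβN⟩, hfβ⟩
        have hqβ : Quotient.mk (rotSetoid (Xbar F n)) β = c.1 := congrArg Subtype.val hfβ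
        have hrel := Quotient.exact (hqβ.trans hq0.symm)
        obtain ⟨j, k, hjk⟩ := hrel
        set t := (n - 1) * j + k with ht
        have hβ : β = (Xbar F n) ^ t * α₀ := by
          have h1 : (Xbar F n) ^ ((n - 1) * j) * ((Xbar F n) ^ j * β) = β := by
            rw [← mul_assoc, ← pow_add, show (n - 1) * j + j = n * j by
              have := hn; nlinarith [Nat.sub_add_cancel hn]]
            rw [pow_mul, hXn, one_pow, one_mul]
          rw [← h1, hjk, ← mul_assoc, ← pow_add]
        have hmod : (Xbar F n) ^ t * α₀ = (Xbar F n) ^ (t % r) * α₀ := by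
          conv_lhs => rw [← Nat.mod_add_div t r]
          rw [pow_add, mul_assoc]
          rw [(hcrit α₀ hα₀N (r * (t / r))).2 ⟨t / r, rfl⟩]
        refine ⟨⟨t % r, Nat.mod_lt _ hr0⟩, ?_⟩
        refine Subtype.ext (Subtype.ext ?_)
        show (Xbar F n) ^ (t % r) * α₀ = β
        rw [hβ, hmod]
    have := Nat.card_congr (Equiv.ofBijective e hebij)
    rw [Nat.card_eq_fintype_card, Fintype.card_fin] at this
    exact this.symm
  have hNC : Nat.card N = Nat.card Cs * r := card_fibers f hfsurj r hfib
  -- final arithmetic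
  have hprodcast : ((∏ i ∈ I, (q ^ (ℓ i) - 1) : ℕ) : ℚ) = ∏ i ∈ I, ((q : ℚ) ^ (ℓ i) - 1) := by
    rw [Nat.cast_prod]
    refine Finset.prod_congr rfl fun i _ => ?_
    rw [Nat.cast_sub (Nat.one_le_pow _ _ (by omega))]
    push_cast
    ring
  have hkey : (Nat.card Cs : ℚ) * (r : ℚ) = ∏ i ∈ I, ((q : ℚ) ^ (ℓ i) - 1) := by
    rw [← hprodcast, ← hNcard, hNC]
    push_cast
    ring
  have hn0 : (n : ℚ) ≠ 0 := Nat.cast_ne_zero.2 hn.ne'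
  have hgrQ : (g : ℚ) * (r : ℚ) = (n : ℚ) := by exact_mod_cast congrArg Nat.cast hgr
  rw [← hkey, div_mul_eq_mul_div, eq_div_iff hn0, ← hgrQ]
  ring
end

section
/- Let q and n be coprime positive integers, and let I ⊆ {1,...,m}. Then |F_I| = (gcd(n, gcd(s_i : i ∈ I))/n) · ∏_{i ∈ I} (q^{ℓ_i} − 1), where for I = ∅ the inner gcd is 0 and the empty product is 1. -/
open Finset

/-- periodicity iterates -/
lemma FI_periodic_iter (c : ℕ → Prop) (P : ℕ) (hc : ∀ N, c (N + P) ↔ c N) :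
    ∀ k N, c (N + k * P) ↔ c N := by
  intro k
  induction k with
  | zero => simp
  | succ k ih =>
    intro N
    have : N + (k + 1) * P = (N + k * P) + P := by ring
    rw [this, hc, ih]

lemma FI_count_range_mul (c : ℕ → Prop) [DecidablePred c] (P k : ℕ)
    (hc : ∀ N, c (N + P) ↔ c N) :
    ((range (k * P)).filter c).card = k * ((range P).filter c).card := by
  induction k with
  | zero => simp
  | succ k ih =>
    have hsplit : range ((k + 1) * P) = range (k * P) ∪ (range P).map (addLeftEmbedding (k * P)) := by
      rw [add_mul, one_mul, Finset.range_add]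
    rw [hsplit, Finset.filter_union, Finset.card_union_of_disjoint, ih, Finset.filter_map,
      Finset.card_map]
    · have : (range P).filter (c ∘ (addLeftEmbedding (k * P))) = (range P).filter c := by
        apply Finset.filter_congr
        intro x _
        simp only [Function.comp, addLeftEmbedding_apply]
        have : k * P + x = x + k * P := by ring
        rw [this]
        simp [FI_periodic_iter c P hc k x]
      rw [this]; ring
    · apply Finset.disjoint_filter_filter
      rw [Finset.disjoint_left]
      intro x hx hx2
      simp only [Finset.mem_range] at hx
      simp only [Finset.mem_map, addLeftEmbedding_apply, Finset.mem_range] at hx2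
      omega

lemma FI_count_Ico (c : ℕ → Prop) [DecidablePred c] (Q : ℕ) :
    ((Finset.Ico 1 (Q + 1)).filter c).card = ((range Q).filter (fun r => c (r + 1))).card := by
  have h : Finset.Ico 1 (Q + 1) = (range Q).map ⟨(· + 1), fun a b h => by simpa using h⟩ := by
    ext x
    simp only [Finset.mem_Ico, Finset.mem_map, Finset.mem_range, Function.Embedding.coeFn_mk]
    constructor
    · rintro ⟨h1, h2⟩; exact ⟨x - 1, by omega, by show x - 1 + 1 = x; omega⟩
    · rintro ⟨a, ha, rfl⟩; show 1 ≤ a + 1 ∧ a + 1 < Q + 1; omega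
  rw [h, Finset.filter_map, Finset.card_map]
  rfl

/-- no solutions when gcd doesn't divide target -/
lemma FI_no_solution (d s' t : ℕ) (hg : ¬ Nat.gcd d s' ∣ t) (N : ℕ) :
    ¬ (s' * N ≡ t [MOD d]) := by
  intro h
  apply hg
  have h1 : s' * N ≡ t [MOD Nat.gcd d s'] := h.of_dvd (Nat.gcd_dvd_left d s')
  have h2 : s' * N ≡ 0 [MOD Nat.gcd d s'] :=
    (Nat.modEq_zero_iff_dvd).2 (Dvd.dvd.mul_right (Nat.gcd_dvd_right d s') N)
  exact (Nat.modEq_zero_iff_dvd).1 ((h2.symm.trans h1).symm)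

/-- transport of the congruence along mod-P shifts -/
lemma FI_transport' (d s' : ℕ) (hd : 0 < d) (a b : ℕ) (hab : a ≡ b [MOD d / Nat.gcd d s']) :
    s' * a ≡ s' * b [MOD d] := by
  set g := Nat.gcd d s' with hgdef
  have hgd : g ∣ d := Nat.gcd_dvd_left d s'
  have hgs : g ∣ s' := Nat.gcd_dvd_right d s'
  rw [Nat.modEq_iff_dvd] at hab ⊢
  obtain ⟨z, hz⟩ := hab
  have hd' : (d : ℤ) = (d / g : ℕ) * g := by
    rw [← Nat.cast_mul, Nat.div_mul_cancel hgd]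
  have hs' : (s' : ℤ) = (s' / g : ℕ) * g := by
    rw [← Nat.cast_mul, Nat.div_mul_cancel hgs]
  refine ⟨(s' / g : ℕ) * z, ?_⟩
  calc ((s' * b : ℕ) : ℤ) - ((s' * a : ℕ) : ℤ)
      = (s' : ℤ) * ((b : ℤ) - (a : ℤ)) := by push_cast; ring
    _ = (s' : ℤ) * ((d / g : ℕ) * z) := by rw [← hz]
    _ = ((s' / g : ℕ) * (g : ℤ)) * ((d / g : ℕ) * z) := by rw [← hs']
    _ = ((d / g : ℕ) * (g : ℤ)) * ((s' / g : ℕ) * z) := by ring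
    _ = (d : ℤ) * ((s' / g : ℕ) * z) := by rw [← hd']

lemma FI_exists_solution (d s' t : ℕ) (hd : 0 < d) (hg : Nat.gcd d s' ∣ t) :
    ∃ x : ℕ, s' * x ≡ t [MOD d] := by
  obtain ⟨w, hw⟩ := hg
  have hbez : (Nat.gcd d s' : ℤ) = d * Nat.gcdA d s' + s' * Nat.gcdB d s' :=
    Nat.gcd_eq_gcd_ab d s'
  set x : ℤ := Nat.gcdB d s' * w with hxdef
  have key : (d : ℤ) ∣ (t : ℤ) - (s' : ℤ) * x := by
    refine ⟨Nat.gcdA d s' * w, ?_⟩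
    have ht : (t : ℤ) = (Nat.gcd d s' : ℤ) * w := by rw [hw]; push_cast; ring
    rw [ht, hbez, hxdef]; ring
  have hdne : (d : ℤ) ≠ 0 := by exact_mod_cast hd.ne'
  refine ⟨(x % d).toNat, ?_⟩
  rw [Nat.modEq_iff_dvd]
  have hxnn : (0 : ℤ) ≤ x % d := Int.emod_nonneg x hdne
  have hcast : ((x % d).toNat : ℤ) = x % d := Int.toNat_of_nonneg hxnn
  push_cast
  rw [hcast]
  have h2 : (d : ℤ) ∣ (s' : ℤ) * x - (s' : ℤ) * (x % d) := by
    refine ⟨(s' : ℤ) * (x / d), ?_⟩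
    have := Int.mul_ediv_add_emod x d
    nlinarith [Int.mul_ediv_add_emod x (d : ℤ)]
  have h3 := dvd_add key h2
  have : (t : ℤ) - (s' : ℤ) * x + ((s' : ℤ) * x - (s' : ℤ) * (x % d))
      = (t : ℤ) - (s' : ℤ) * (x % d) := by ring
  rw [this] at h3
  exact h3

/-- cancellation: `s'·a ≡ s'·b (mod d)` implies `a ≡ b (mod d / gcd d s')`. -/
lemma FI_cancel (d s' : ℕ) (hd : 0 < d) (a b : ℕ) (hab : s' * a ≡ s' * b [MOD d]) :
    a ≡ b [MOD d / Nat.gcd d s'] := by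
  set g := Nat.gcd d s' with hgdef
  have hgd : g ∣ d := Nat.gcd_dvd_left d s'
  have hgs : g ∣ s' := Nat.gcd_dvd_right d s'
  have hg0 : 0 < g := Nat.gcd_pos_of_pos_left s' hd
  rw [Nat.modEq_iff_dvd] at hab ⊢
  obtain ⟨z, hz⟩ := hab
  -- s'*(b-a) = d*z, write s' = (s'/g)*g, d = (d/g)*g
  have hd' : (d : ℤ) = (d / g : ℕ) * (g : ℤ) := by
    rw [← Nat.cast_mul, Nat.div_mul_cancel hgd]
  have hs' : (s' : ℤ) = (s' / g : ℕ) * (g : ℤ) := by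
    rw [← Nat.cast_mul, Nat.div_mul_cancel hgs]
  have hgz : (g : ℤ) ≠ 0 := by exact_mod_cast hg0.ne'
  have key : ((d / g : ℕ) : ℤ) ∣ ((s' / g : ℕ) : ℤ) * ((b : ℤ) - (a : ℤ)) := by
    refine ⟨z, ?_⟩
    have h1 : ((s' / g : ℕ) : ℤ) * ((b : ℤ) - (a : ℤ)) * g = ((d / g : ℕ) : ℤ) * z * g := by
      calc ((s' / g : ℕ) : ℤ) * ((b : ℤ) - (a : ℤ)) * g
          = (s' : ℤ) * ((b : ℤ) - (a : ℤ)) := by rw [hs']; ring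
        _ = ((s' * b : ℕ) : ℤ) - ((s' * a : ℕ) : ℤ) := by push_cast; ring
        _ = (d : ℤ) * z := hz
        _ = ((d / g : ℕ) : ℤ) * z * g := by rw [hd']; ring
    exact mul_right_cancel₀ hgz h1
  have hcop : IsCoprime ((d / g : ℕ) : ℤ) ((s' / g : ℕ) : ℤ) := by
    rw [Nat.isCoprime_iff_coprime]
    exact Nat.coprime_div_gcd_div_gcd hg0
  exact hcop.dvd_of_dvd_mul_left key

lemma FI_count_solutions (d s' t : ℕ) (hd : 0 < d) (hg : Nat.gcd d s' ∣ t) :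
    ((range (d / Nat.gcd d s')).filter (fun r => s' * (r + 1) ≡ t [MOD d])).card = 1 := by
  set g := Nat.gcd d s' with hgdef
  set P := d / g with hPdef
  have hg0 : 0 < g := Nat.gcd_pos_of_pos_left s' hd
  have hP : 0 < P := Nat.div_pos (Nat.le_of_dvd hd (Nat.gcd_dvd_left d s')) hg0
  obtain ⟨xn, hxn⟩ := FI_exists_solution d s' t hd hg
  set r0 := (xn + P - 1) % P with hr0def
  have hr0lt : r0 < P := Nat.mod_lt _ hP
  have hr0sol : s' * (r0 + 1) ≡ t [MOD d] := by
    have h1 : r0 + 1 ≡ (xn + P - 1) + 1 [MOD P] := (Nat.mod_modEq _ P).add_right 1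
    have h2 : (xn + P - 1) + 1 = xn + P := by omega
    have h3 : xn + P ≡ xn [MOD P] := Nat.add_mod_right xn P
    have h4 : r0 + 1 ≡ xn [MOD P] := (h1.trans (by rw [h2])).trans h3
    exact (FI_transport' d s' hd _ _ h4).trans hxn
  rw [Finset.card_eq_one]
  refine ⟨r0, ?_⟩
  ext x
  simp only [Finset.mem_filter, Finset.mem_range, Finset.mem_singleton]
  constructor
  · rintro ⟨hx, hsol⟩
    have h5 : s' * (x + 1) ≡ s' * (r0 + 1) [MOD d] := hsol.trans hr0sol.symm
    have h6 : x + 1 ≡ r0 + 1 [MOD P] := FI_cancel d s' hd _ _ h5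
    have h7 : x ≡ r0 [MOD P] := h6.add_right_cancel' 1
    exact h7.eq_of_lt_of_lt hx hr0lt
  · rintro rfl
    exact ⟨hr0lt, hr0sol⟩

/-- The key single-coset count. -/
lemma FI_single (d s' Q t : ℕ) (hd : 0 < d) (hQ1 : 1 ≤ Q) (hdvd : d ∣ s' * (Q - 1)) :
    d * ((Finset.Ico 1 Q).filter (fun N => s' * N ≡ t [MOD d])).card
      = if Nat.gcd d s' ∣ t then (Q - 1) * Nat.gcd d s' else 0 := by
  set g := Nat.gcd d s' with hgdef
  set P := d / g with hPdef
  have hgd : g ∣ d := Nat.gcd_dvd_left d s'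
  have hgs : g ∣ s' := Nat.gcd_dvd_right d s'
  have hg0 : 0 < g := Nat.gcd_pos_of_pos_left s' hd
  have hP : 0 < P := Nat.div_pos (Nat.le_of_dvd hd hgd) hg0
  have hPg : P * g = d := Nat.div_mul_cancel hgd
  -- periodicity
  have hper : ∀ N, (s' * (N + P) ≡ t [MOD d]) ↔ (s' * N ≡ t [MOD d]) := by
    intro N
    have h1 : s' * (N + P) ≡ s' * N [MOD d] := by
      have : N + P ≡ N + 0 [MOD P] := Nat.ModEq.add_left N (Nat.modEq_zero_iff_dvd.2 dvd_rfl)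
      simpa using FI_transport' d s' hd (N + P) N (by rw [add_zero] at this; exact this)
    exact ⟨fun h => h1.symm.trans h, fun h => h1.trans h⟩
  -- P divides Q - 1
  have hPQ : P ∣ Q - 1 := by
    have h1 : P * g ∣ (s' / g) * g * (Q - 1) := by
      rw [hPg, Nat.div_mul_cancel hgs]; exact hdvd
    have h2 : P ∣ (s' / g) * (Q - 1) := by
      have : P * g ∣ ((s' / g) * (Q - 1)) * g := by
        have he : (s' / g) * g * (Q - 1) = ((s' / g) * (Q - 1)) * g := by ring
        rwa [he] at h1
      exact (Nat.mul_dvd_mul_iff_right hg0).1 this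
    have hcop : Nat.Coprime P (s' / g) := by
      have := Nat.coprime_div_gcd_div_gcd (m := d) (n := s') hg0
      exact this
    exact hcop.dvd_of_dvd_mul_left h2
  obtain ⟨k, hk⟩ := hPQ
  have hk' : Q - 1 = k * P := by rw [hk]; ring
  have hQ : Q = k * P + 1 := by omega
  have hper' : ∀ N, (s' * (N + P + 1) ≡ t [MOD d]) ↔ (s' * (N + 1) ≡ t [MOD d]) := by
    intro N
    have := hper (N + 1)
    rwa [show N + 1 + P = N + P + 1 by ring] at this
  have hcount : ((Finset.Ico 1 Q).filter (fun N => s' * N ≡ t [MOD d])).card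
      = k * ((range P).filter (fun r => s' * (r + 1) ≡ t [MOD d])).card := by
    rw [hQ, FI_count_Ico, FI_count_range_mul (fun r => s' * (r + 1) ≡ t [MOD d]) P k hper']
  by_cases ht : g ∣ t
  · rw [if_pos ht, hcount, FI_count_solutions d s' t hd ht]
    calc d * (k * 1) = (P * g) * k := by rw [hPg]; ring
      _ = (P * k) * g := by ring
      _ = (Q - 1) * g := by rw [hk]
  · rw [if_neg ht, hcount]
    have : ((range P).filter (fun r => s' * (r + 1) ≡ t [MOD d])) = ∅ := by
      rw [Finset.filter_eq_empty_iff]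
      intro r _
      exact FI_no_solution d s' t ht (r + 1)
    rw [this]
    simp

lemma FI_zmod_dvd_iff (n d : ℕ) [NeZero n] (hd : d ∣ n) (a b : ℕ) :
    (d : ZMod n) ∣ ((a : ZMod n) - (b : ZMod n)) ↔ a ≡ b [MOD d] := by
  constructor
  · rintro ⟨u, hu⟩
    have hu' : (a : ZMod n) = ((b + d * u.val : ℕ) : ZMod n) := by
      push_cast
      rw [ZMod.natCast_zmod_val]
      linear_combination hu
    rw [ZMod.natCast_eq_natCast_iff] at hu'
    have h1 : a ≡ b + d * u.val [MOD d] := hu'.of_dvd hd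
    have h2 : b + d * u.val ≡ b + 0 [MOD d] :=
      Nat.ModEq.add_left b (Nat.modEq_zero_iff_dvd.2 (Dvd.intro _ rfl))
    simpa using h1.trans h2
  · intro h
    rw [Nat.modEq_iff_dvd] at h
    obtain ⟨z, hz⟩ := h
    refine ⟨(-z : ℤ), ?_⟩
    have : ((a : ℤ) : ZMod n) - ((b : ℤ) : ZMod n) = ((d * (-z) : ℤ) : ZMod n) := by
      rw [← Int.cast_sub]
      congr 1
      linarith [hz]
    push_cast at this ⊢
    linear_combination this

lemma FI_zmod_dvd_val (n d : ℕ) [NeZero n] (hd : d ∣ n) (t : ZMod n) :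
    (d : ZMod n) ∣ t ↔ d ∣ t.val := by
  have := FI_zmod_dvd_iff n d hd t.val 0
  rw [ZMod.natCast_zmod_val] at this
  simpa [Nat.modEq_zero_iff_dvd] using this

lemma FI_digits_lt (q : ℕ) (hq : 0 < q) (L : ℕ) (e : ℕ → ℕ) (he : ∀ j < L, e j < q) :
    ∑ j ∈ range L, e j * q ^ j < q ^ L := by
  induction L with
  | zero => simpa using Nat.one_pos
  | succ L ih =>
    rw [Finset.sum_range_succ, pow_succ]
    have h1 : ∑ j ∈ range L, e j * q ^ j < q ^ L := ih (fun j hj => he j (by omega))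
    have h2 : e L < q := he L (by omega)
    have h3 : 0 < q ^ L := pow_pos hq L
    nlinarith

lemma FI_digit_eq (q : ℕ) (L : ℕ) (e : ℕ → ℕ) (he : ∀ j < L, e j < q) (k : ℕ) (hk : k < L) :
    (∑ j ∈ range L, e j * q ^ j) / q ^ k % q = e k := by
  induction L generalizing e k with
  | zero => omega
  | succ L ih =>
    have hq : 0 < q := lt_of_le_of_lt (Nat.zero_le _) (he 0 (by omega))
    have hsum : ∑ j ∈ range (L + 1), e j * q ^ j
        = e 0 + q * ∑ j ∈ range L, e (j + 1) * q ^ j := by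
      rw [Finset.sum_range_succ', Finset.mul_sum]
      simp only [pow_zero, mul_one, pow_succ]
      rw [add_comm]
      congr 1
      apply Finset.sum_congr rfl
      intro j _
      ring
    rw [hsum]
    cases k with
    | zero =>
      simp only [pow_zero, Nat.div_one]
      rw [Nat.add_mul_mod_self_left]
      exact Nat.mod_eq_of_lt (he 0 (by omega))
    | succ k =>
      have hdiv : (e 0 + q * ∑ j ∈ range L, e (j + 1) * q ^ j) / q ^ (k + 1)
          = (∑ j ∈ range L, e (j + 1) * q ^ j) / q ^ k := by
        rw [pow_succ', ← Nat.div_div_eq_div_mul]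
        congr 1
        rw [Nat.add_mul_div_left _ _ hq, Nat.div_eq_of_lt (he 0 (by omega))]
        omega
      rw [hdiv]
      exact ih (fun j => e (j + 1)) (fun j hj => he (j + 1) (by omega)) k (by omega)

lemma FI_digits_sum (q L N : ℕ) (hN : N < q ^ L) :
    ∑ j ∈ range L, (N / q ^ j % q) * q ^ j = N := by
  induction L generalizing N with
  | zero => simp at hN ⊢; omega
  | succ L ih =>
    rcases Nat.eq_zero_or_pos q with hq | hq
    · subst hq; simp at hN
    rw [Finset.sum_range_succ']
    have h1 : ∀ j, N / q ^ (j + 1) % q * q ^ (j + 1) = q * ((N / q) / q ^ j % q * q ^ j) := by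
      intro j
      rw [pow_succ', ← Nat.div_div_eq_div_mul]
      ring
    simp only [h1]
    rw [← Finset.mul_sum]
    have h2 : N / q < q ^ L := by
      rw [Nat.div_lt_iff_lt_mul hq]
      rw [pow_succ] at hN
      exact hN
    rw [ih _ h2]
    simp only [pow_zero, Nat.div_one, mul_one]
    rw [add_comm]
    exact Nat.mod_add_div N q

variable {m : ℕ}

/-- coordinate constraint sets -/
def FB (q : ℕ) (ℓ : Fin m → ℕ) (I : Finset (Fin m)) : Fin m → Finset ℕ :=
  fun i => if i ∈ I then Finset.Ico 1 (q ^ ℓ i) else {0}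

/-- the count of constrained tuples with prescribed weighted sum -/
def FC (q n : ℕ) [NeZero n] (s ℓ : Fin m → ℕ) (I : Finset (Fin m)) (t : ZMod n) : ℕ :=
  ((Fintype.piFinset (FB q ℓ I)).filter
    (fun g => (∑ i, ((s i * g i : ℕ) : ZMod n)) = t)).card

lemma FC_empty (q n : ℕ) [NeZero n] (s ℓ : Fin m → ℕ) (t : ZMod n) :
    FC q n s ℓ ∅ t = if t = 0 then 1 else 0 := by
  classical
  have h1 : Fintype.piFinset (FB q ℓ (∅ : Finset (Fin m))) = {fun _ => 0} := by
    ext g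
    simp [Fintype.mem_piFinset, FB, funext_iff]
  rw [FC, h1, Finset.filter_singleton]
  by_cases ht : t = 0 <;> simp [ht, eq_comm]

lemma FC_insert (q n : ℕ) [NeZero n] (s ℓ : Fin m → ℕ) (a : Fin m) (I : Finset (Fin m))
    (ha : a ∉ I) (t : ZMod n) :
    FC q n s ℓ (insert a I) t
      = ∑ N ∈ Finset.Ico 1 (q ^ ℓ a), FC q n s ℓ I (t - ((s a * N : ℕ) : ZMod n)) := by
  classical
  have hsum_update : ∀ (h : Fin m → ℕ) (N : ℕ), h a = 0 →
      ∑ i, ((s i * Function.update h a N i : ℕ) : ZMod n)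
        = ((s a * N : ℕ) : ZMod n) + ∑ i, ((s i * h i : ℕ) : ZMod n) := by
    intro h N ha0
    have hfun : ∀ j, ((s j * Function.update h a N j : ℕ) : ZMod n)
        = Function.update (fun j => ((s j * h j : ℕ) : ZMod n)) a ((s a * N : ℕ) : ZMod n) j := by
      intro j
      by_cases hj : j = a
      · subst hj; simp
      · simp [Function.update_apply, hj]
    rw [Finset.sum_congr rfl (fun j _ => hfun j),
      Finset.sum_update_of_mem (Finset.mem_univ a)]
    have h2 : ∑ i ∈ Finset.univ \ {a}, ((s i * h i : ℕ) : ZMod n)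
        = ∑ i, ((s i * h i : ℕ) : ZMod n) - ∑ i ∈ {a}, ((s i * h i : ℕ) : ZMod n) :=
      Finset.sum_sdiff_eq_sub (Finset.singleton_subset_iff.2 (Finset.mem_univ a))
    rw [h2]
    simp [ha0]
  have hset : (Fintype.piFinset (FB q ℓ (insert a I))).filter
        (fun g => (∑ i, ((s i * g i : ℕ) : ZMod n)) = t)
      = (Finset.Ico 1 (q ^ ℓ a)).biUnion (fun N =>
          ((Fintype.piFinset (FB q ℓ I)).filter
            (fun g => (∑ i, ((s i * g i : ℕ) : ZMod n)) = t - ((s a * N : ℕ) : ZMod n))).image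
            (fun h => Function.update h a N)) := by
    ext g
    simp only [Finset.mem_filter, Finset.mem_biUnion, Finset.mem_image, Fintype.mem_piFinset]
    constructor
    · rintro ⟨hmem, hsum⟩
      have hga : g a ∈ Finset.Ico 1 (q ^ ℓ a) := by
        have := hmem a
        simpa [FB] using this
      have hg : Function.update (Function.update g a 0) a (g a) = g := by
        funext j; by_cases hj : j = a <;> simp [Function.update_apply, hj]
      refine ⟨g a, hga, Function.update g a 0, ⟨?_, ?_⟩, hg⟩
      · intro i
        by_cases hi : i = a
        · subst hi; simp [FB, ha]
        · have := hmem i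
          simp only [Function.update_apply, if_neg hi]
          simpa [FB, Finset.mem_insert, hi] using this
      · have hkey := hsum_update (Function.update g a 0) (g a) (by simp)
        rw [hg] at hkey
        have : ((s a * g a : ℕ) : ZMod n) + ∑ i, ((s i * Function.update g a 0 i : ℕ) : ZMod n)
            = t := by rw [← hkey]; exact hsum
        exact eq_sub_of_add_eq' this
    · rintro ⟨N, hN, h, ⟨hmem, hsum⟩, rfl⟩
      have ha0 : h a = 0 := by
        have := hmem a
        simpa [FB, ha] using this
      constructor
      · intro i
        by_cases hi : i = a
        · subst hi; simpa [FB, Function.update_self] using hN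
        · have := hmem i
          simp only [Function.update_apply, if_neg hi]
          simpa [FB, Finset.mem_insert, hi] using this
      · rw [hsum_update h N ha0, hsum]
        simp
  rw [FC, hset, Finset.card_biUnion]
  · apply Finset.sum_congr rfl
    intro N _
    rw [Finset.card_image_of_injOn, FC]
    intro h1 hmem1 h2 hmem2 heq
    simp only [Finset.coe_filter, Set.mem_setOf_eq, Fintype.mem_piFinset] at hmem1 hmem2
    have h1a : h1 a = 0 := by simpa [FB, ha] using hmem1.1 a
    have h2a : h2 a = 0 := by simpa [FB, ha] using hmem2.1 a
    funext j
    by_cases hj : j = a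
    · subst hj; rw [h1a, h2a]
    · have := congrFun heq j
      simpa [Function.update_apply, hj] using this
  · intro x _ y _ hxy
    rw [Function.onFun, Finset.disjoint_left]
    rintro g hg1 hg2
    simp only [Finset.mem_image] at hg1 hg2
    obtain ⟨h1, _, rfl⟩ := hg1
    obtain ⟨h2, _, heq⟩ := hg2
    apply hxy
    have := congrFun heq a
    simpa using this.symm

open scoped Classical in
lemma FC_formula (q n : ℕ) (hn : 0 < n) [NeZero n] (s ℓ : Fin m → ℕ)
    (hq : 0 < q) (hsl : ∀ i, n ∣ s i * (q ^ ℓ i - 1))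
    (I : Finset (Fin m)) : ∀ t : ZMod n,
    n * FC q n s ℓ I t
      = if ((Nat.gcd n (I.gcd s) : ℕ) : ZMod n) ∣ t then
          Nat.gcd n (I.gcd s) * ∏ i ∈ I, (q ^ ℓ i - 1) else 0 := by
  classical
  induction I using Finset.induction_on with
  | empty =>
    intro t
    rw [FC_empty]
    simp only [Finset.gcd_empty, Nat.gcd_zero_right, ZMod.natCast_self, zero_dvd_iff,
      Finset.prod_empty, mul_one]
    by_cases ht : t = 0 <;> simp [ht]
  | @insert a I ha ih =>
    intro t
    set d := Nat.gcd n (I.gcd s) with hddef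
    have hd0 : 0 < d := Nat.gcd_pos_of_pos_left _ hn
    have hdn : d ∣ n := Nat.gcd_dvd_left _ _
    set g' := Nat.gcd d (s a) with hg'def
    have hg'n : g' ∣ n := (Nat.gcd_dvd_left d (s a)).trans hdn
    have hgcd_ins : Nat.gcd n ((insert a I).gcd s) = g' := by
      rw [Finset.gcd_insert]
      show Nat.gcd n (Nat.gcd (s a) (I.gcd s)) = g'
      rw [Nat.gcd_comm (s a) (I.gcd s), ← Nat.gcd_assoc]
    have hQ1 : 1 ≤ q ^ ℓ a := Nat.one_le_pow _ _ hq
    have hcond : ∀ N : ℕ, ((d : ZMod n) ∣ (t - ((s a * N : ℕ) : ZMod n)))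
        ↔ (s a * N ≡ t.val [MOD d]) := by
      intro N
      have := FI_zmod_dvd_iff n d hdn t.val (s a * N)
      rw [ZMod.natCast_zmod_val] at this
      rw [this]
      exact ⟨fun h => h.symm, fun h => h.symm⟩
    rw [FC_insert q n s ℓ a I ha t, Finset.mul_sum]
    calc ∑ N ∈ Finset.Ico 1 (q ^ ℓ a), n * FC q n s ℓ I (t - ((s a * N : ℕ) : ZMod n))
        = ∑ N ∈ Finset.Ico 1 (q ^ ℓ a),
            (if s a * N ≡ t.val [MOD d] then d * ∏ i ∈ I, (q ^ ℓ i - 1) else 0) := by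
          apply Finset.sum_congr rfl
          intro N _
          rw [ih]
          congr 1
          rw [eq_iff_iff]
          exact hcond N
      _ = (∏ i ∈ I, (q ^ ℓ i - 1)) *
            (d * ((Finset.Ico 1 (q ^ ℓ a)).filter (fun N => s a * N ≡ t.val [MOD d])).card) := by
          rw [← Finset.sum_filter, Finset.sum_const, smul_eq_mul]
          ring
      _ = (∏ i ∈ I, (q ^ ℓ i - 1)) *
            (if g' ∣ t.val then (q ^ ℓ a - 1) * g' else 0) := by
          rw [FI_single d (s a) (q ^ ℓ a) t.val hd0 hQ1 (hdn.trans (hsl a))]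
      _ = if ((Nat.gcd n ((insert a I).gcd s) : ℕ) : ZMod n) ∣ t then
            Nat.gcd n ((insert a I).gcd s) * ∏ i ∈ insert a I, (q ^ ℓ i - 1) else 0 := by
          rw [hgcd_ins, Finset.prod_insert ha]
          have : (↑g' ∣ t) = (g' ∣ t.val) := by
            rw [eq_iff_iff]; exact FI_zmod_dvd_val n g' hg'n t
          simp only [this]
          by_cases hg : g' ∣ t.val <;> simp [hg] <;> ring

/-- For coprime positive integers `q` and `n` and `I ⊆ {1,…,m}`, the number of functions
`f : ZMod n → {0,…,q-1}` with `∑ z, z·f(z) ≡ 0 (mod n)` and taking the value `q-1` on all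
of `S_i` exactly for `i ∉ I` equals `(gcd(n, gcd(s_i : i ∈ I)) / n) · ∏_{i ∈ I} (q^{ℓ_i} - 1)`.
Here `S_i = {q^j·s_i : j ∈ ℕ}` are the cyclotomic cosets (orbits of `z ↦ q·z` on `ZMod n`)
with representatives `s i`, and `ℓ i` is the least positive integer with
`q^{ℓ i}·s_i ≡ s_i (mod n)`. -/
theorem F_I_card
    (q n : ℕ) (hq : 0 < q) (hn : 0 < n) [NeZero n] (hqn : Nat.Coprime q n)
    (m : ℕ) (s : Fin m → ℕ) (ℓ : Fin m → ℕ)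
    (hS : ∀ z : ZMod n, ∃! i : Fin m, ∃ j : ℕ, z = (q : ZMod n) ^ j * (s i : ZMod n))
    (hl : ∀ i, IsLeast {l : ℕ | 0 < l ∧ (q : ZMod n) ^ l * (s i : ZMod n) = (s i : ZMod n)} (ℓ i))
    (I : Finset (Fin m)) :
    (Nat.card {f : ZMod n → Fin q //
        (∑ z : ZMod n, z * ((f z : ℕ) : ZMod n) = 0) ∧
        ∀ i, ((∀ z : ZMod n,
            (∃ j : ℕ, z = (q : ZMod n) ^ j * (s i : ZMod n)) → (f z : ℕ) = q - 1)
          ↔ i ∉ I)} : ℚ) =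
      (Nat.gcd n (I.gcd s) : ℚ) / (n : ℚ) * ∏ i ∈ I, ((q : ℚ) ^ (ℓ i) - 1) := by
  classical
  -- basic facts
  have hℓpos : ∀ i, 0 < ℓ i := fun i => (hl i).1.1
  have hstep : ∀ i, (q : ZMod n) ^ (ℓ i) * (s i : ZMod n) = (s i : ZMod n) := fun i => (hl i).1.2
  -- iterated periodicity
  have hiter : ∀ i k, (q : ZMod n) ^ (ℓ i * k) * (s i : ZMod n) = (s i : ZMod n) := by
    intro i k
    induction k with
    | zero => simp
    | succ k ih =>
      have : ℓ i * (k + 1) = ℓ i * k + ℓ i := by ring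
      rw [this, pow_add, mul_assoc, hstep i, ih]
  have hperiod : ∀ i j, (q : ZMod n) ^ j * (s i : ZMod n)
      = (q : ZMod n) ^ (j % ℓ i) * (s i : ZMod n) := by
    intro i j
    conv_lhs => rw [← Nat.div_add_mod j (ℓ i)]
    have h5 : (q : ZMod n) ^ (ℓ i * (j / ℓ i) + j % ℓ i) * (s i : ZMod n)
        = (q : ZMod n) ^ (j % ℓ i) * ((q : ZMod n) ^ (ℓ i * (j / ℓ i)) * (s i : ZMod n)) := by
      rw [pow_add]; ring
    rw [h5, hiter i (j / ℓ i)]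
  have hinj : ∀ i, ∀ j1 < ℓ i, ∀ j2 < ℓ i,
      (q : ZMod n) ^ j1 * (s i : ZMod n) = (q : ZMod n) ^ j2 * (s i : ZMod n) → j1 = j2 := by
    have key : ∀ i, ∀ j1 j2, j1 < j2 → j2 < ℓ i →
        (q : ZMod n) ^ j1 * (s i : ZMod n) = (q : ZMod n) ^ j2 * (s i : ZMod n) → False := by
      intro i j1 j2 h12 h2 heq
      have h3 : (q : ZMod n) ^ (ℓ i - j2 + j1) * (s i : ZMod n) = (s i : ZMod n) := by
        calc (q : ZMod n) ^ (ℓ i - j2 + j1) * (s i : ZMod n)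
            = (q : ZMod n) ^ (ℓ i - j2) * ((q : ZMod n) ^ j1 * (s i : ZMod n)) := by
              rw [pow_add, mul_assoc]
          _ = (q : ZMod n) ^ (ℓ i - j2) * ((q : ZMod n) ^ j2 * (s i : ZMod n)) := by rw [heq]
          _ = (q : ZMod n) ^ (ℓ i - j2 + j2) * (s i : ZMod n) := by rw [pow_add, mul_assoc]
          _ = (q : ZMod n) ^ (ℓ i) * (s i : ZMod n) := by congr 2; omega
          _ = (s i : ZMod n) := hstep i
      have h4 := (hl i).2 ⟨by omega, h3⟩
      omega
    intro i j1 hj1 j2 hj2 heq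
    rcases lt_trichotomy j1 j2 with h | h | h
    · exact absurd (key i j1 j2 h hj2 heq) (fun h => h)
    · exact h
    · exact absurd (key i j2 j1 h hj1 heq.symm) (fun h => h)
  -- the partition function
  set π : ZMod n → Fin m := fun z => (hS z).choose with hπdef
  have hπ : ∀ z, ∃ j : ℕ, z = (q : ZMod n) ^ j * (s (π z) : ZMod n) := fun z =>
    (hS z).choose_spec.1
  have hmemT : ∀ i j, π ((q : ZMod n) ^ j * (s i : ZMod n)) = i := by
    intro i j
    exact ((hS _).choose_spec.2 i ⟨j, rfl⟩).symm
  -- cosets as finsets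
  set T : Fin m → Finset (ZMod n) :=
    fun i => (range (ℓ i)).image (fun j => (q : ZMod n) ^ j * (s i : ZMod n)) with hTdef
  have hTz : ∀ z, z ∈ T (π z) := by
    intro z
    obtain ⟨j, hj⟩ := hπ z
    rw [hTdef]
    simp only [Finset.mem_image, Finset.mem_range]
    exact ⟨j % ℓ (π z), Nat.mod_lt _ (hℓpos _), by rw [← hperiod, ← hj]⟩
  have hTmem : ∀ i z, z ∈ T i → π z = i := by
    intro i z hz
    simp only [hTdef, Finset.mem_image, Finset.mem_range] at hz
    obtain ⟨j, _, rfl⟩ := hz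
    exact hmemT i j
  have hTdisj : (↑(Finset.univ : Finset (Fin m)) : Set (Fin m)).PairwiseDisjoint T := by
    intro i1 _ i2 _ h12
    show Disjoint (T i1) (T i2)
    rw [Finset.disjoint_left]
    intro z hz1 hz2
    exact h12 ((hTmem i1 z hz1).symm.trans (hTmem i2 z hz2))
  have huniv : (Finset.univ : Finset (ZMod n)) = Finset.univ.biUnion T := by
    ext z
    simp only [Finset.mem_univ, Finset.mem_biUnion, true_iff]
    exact ⟨π z, trivial, hTz z⟩
  have hdecomp : ∀ F : ZMod n → ZMod n,
      ∑ z : ZMod n, F z = ∑ i : Fin m, ∑ j ∈ range (ℓ i), F ((q : ZMod n) ^ j * (s i : ZMod n)) := by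
    intro F
    calc ∑ z : ZMod n, F z = ∑ z ∈ Finset.univ.biUnion T, F z := by rw [← huniv]
      _ = ∑ i : Fin m, ∑ z ∈ T i, F z := Finset.sum_biUnion hTdisj
      _ = ∑ i : Fin m, ∑ j ∈ range (ℓ i), F ((q : ZMod n) ^ j * (s i : ZMod n)) := by
        apply Finset.sum_congr rfl
        intro i _
        rw [hTdef]
        apply Finset.sum_image
        intro x hx y hy hxy
        exact hinj i x (Finset.mem_range.1 hx) y (Finset.mem_range.1 hy) hxy
  -- sum of all z weighted by the constant q-1 vanishes
  have hsum_all : ∑ z : ZMod n, z * ((q - 1 : ℕ) : ZMod n) = 0 := by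
    have hS2 : (∑ z : ZMod n, z) + (∑ z : ZMod n, z) = 0 := by
      have h1 : ∑ z : ZMod n, z = ∑ z : ZMod n, -z :=
        Fintype.sum_equiv (Equiv.neg (ZMod n)) _ _ (fun z => by simp)
      nth_rewrite 2 [h1]
      rw [← Finset.sum_add_distrib]
      simp
    rw [← Finset.sum_mul]
    rcases Nat.even_or_odd q with hqe | hqo
    · -- q even, so n is odd and 2 is invertible
      have hn2 : ¬ (2 ∣ n) := by
        intro h2n
        obtain ⟨k, hk⟩ := hqe
        have h2q : 2 ∣ q := ⟨k, by omega⟩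
        have := Nat.dvd_gcd h2q h2n
        rw [hqn] at this
        omega
      have hu : IsUnit (2 : ZMod n) := by
        have : IsUnit ((2 : ℕ) : ZMod n) := (ZMod.isUnit_iff_coprime 2 n).2
          ((Nat.prime_two.coprime_iff_not_dvd).2 hn2)
        simpa using this
      have h20 : (∑ z : ZMod n, z) * 2 = 0 := by
        rw [mul_two]; exact hS2
      rw [(hu.mul_left_eq_zero).1 h20, zero_mul]
    · obtain ⟨k, hk⟩ := hqo
      have hq1 : q - 1 = 2 * k := by omega
      calc (∑ z : ZMod n, z) * ((q - 1 : ℕ) : ZMod n)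
          = ((∑ z : ZMod n, z) + ∑ z : ZMod n, z) * ((k : ℕ) : ZMod n) := by
            rw [hq1]; push_cast; ring
        _ = 0 := by rw [hS2, zero_mul]
  -- digit machinery
  set e : (ZMod n → Fin q) → ZMod n → ℕ := fun f z => q - 1 - (f z : ℕ) with hedef
  have helt : ∀ f z, e f z < q := by
    intro f z
    show q - 1 - (f z : ℕ) < q
    omega
  set eN : (ZMod n → Fin q) → Fin m → ℕ :=
    fun f i => ∑ j ∈ range (ℓ i), e f ((q : ZMod n) ^ j * (s i : ZMod n)) * q ^ j with heNdef
  have heNlt : ∀ f i, eN f i < q ^ ℓ i := fun f i =>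
    FI_digits_lt q hq _ _ (fun j _ => helt f _)
  have heNdig : ∀ f i, ∀ k, k < ℓ i → eN f i / q ^ k % q = e f ((q : ZMod n) ^ k * (s i : ZMod n)) :=
    fun f i k hk => FI_digit_eq q _ _ (fun j _ => helt f _) k hk
  set Φ : (ZMod n → Fin q) → Fin m → ℕ := fun f i => if i ∈ I then eN f i else 0 with hΦdef
  -- the all-(q-1) condition on a coset in terms of eN
  have Hqm1 : ∀ (f : ZMod n → Fin q) i,
      (∀ z : ZMod n, (∃ j : ℕ, z = (q : ZMod n) ^ j * (s i : ZMod n)) → (f z : ℕ) = q - 1)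
        ↔ eN f i = 0 := by
    intro f i
    constructor
    · intro h
      rw [heNdef]
      apply Finset.sum_eq_zero
      intro j _
      have hz := h ((q : ZMod n) ^ j * (s i : ZMod n)) ⟨j, rfl⟩
      show (q - 1 - (f ((q : ZMod n) ^ j * (s i : ZMod n)) : ℕ)) * q ^ j = 0
      rw [hz]
      simp
    · intro h
      rintro z ⟨j, rfl⟩
      have hz : (q : ZMod n) ^ j * (s i : ZMod n) = (q : ZMod n) ^ (j % ℓ i) * (s i : ZMod n) :=
        hperiod i j
      rw [heNdef, Finset.sum_eq_zero_iff] at h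
      have h2 := h (j % ℓ i) (Finset.mem_range.2 (Nat.mod_lt _ (hℓpos i)))
      have h3 : e f ((q : ZMod n) ^ (j % ℓ i) * (s i : ZMod n)) = 0 :=
        by
          have hqj : 0 < q ^ (j % ℓ i) := pow_pos hq _
          exact Nat.mul_eq_zero.1 h2 |>.resolve_right (by omega)
      rw [hz]
      have h4 : q - 1 - (f ((q : ZMod n) ^ (j % ℓ i) * (s i : ZMod n)) : ℕ) = 0 := h3
      have h5 := ((f ((q : ZMod n) ^ (j % ℓ i) * (s i : ZMod n)))).2
      omega
  -- the weighted sum in terms of Φ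
  have Hsum : ∀ (f : ZMod n → Fin q),
      (∀ i, i ∉ I → ∀ j, e f ((q : ZMod n) ^ j * (s i : ZMod n)) = 0) →
      ∑ z : ZMod n, z * ((f z : ℕ) : ZMod n)
        = - ∑ i : Fin m, ((s i * Φ f i : ℕ) : ZMod n) := by
    intro f hoff
    have hA : ∀ z : ZMod n, z * ((f z : ℕ) : ZMod n)
        = z * ((q - 1 : ℕ) : ZMod n) - z * ((e f z : ℕ) : ZMod n) := by
      intro z
      have h1 : (f z : ℕ) + e f z = q - 1 := by
        have h6 := (f z).2
        show (f z : ℕ) + (q - 1 - (f z : ℕ)) = q - 1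
        omega
      have h2 : ((q - 1 : ℕ) : ZMod n) = ((f z : ℕ) : ZMod n) + ((e f z : ℕ) : ZMod n) := by
        rw [← Nat.cast_add, h1]
      rw [h2]
      ring
    calc ∑ z : ZMod n, z * ((f z : ℕ) : ZMod n)
        = ∑ z : ZMod n, (z * ((q - 1 : ℕ) : ZMod n) - z * ((e f z : ℕ) : ZMod n)) :=
          Finset.sum_congr rfl (fun z _ => hA z)
      _ = (∑ z : ZMod n, z * ((q - 1 : ℕ) : ZMod n)) - ∑ z : ZMod n, z * ((e f z : ℕ) : ZMod n) :=
          Finset.sum_sub_distrib _ _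
      _ = - ∑ z : ZMod n, z * ((e f z : ℕ) : ZMod n) := by rw [hsum_all]; ring
      _ = - ∑ i : Fin m, ((s i * Φ f i : ℕ) : ZMod n) := by
          congr 1
          rw [hdecomp (fun z => z * ((e f z : ℕ) : ZMod n))]
          apply Finset.sum_congr rfl
          intro i _
          by_cases hi : i ∈ I
          · have hΦi : Φ f i = eN f i := by rw [hΦdef]; simp [hi]
            rw [hΦi, heNdef]
            push_cast
            rw [Finset.mul_sum]
            apply Finset.sum_congr rfl
            intro j _
            push_cast
            ring
          · have hΦi : Φ f i = 0 := by rw [hΦdef]; simp [hi]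
            rw [hΦi]
            simp only [Nat.mul_zero, Nat.cast_zero]
            apply Finset.sum_eq_zero
            intro j _
            rw [hoff i hi j]
            simp
  -- target finset
  set Sfin := (Fintype.piFinset (FB q ℓ I)).filter
      (fun g => (∑ i, ((s i * g i : ℕ) : ZMod n)) = (0 : ZMod n)) with hSfindef
  -- forward map lands in Sfin
  have hwell : ∀ f : ZMod n → Fin q,
      ((∑ z : ZMod n, z * ((f z : ℕ) : ZMod n) = 0) ∧
        ∀ i, ((∀ z : ZMod n, (∃ j : ℕ, z = (q : ZMod n) ^ j * (s i : ZMod n)) → (f z : ℕ) = q - 1)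
          ↔ i ∉ I)) → Φ f ∈ Sfin := by
    rintro f ⟨h1, h2⟩
    have hoff : ∀ i, i ∉ I → ∀ j, e f ((q : ZMod n) ^ j * (s i : ZMod n)) = 0 := by
      intro i hi j
      have h8 := ((h2 i).2 hi) _ ⟨j, rfl⟩
      show q - 1 - (f ((q : ZMod n) ^ j * (s i : ZMod n)) : ℕ) = 0
      omega
    rw [hSfindef, Finset.mem_filter]
    constructor
    · rw [Fintype.mem_piFinset]
      intro i
      by_cases hi : i ∈ I
      · have hΦi : Φ f i = eN f i := by simp [hΦdef, hi]
        rw [hΦi]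
        have hpos : eN f i ≠ 0 := by
          intro h0
          exact ((h2 i).1 ((Hqm1 f i).2 h0)) hi
        simp only [FB, if_pos hi, Finset.mem_Ico]
        exact ⟨by omega, heNlt f i⟩
      · have hΦi : Φ f i = 0 := by simp [hΦdef, hi]
        rw [hΦi]
        simp [FB, hi]
    · have h3 := Hsum f hoff
      rw [h1] at h3
      exact neg_eq_zero.1 h3.symm
  -- Φ is injective on admissible functions
  have hinjΦ : ∀ f f' : ZMod n → Fin q,
      (∀ i, ((∀ z : ZMod n, (∃ j : ℕ, z = (q : ZMod n) ^ j * (s i : ZMod n)) → (f z : ℕ) = q - 1)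
          ↔ i ∉ I)) →
      (∀ i, ((∀ z : ZMod n, (∃ j : ℕ, z = (q : ZMod n) ^ j * (s i : ZMod n)) → (f' z : ℕ) = q - 1)
          ↔ i ∉ I)) → Φ f = Φ f' → f = f' := by
    intro f f' h2 h2' heq
    funext z
    obtain ⟨j, hj⟩ := hπ z
    have hjlt : j % ℓ (π z) < ℓ (π z) := Nat.mod_lt _ (hℓpos _)
    have hz : z = (q : ZMod n) ^ (j % ℓ (π z)) * (s (π z) : ZMod n) := hj.trans (hperiod _ j)
    have hee : e f z = e f' z := by
      by_cases hi : π z ∈ I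
      · have hN : eN f (π z) = eN f' (π z) := by
          have := congrFun heq (π z)
          simpa [hΦdef, hi] using this
        have d1 := heNdig f (π z) (j % ℓ (π z)) hjlt
        have d2 := heNdig f' (π z) (j % ℓ (π z)) hjlt
        rw [hN] at d1
        rw [hz]
        exact d1.symm.trans d2
      · have z1 := (h2 _).2 hi z ⟨j, hj⟩
        have z2 := (h2' _).2 hi z ⟨j, hj⟩
        show q - 1 - (f z : ℕ) = q - 1 - (f' z : ℕ)
        rw [z1, z2]
    have hv1 : q - 1 - (f z : ℕ) = q - 1 - (f' z : ℕ) := hee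
    have hv2 := (f z).2
    have hv3 := (f' z).2
    exact Fin.ext (by omega)
  -- surjectivity
  have hsurj : ∀ g ∈ Sfin, ∃ f : ZMod n → Fin q,
      ((∑ z : ZMod n, z * ((f z : ℕ) : ZMod n) = 0) ∧
        ∀ i, ((∀ z : ZMod n, (∃ j : ℕ, z = (q : ZMod n) ^ j * (s i : ZMod n)) → (f z : ℕ) = q - 1)
          ↔ i ∉ I)) ∧ Φ f = g := by
    intro g hg
    rw [hSfindef, Finset.mem_filter, Fintype.mem_piFinset] at hg
    obtain ⟨hmem, hsum0⟩ := hg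
    have hg0 : ∀ i, i ∉ I → g i = 0 := by
      intro i hi
      have := hmem i
      simpa [FB, hi] using this
    have hgIco : ∀ i, i ∈ I → 1 ≤ g i ∧ g i < q ^ ℓ i := by
      intro i hi
      have := hmem i
      simpa [FB, hi, Finset.mem_Ico] using this
    set c : ZMod n → ℕ := fun z => (hπ z).choose with hcdef
    have hc : ∀ z, z = (q : ZMod n) ^ (c z) * (s (π z) : ZMod n) := fun z => (hπ z).choose_spec
    have hex : ∃ f : ZMod n → Fin q,
        ∀ z, (f z : ℕ) = q - 1 - (g (π z) / q ^ (c z % ℓ (π z)) % q) := by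
      refine ⟨fun z => Fin.mk (q - 1 - (g (π z) / q ^ (c z % ℓ (π z)) % q)) ?_, fun z => rfl⟩
      omega
    obtain ⟨f, hfdef⟩ := hex
    have hfe : ∀ z, e f z = g (π z) / q ^ (c z % ℓ (π z)) % q := by
      intro z
      have h9 : g (π z) / q ^ (c z % ℓ (π z)) % q < q := Nat.mod_lt _ hq
      show q - 1 - (f z : ℕ) = _
      rw [hfdef z]
      omega
    have hdigit : ∀ i, ∀ j < ℓ i, e f ((q : ZMod n) ^ j * (s i : ZMod n)) = g i / q ^ j % q := by
      intro i j hj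
      have hπz : π ((q : ZMod n) ^ j * (s i : ZMod n)) = i := hmemT i j
      have hcz := hc ((q : ZMod n) ^ j * (s i : ZMod n))
      rw [hπz] at hcz
      have hmodeq : c ((q : ZMod n) ^ j * (s i : ZMod n)) % ℓ i = j := by
        apply hinj i _ (Nat.mod_lt _ (hℓpos i)) j hj
        rw [← hperiod, ← hcz]
      rw [hfe, hπz, hmodeq]
    have hgoff : ∀ i, i ∉ I → ∀ j, e f ((q : ZMod n) ^ j * (s i : ZMod n)) = 0 := by
      intro i hi j
      have hπz : π ((q : ZMod n) ^ j * (s i : ZMod n)) = i := hmemT i j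
      rw [hfe, hπz, hg0 i hi]
      simp
    have heNg : ∀ i, i ∈ I → eN f i = g i := by
      intro i hi
      have : eN f i = ∑ j ∈ range (ℓ i), (g i / q ^ j % q) * q ^ j := by
        apply Finset.sum_congr rfl
        intro j hjr
        rw [hdigit i j (Finset.mem_range.1 hjr)]
      rw [this, FI_digits_sum q (ℓ i) (g i) (hgIco i hi).2]
    have heN0 : ∀ i, i ∉ I → eN f i = 0 := by
      intro i hi
      apply Finset.sum_eq_zero
      intro j _
      rw [hgoff i hi j]
      simp
    have hΦg : Φ f = g := by
      funext i
      by_cases hi : i ∈ I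
      · simpa [hΦdef, hi] using heNg i hi
      · simp [hΦdef, hi, (hg0 i hi).symm]
    refine ⟨f, ⟨?_, ?_⟩, hΦg⟩
    · have h3 := Hsum f hgoff
      rw [hΦg] at h3
      rw [h3, hsum0, neg_zero]
    · intro i
      rw [Hqm1 f i]
      constructor
      · intro h0 hi
        have := heNg i hi
        have := (hgIco i hi).1
        omega
      · intro hi
        exact heN0 i hi
  -- the cardinality identification
  have hcard : Nat.card {f : ZMod n → Fin q //
      (∑ z : ZMod n, z * ((f z : ℕ) : ZMod n) = 0) ∧
        ∀ i, ((∀ z : ZMod n, (∃ j : ℕ, z = (q : ZMod n) ^ j * (s i : ZMod n)) → (f z : ℕ) = q - 1)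
          ↔ i ∉ I)} = FC q n s ℓ I 0 := by
    have hFCeq : FC q n s ℓ I 0 = Sfin.card := rfl
    rw [hFCeq, ← Nat.card_eq_finsetCard]
    apply Nat.card_congr
    refine Equiv.ofBijective (fun fp => ⟨Φ fp.1, hwell fp.1 fp.2⟩) ⟨?_, ?_⟩
    · rintro ⟨f, hf⟩ ⟨f', hf'⟩ hff
      simp only [Subtype.mk.injEq] at hff ⊢
      exact hinjΦ f f' hf.2 hf'.2 hff
    · rintro ⟨g, hg⟩
      obtain ⟨f, hcondf, hΦf⟩ := hsurj g hg
      exact ⟨⟨f, hcondf⟩, Subtype.ext hΦf⟩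
  -- arithmetic conclusion
  have hsl : ∀ i, n ∣ s i * (q ^ ℓ i - 1) := by
    intro i
    have h1 : ((q ^ ℓ i * s i : ℕ) : ZMod n) = ((s i : ℕ) : ZMod n) := by
      push_cast
      exact hstep i
    rw [ZMod.natCast_eq_natCast_iff] at h1
    have h2 : s i ≤ q ^ ℓ i * s i := Nat.le_mul_of_pos_left _ (pow_pos hq _)
    have h3 : n ∣ q ^ ℓ i * s i - s i := (Nat.modEq_iff_dvd' h2).1 h1.symm
    have h4 : s i * (q ^ ℓ i - 1) = q ^ ℓ i * s i - s i := by
      obtain ⟨k, hk⟩ := Nat.exists_eq_add_of_le (Nat.one_le_pow (ℓ i) q hq)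
      rw [hk, add_mul, one_mul, mul_comm]
      rw [Nat.add_sub_cancel_left, Nat.add_sub_cancel_left]
    rw [h4]
    exact h3
  have hnum := FC_formula q n hn s ℓ hq hsl I 0
  rw [if_pos (dvd_zero _)] at hnum
  rw [hcard]
  have hPr : ((∏ i ∈ I, (q ^ ℓ i - 1) : ℕ) : ℚ) = ∏ i ∈ I, ((q : ℚ) ^ ℓ i - 1) := by
    rw [Nat.cast_prod]
    apply Finset.prod_congr rfl
    intro i _
    rw [Nat.cast_sub (Nat.one_le_pow (ℓ i) q hq)]
    push_cast
    ring
  have hnQ : ((n : ℚ)) * (FC q n s ℓ I 0 : ℚ)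
      = (Nat.gcd n (I.gcd s) : ℚ) * ((∏ i ∈ I, (q ^ ℓ i - 1) : ℕ) : ℚ) := by
    exact_mod_cast congrArg (fun x : ℕ => (x : ℚ)) hnum
  have hn0 : (n : ℚ) ≠ 0 := by
    exact_mod_cast hn.ne'
  rw [div_mul_eq_mul_div, eq_div_iff hn0, ← hPr]
  linarith [hnQ]
end

section
/- Let q be a prime power and n a positive integer coprime to q, let I ⊆ {1,...,m}, and let α ∈ Q = F_q[X]/(X^n−1) be an element such that P_i divides α if and only if i ∉ I. Then the orbit of α under multiplication by X has cardinality |{α, Xα, ..., X^{n−1}α}| = n / gcd(n, gcd(s_i : i ∈ I)), where for I = ∅ the inner gcd is 0 (so the orbit has size 1). -/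
open Polynomial

lemma aeval_frob {F : Type} [Field F] [Fintype F]
    (f : F[X]) (x : AlgebraicClosure F) :
    (aeval (x ^ Fintype.card F)) f = ((aeval x) f) ^ Fintype.card F := by
  set p := ringChar F with hp'
  haveI : CharP F p := ringChar.charP F
  obtain ⟨e, hp, hcard⟩ := FiniteField.card F p
  haveI := Fact.mk hp
  haveI : CharP (AlgebraicClosure F) p :=
    charP_of_injective_algebraMap (algebraMap F (AlgebraicClosure F)).injective p
  set φ : AlgebraicClosure F →+* AlgebraicClosure F := (frobenius (AlgebraicClosure F) p) ^ (e : ℕ)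
    with hφdef
  have hφ : ∀ y : AlgebraicClosure F, φ y = y ^ Fintype.card F := by
    intro y
    have : φ y = (frobenius (AlgebraicClosure F) p)^[(e : ℕ)] y := by
      rw [hφdef, RingHom.coe_pow]
    rw [this, iterate_frobenius, hcard]
  have hcomp : φ.comp (algebraMap F (AlgebraicClosure F)) = algebraMap F (AlgebraicClosure F) := by
    ext c
    rw [RingHom.comp_apply, hφ, ← map_pow, FiniteField.pow_card]
  calc (aeval (x ^ Fintype.card F)) f = eval₂ (algebraMap F (AlgebraicClosure F)) (φ x) f := by
        rw [hφ]; rfl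
    _ = eval₂ (φ.comp (algebraMap F (AlgebraicClosure F))) (φ x) f := by rw [hcomp]
    _ = φ (eval₂ (algebraMap F (AlgebraicClosure F)) x f) :=
        (hom_eval₂ f (algebraMap F (AlgebraicClosure F)) φ x).symm
    _ = ((aeval x) f) ^ Fintype.card F := hφ _

lemma aeval_frob_pow {F : Type} [Field F] [Fintype F]
    (f : F[X]) (x : AlgebraicClosure F) (j : ℕ) :
    (aeval (x ^ (Fintype.card F) ^ j)) f = ((aeval x) f) ^ (Fintype.card F) ^ j := by
  induction j with
  | zero => simp
  | succ j ih =>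
    rw [pow_succ, pow_mul, aeval_frob, ih, ← pow_mul, ← pow_succ]

lemma dvd_iff_roots {F : Type} [Field F] {n : ℕ} (hn : 0 < n) {ω : AlgebraicClosure F}
    (hω : IsPrimitiveRoot ω n) (f : F[X]) :
    (X ^ n - 1 : F[X]) ∣ f ↔ ∀ k : ℕ, (aeval (ω ^ k)) f = 0 := by
  classical
  haveI : NeZero n := ⟨hn.ne'⟩
  constructor
  · rintro ⟨c, rfl⟩ k
    have h1 : (aeval (ω ^ k)) ((X : F[X]) ^ n - 1) = 0 := by
      rw [map_sub, map_pow, aeval_X, map_one, ← pow_mul, mul_comm k n, pow_mul, hω.pow_eq_one,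
        one_pow, sub_self]
    rw [map_mul, h1, zero_mul]
  · intro h
    by_cases hf : f = 0
    · simp [hf]
    rw [← map_dvd_map' (algebraMap F (AlgebraicClosure F))]
    have hmap : (Polynomial.map (algebraMap F (AlgebraicClosure F)) (X ^ n - 1)
        : (AlgebraicClosure F)[X]) = X ^ n - 1 := by
      simp
    rw [hmap, X_pow_sub_one_eq_prod hn hω]
    have hf' : Polynomial.map (algebraMap F (AlgebraicClosure F)) f ≠ 0 := by
      simpa using hf
    have hle : (nthRootsFinset n (1 : AlgebraicClosure F)).val ≤
        (Polynomial.map (algebraMap F (AlgebraicClosure F)) f).roots := by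
      rw [Multiset.le_iff_count]
      intro ζ
      by_cases hζ : ζ ∈ nthRootsFinset n (1 : AlgebraicClosure F)
      · have hcount : Multiset.count ζ (nthRootsFinset n (1 : AlgebraicClosure F)).val = 1 :=
          Multiset.count_eq_one_of_mem (nthRootsFinset n (1 : AlgebraicClosure F)).nodup hζ
        rw [hcount, count_roots]
        rw [mem_nthRootsFinset hn] at hζ
        obtain ⟨k, _, rfl⟩ := hω.eq_pow_of_pow_eq_one hζ
        have : IsRoot (Polynomial.map (algebraMap F (AlgebraicClosure F)) f) (ω ^ k) := by
          rw [IsRoot, eval_map, ← aeval_def, h k]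
        exact (rootMultiplicity_pos hf').mpr this
      · rw [Multiset.count_eq_zero_of_notMem hζ]
        exact Nat.zero_le _
    have hd := (Multiset.prod_X_sub_C_dvd_iff_le_roots hf'
      (nthRootsFinset n (1 : AlgebraicClosure F)).val).mpr hle
    rwa [Finset.prod_eq_multiset_prod]

lemma mk_dvd_mk_iff {F : Type} [Field F] {g P a : F[X]} (hP : P ∣ g) :
    AdjoinRoot.mk g P ∣ AdjoinRoot.mk g a ↔ P ∣ a := by
  constructor
  · rintro ⟨c, hc⟩
    obtain ⟨c', rfl⟩ := AdjoinRoot.mk_surjective c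
    rw [← map_mul, AdjoinRoot.mk_eq_mk] at hc
    have h1 : P ∣ a - P * c' := hP.trans hc
    have h2 : P ∣ (a - P * c') + P * c' := dvd_add h1 (Dvd.intro c' rfl)
    simpa using h2
  · rintro ⟨c, rfl⟩
    exact ⟨AdjoinRoot.mk g c, by rw [← map_mul]⟩

lemma nat_dvd_aux {n g k : ℕ} (hn : 0 < n) : n ∣ g * k ↔ n / Nat.gcd n g ∣ k := by
  set d := Nat.gcd n g with hd
  have hd0 : 0 < d := Nat.gcd_pos_of_pos_left g hn
  have hdn : d ∣ n := Nat.gcd_dvd_left n g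
  have hdg : d ∣ g := Nat.gcd_dvd_right n g
  have h1 : n = d * (n / d) := (Nat.mul_div_cancel' hdn).symm
  have h2 : g = d * (g / d) := (Nat.mul_div_cancel' hdg).symm
  constructor
  · intro h
    have h3 : d * (n / d) ∣ d * ((g / d) * k) := by
      rw [← mul_assoc, ← h2, ← h1]; exact h
    have h4 : n / d ∣ (g / d) * k := (mul_dvd_mul_iff_left hd0.ne').mp h3
    have hcop : Nat.Coprime (n / d) (g / d) := Nat.coprime_div_gcd_div_gcd hd0
    exact hcop.dvd_of_dvd_mul_left h4
  · intro h
    have h3 : n ∣ d * k := by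
      rw [h1]; exact mul_dvd_mul_left d h
    exact h3.trans (mul_dvd_mul_right hdg k)

/-- For `q` a prime power coprime to `n`, `I ⊆ {1,…,m}`, and `α ∈ Q = F_q[X]/(X^n-1)`
divisible by `P_i` exactly for `i ∉ I`, the orbit `{α, Xα, X²α, …}` of `α` under
multiplication by `X` has cardinality `n / gcd(n, gcd(s_i : i ∈ I))` (for `I = ∅`
the inner gcd is `0`, so the orbit has size `1`). Here `s i` are representatives of
the cyclotomic cosets (orbits of `z ↦ q·z` on `ZMod n`). -/
theorem orbit_card
    (q n : ℕ) (hq : IsPrimePow q) (hn : 0 < n) [NeZero n] (hqn : Nat.Coprime q n)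
    (F : Type) [Field F] [Fintype F] (hF : Fintype.card F = q)
    (ω : AlgebraicClosure F) (hω : IsPrimitiveRoot ω n)
    (m : ℕ) (s : Fin m → ℕ)
    (hS : ∀ z : ZMod n, ∃! i : Fin m, ∃ j : ℕ, z = (q : ZMod n) ^ j * (s i : ZMod n))
    (I : Finset (Fin m)) (α : Qring F n)
    (hα : ∀ i, (Pbar F n (ω ^ (s i)) ∣ α ↔ i ∉ I)) :
    Nat.card {β : Qring F n | ∃ k : ℕ, β = (Xbar F n) ^ k * α} =
      n / Nat.gcd n (I.gcd s) := by
  classical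
  obtain ⟨a, rfl⟩ := AdjoinRoot.mk_surjective α
  have hq0 : q ≠ 0 := hq.pos.ne'
  -- the root-of-unity evaluations of X^n - 1 vanish at ω^(s i)
  have heval : ∀ i : Fin m, (aeval (ω ^ s i)) ((X : F[X]) ^ n - 1) = 0 := by
    intro i
    rw [map_sub, map_pow, aeval_X, map_one, ← pow_mul, mul_comm (s i) n, pow_mul, hω.pow_eq_one,
      one_pow, sub_self]
  have hmindvd : ∀ i : Fin m, minpoly F (ω ^ s i) ∣ ((X : F[X]) ^ n - 1) :=
    fun i => minpoly.dvd F _ (heval i)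
  -- translation of hα
  have h1 : ∀ i : Fin m, ((aeval (ω ^ s i)) a = 0 ↔ i ∉ I) := by
    intro i
    rw [← minpoly.dvd_iff, ← mk_dvd_mk_iff (hmindvd i)]
    exact hα i
  -- divisibility via evaluations at the coset representatives
  have h2 : ∀ f : F[X],
      (((X : F[X]) ^ n - 1) ∣ f ↔ ∀ i : Fin m, (aeval (ω ^ s i)) f = 0) := by
    intro f
    rw [dvd_iff_roots hn hω]
    constructor
    · intro h i; exact h (s i)
    · intro h k
      obtain ⟨i, ⟨j, hj⟩, -⟩ := hS (k : ZMod n)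
      have hmod : ω ^ k = (ω ^ s i) ^ q ^ j := by
        rw [← pow_mul]
        have hcast : ((k : ℕ) : ZMod n) = ((s i * q ^ j : ℕ) : ZMod n) := by
          push_cast
          rw [hj]; ring
        rw [ZMod.natCast_eq_natCast_iff] at hcast
        have hred : ∀ b : ℕ, ω ^ b = ω ^ (b % n) := by
          intro b
          conv_lhs => rw [← Nat.mod_add_div b n]
          rw [pow_add, pow_mul, hω.pow_eq_one, one_pow, mul_one]
        rw [hred k, hred (s i * q ^ j), hcast]
      rw [hmod, ← hF, aeval_frob_pow, h i, zero_pow]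
      exact pow_ne_zero j (by rw [hF]; exact hq0)
  -- the key divisibility criterion
  have h3 : ∀ k : ℕ,
      ((Xbar F n) ^ k * AdjoinRoot.mk _ a = AdjoinRoot.mk _ a ↔ ∀ i ∈ I, n ∣ s i * k) := by
    intro k
    have hXbar : Xbar F n = AdjoinRoot.mk ((X : F[X]) ^ n - 1) X := (AdjoinRoot.mk_X).symm
    rw [hXbar, ← map_pow, ← map_mul, AdjoinRoot.mk_eq_mk]
    have hfac : (X : F[X]) ^ k * a - a = ((X : F[X]) ^ k - 1) * a := by ring
    rw [hfac, h2]
    constructor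
    · intro h i hi
      have hthis := h i
      rw [map_mul] at hthis
      have hne : (aeval (ω ^ s i)) a ≠ 0 := by
        intro hz
        exact ((h1 i).mp hz) hi
      have hz : (aeval (ω ^ s i)) ((X : F[X]) ^ k - 1) = 0 :=
        (mul_eq_zero.mp hthis).resolve_right hne
      rw [map_sub, map_pow, aeval_X, map_one, sub_eq_zero] at hz
      rw [← hω.pow_eq_one_iff_dvd, pow_mul]
      exact hz
    · intro h i
      rw [map_mul]
      by_cases hi : i ∈ I
      · have hone : (ω ^ s i) ^ k = 1 := by
          rw [← pow_mul, hω.pow_eq_one_iff_dvd]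
          exact h i hi
        rw [map_sub, map_pow, aeval_X, map_one, hone, sub_self, zero_mul]
      · rw [(h1 i).mpr hi, mul_zero]
  -- rewrite via number theory
  set d := n / Nat.gcd n (I.gcd s) with hdd
  have hd0 : 0 < d :=
    Nat.div_pos (Nat.le_of_dvd hn (Nat.gcd_dvd_left n _)) (Nat.gcd_pos_of_pos_left _ hn)
  haveI : NeZero d := ⟨hd0.ne'⟩
  have key : ∀ k : ℕ, ((Xbar F n) ^ k * AdjoinRoot.mk _ a = AdjoinRoot.mk _ a ↔ d ∣ k) := by
    intro k
    rw [h3, hdd, ← nat_dvd_aux hn]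
    constructor
    · intro h
      have hg : n ∣ I.gcd (fun i => s i * k) := Finset.dvd_gcd h
      rwa [Finset.gcd_mul_right, normalize_eq] at hg
    · intro h i hi
      exact h.trans (mul_dvd_mul_right (Finset.gcd_dvd hi) k)
  -- X is a unit
  have hXn : (Xbar F n) ^ n = 1 := by
    have h0 : AdjoinRoot.mk ((X : F[X]) ^ n - 1) ((X : F[X]) ^ n - 1) = 0 := AdjoinRoot.mk_self
    rw [map_sub, map_pow, AdjoinRoot.mk_X, map_one, sub_eq_zero] at h0
    exact h0
  have hXu : IsUnit (Xbar F n) := by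
    apply IsUnit.of_mul_eq_one ((Xbar F n) ^ (n - 1))
    rw [← pow_succ', Nat.sub_add_cancel hn, hXn]
  -- the orbit as the range of an injective function on ZMod d
  set f : ZMod d → Qring F n := fun z => (Xbar F n) ^ z.val * AdjoinRoot.mk _ a with hfdef
  have hmodred : ∀ k : ℕ,
      (Xbar F n) ^ k * AdjoinRoot.mk _ a = (Xbar F n) ^ (k % d) * AdjoinRoot.mk _ a := by
    intro k
    conv_lhs => rw [← Nat.mod_add_div k d]
    rw [pow_add, mul_assoc, (key (d * (k / d))).mpr ⟨k / d, rfl⟩]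
  have hinj : Function.Injective f := by
    have main : ∀ z1 z2 : ZMod d, z1.val ≤ z2.val → f z1 = f z2 → z1 = z2 := by
      intro z1 z2 hle hf
      have h12 : (Xbar F n) ^ z1.val * ((Xbar F n) ^ (z2.val - z1.val) * AdjoinRoot.mk _ a)
          = (Xbar F n) ^ z1.val * AdjoinRoot.mk _ a := by
        rw [← mul_assoc, ← pow_add, ← Nat.add_sub_assoc hle, Nat.add_sub_cancel_left]
        exact hf.symm
      have hc := (hXu.pow z1.val).mul_left_cancel h12
      have hdvd := (key _).mp hc
      have hlt : z2.val - z1.val < d := lt_of_le_of_lt (Nat.sub_le _ _) (ZMod.val_lt z2)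
      have h0 : z2.val - z1.val = 0 := Nat.eq_zero_of_dvd_of_lt hdvd hlt
      exact ZMod.val_injective d (le_antisymm hle (Nat.sub_eq_zero_iff_le.mp h0))
    intro z1 z2 hf
    rcases le_total z1.val z2.val with h | h
    · exact main z1 z2 h hf
    · exact (main z2 z1 h hf.symm).symm
  have hset : {β : Qring F n | ∃ k : ℕ, β = (Xbar F n) ^ k * AdjoinRoot.mk _ a}
      = Set.range f := by
    ext β
    simp only [Set.mem_setOf_eq, Set.mem_range]
    constructor
    · rintro ⟨k, rfl⟩
      refine ⟨(k : ZMod d), ?_⟩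
      rw [hfdef]
      simp only []
      rw [ZMod.val_natCast, ← hmodred]
    · rintro ⟨z, rfl⟩
      exact ⟨z.val, rfl⟩
  rw [hset, Nat.card_range_of_injective hinj, Nat.card_zmod]
end
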